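/- arXiv:1004.5524 — 6 statements merged into one kernel-verified Lean document; each statement's English description precedes it below -/
import Mathlib

section
/- Let V be an open subset of a metrizable separable space Ω and let c be a capacity on a lattice L ⊆ C_b(Ω) (extended to all functions via the lower-semicontinuous extension). Then there exists an increasing sequence of non-negative continuous bounded functions h_n on Ω with pointwise limit the indicator function of V, such that c(1_V) = lim_{n→∞} c(h_n). -/
open Filter Topology

/-- For an open set `V` in a metrizable separable space and a capacity `c`
on a lattice `L ⊆ C_b(Ω)` (extended to all functions by the canonical l.s.c. extension),
there is an increasing sequence of non-negative continuous bounded functions `h n`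
converging pointwise to the indicator of `V` with `c (1_V) = lim c (h n)`. -/
theorem stmt0 {Ω : Type} [t : TopologicalSpace Ω] [TopologicalSpace.MetrizableSpace Ω]
    [TopologicalSpace.SeparableSpace Ω]
    (L : Set (Ω → ℝ))
    (hLc : ∀ f ∈ L, Continuous f ∧ ∃ M : ℝ, ∀ x, |f x| ≤ M)
    (hLconst : ∀ a : ℝ, (fun _ => a) ∈ L)
    (hLadd : ∀ f ∈ L, ∀ g ∈ L, f + g ∈ L)
    (hLsmul : ∀ (a : ℝ), ∀ f ∈ L, a • f ∈ L)
    (hLabs : ∀ f ∈ L, (fun x => |f x|) ∈ L)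
    (hLsup : ∀ f ∈ L, ∀ g ∈ L, (fun x => max (f x) (g x)) ∈ L)
    (hgen : t = TopologicalSpace.induced (fun x (f : L) => f.1 x) Pi.topologicalSpace)
    (c : (Ω → ℝ) → ℝ)
    (hc0 : ∀ f, 0 ≤ c f)
    (hsub : ∀ f g, c (f + g) ≤ c f + c g)
    (hhom : ∀ (a : ℝ) (f : Ω → ℝ), c (a • f) = |a| * c f)
    (hmono : ∀ f g : Ω → ℝ, (∀ x, |f x| ≤ |g x|) → c f ≤ c g)
    (hreg : ∀ f : ℕ → Ω → ℝ, (∀ n, f n ∈ L) → (∀ x, Antitone fun n => f n x) →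
        (∀ x, Tendsto (fun n => f n x) atTop (𝓝 0)) →
        Tendsto (fun n => c (f n)) atTop (𝓝 0))
    (hlsc : ∀ f : Ω → ℝ, LowerSemicontinuous f → (∀ x, 0 ≤ f x) → (∃ M : ℝ, ∀ x, f x ≤ M) →
        IsLUB {r : ℝ | ∃ φ ∈ L, (∀ x, 0 ≤ φ x ∧ φ x ≤ f x) ∧ c φ = r} (c f))
    (hext : ∀ g : Ω → ℝ, (∃ M : ℝ, ∀ x, |g x| ≤ M) →
        IsGLB {r : ℝ | ∃ f : Ω → ℝ, LowerSemicontinuous f ∧ (∀ x, |g x| ≤ f x) ∧ c f = r}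
          (c g))
    (V : Set Ω) (hV : IsOpen V) :
    ∃ h : ℕ → Ω → ℝ,
      (∀ n, Continuous (h n) ∧ (∀ x, 0 ≤ h n x) ∧ ∃ M : ℝ, ∀ x, |h n x| ≤ M) ∧
      (∀ x, Monotone fun n => h n x) ∧
      (∀ x, Tendsto (fun n => h n x) atTop (𝓝 (V.indicator (fun _ => (1:ℝ)) x))) ∧
      Tendsto (fun n => c (h n)) atTop (𝓝 (c (V.indicator fun _ => (1:ℝ)))) := by
 
  classical
  letI : MetricSpace Ω := TopologicalSpace.metrizableSpaceMetric Ω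
  set I : Ω → ℝ := V.indicator fun _ => 1 with hIdef
  have hIlsc : LowerSemicontinuous I := hV.lowerSemicontinuous_indicator zero_le_one
  have hInn : ∀ x, 0 ≤ I x := fun x => Set.indicator_nonneg (fun _ _ => zero_le_one) x
  have hIle : ∀ x, I x ≤ 1 := by
    intro x
    by_cases hx : x ∈ V
    · simp [I, Set.indicator_of_mem hx]
    · simp [I, Set.indicator_of_notMem hx]
  have hlub := hlsc I hIlsc hInn ⟨1, hIle⟩
  have hφex : ∀ n : ℕ, ∃ φ, φ ∈ L ∧ (∀ x, 0 ≤ φ x ∧ φ x ≤ I x) ∧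
      c I - 1/((n:ℝ)+1) < c φ := by
    intro n
    by_contra hcon
    push_neg at hcon
    have hub : c I ≤ c I - 1/((n:ℝ)+1) := by
      apply hlub.2
      rintro r ⟨φ, hφL, hφb, rfl⟩
      exact hcon φ hφL hφb
    have hpos : 0 < 1/((n:ℝ)+1) := by positivity
    linarith
  choose φ hφL hφb hφc using hφex
  -- running maxima of the φ's
  let ψ : ℕ → Ω → ℝ := fun n =>
    Nat.rec (motive := fun _ => Ω → ℝ) (φ 0)
      (fun k p => fun x => max (p x) (φ (k+1) x)) n
  have hψsucc : ∀ n x, ψ (n+1) x = max (ψ n x) (φ (n+1) x) := fun n x => rfl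
  have hψc : ∀ n, Continuous (ψ n) := by
    intro n
    induction n with
    | zero => exact (hLc _ (hφL 0)).1
    | succ k ih => exact ih.max (hLc _ (hφL (k+1))).1
  have hψnn : ∀ n x, 0 ≤ ψ n x := by
    intro n
    induction n with
    | zero => exact fun x => (hφb 0 x).1
    | succ k ih => exact fun x => le_trans (ih x) (le_max_left _ _)
  have hψle : ∀ n x, ψ n x ≤ I x := by
    intro n
    induction n with
    | zero => exact fun x => (hφb 0 x).2
    | succ k ih => exact fun x => max_le (ih x) (hφb (k+1) x).2
  have hφψ : ∀ n x, φ n x ≤ ψ n x := by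
    intro n
    induction n with
    | zero => exact fun x => le_rfl
    | succ k _ => exact fun x => le_max_right _ _
  -- distance-type function
  let d : Ω → ℝ :=
    if hne : (Vᶜ : Set Ω).Nonempty then fun x => Metric.infDist x Vᶜ else fun _ => 1
  have hdc : Continuous d := by
    by_cases hne : (Vᶜ : Set Ω).Nonempty
    · simpa [d, hne] using Metric.continuous_infDist_pt (Vᶜ : Set Ω)
    · simp only [d, hne]
      exact continuous_const
  have hd0 : ∀ x, x ∉ V → d x = 0 := by
    intro x hx
    have hne : (Vᶜ : Set Ω).Nonempty := ⟨x, hx⟩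
    simp only [d, hne, dif_pos]
    exact Metric.infDist_zero_of_mem hx
  have hdpos : ∀ x, x ∈ V → 0 < d x := by
    intro x hx
    by_cases hne : (Vᶜ : Set Ω).Nonempty
    · simp only [d, hne, dif_pos]
      rw [← hV.isClosed_compl.notMem_iff_infDist_pos hne]
      simpa using hx
    · simp [d, hne]
  have hdnn : ∀ x, 0 ≤ d x := by
    intro x
    by_cases hx : x ∈ V
    · exact (hdpos x hx).le
    · exact (hd0 x hx).ge
  -- the sequence
  refine ⟨fun n x => max (ψ n x) (min ((n:ℝ) * d x) 1), ?_, ?_, ?_, ?_⟩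
  · intro n
    refine ⟨(hψc n).max ((continuous_const.mul hdc).min continuous_const), ?_, 1, ?_⟩
    · exact fun x => le_trans (hψnn n x) (le_max_left _ _)
    · intro x
      rw [abs_of_nonneg (le_trans (hψnn n x) (le_max_left _ _))]
      exact max_le (le_trans (hψle n x) (hIle x)) (min_le_right _ _)
  · intro x
    apply monotone_nat_of_le_succ
    intro n
    refine max_le_max ?_ (min_le_min (mul_le_mul_of_nonneg_right ?_ (hdnn x)) le_rfl)
    · rw [hψsucc]
      exact le_max_left _ _
    · exact_mod_cast Nat.le_succ n
  · intro x
    by_cases hx : x ∈ V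
    · have hI1 : I x = 1 := Set.indicator_of_mem hx _
      rw [hI1]
      have hev : ∀ᶠ n : ℕ in atTop, max (ψ n x) (min ((n:ℝ) * d x) 1) = 1 := by
        obtain ⟨N, hN⟩ := exists_nat_ge (1 / d x)
        filter_upwards [eventually_ge_atTop N] with n hn
        have h1 : (1:ℝ) ≤ (n:ℝ) * d x := by
          have : 1 / d x ≤ (n:ℝ) := le_trans hN (by exact_mod_cast hn)
          calc (1:ℝ) = (1 / d x) * d x := by field_simp [(hdpos x hx).ne']
          _ ≤ (n:ℝ) * d x := mul_le_mul_of_nonneg_right this (hdnn x)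
        rw [min_eq_right h1, max_eq_right (le_trans (hψle n x) (by rw [hI1]))]
      exact tendsto_const_nhds.congr' (hev.mono fun n hn => hn.symm)
    · have hI0 : I x = 0 := Set.indicator_of_notMem hx _
      rw [hI0]
      have hall : ∀ n : ℕ, max (ψ n x) (min ((n:ℝ) * d x) 1) = 0 := by
        intro n
        have hψ0 : ψ n x = 0 := le_antisymm (by rw [← hI0]; exact hψle n x) (hψnn n x)
        rw [hψ0, hd0 x hx, mul_zero, min_eq_left zero_le_one, max_self]
      exact tendsto_const_nhds.congr fun n => (hall n).symm
  · have hupper : ∀ n, c (fun x => max (ψ n x) (min ((n:ℝ) * d x) 1)) ≤ c I := by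
      intro n
      apply hmono
      intro x
      rw [abs_of_nonneg (le_trans (hψnn n x) (le_max_left _ _)), abs_of_nonneg (hInn x)]
      refine max_le (hψle n x) ?_
      by_cases hx : x ∈ V
      · have hI1 : I x = 1 := Set.indicator_of_mem hx _
        rw [hI1]
        exact min_le_right _ _
      · have hI0 : I x = 0 := Set.indicator_of_notMem hx _
        rw [hI0, hd0 x hx, mul_zero, min_eq_left zero_le_one]
    have hlower : ∀ n : ℕ, c I - 1/((n:ℝ)+1) ≤ c (fun x => max (ψ n x) (min ((n:ℝ) * d x) 1)) := by
      intro n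
      refine le_of_lt (lt_of_lt_of_le (hφc n) (hmono _ _ fun x => ?_))
      rw [abs_of_nonneg (hφb n x).1, abs_of_nonneg (le_trans (hψnn n x) (le_max_left _ _))]
      exact le_trans (hφψ n x) (le_max_left _ _)
    have hlow : Tendsto (fun n : ℕ => c I - 1/((n:ℝ)+1)) atTop (𝓝 (c I)) := by
      have h0 : Tendsto (fun n : ℕ => 1/((n:ℝ)+1)) atTop (𝓝 0) :=
        tendsto_one_div_add_atTop_nhds_zero_nat
      have := (tendsto_const_nhds : Tendsto (fun _ : ℕ => c I) atTop (𝓝 (c I))).sub h0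
      simpa using this
    exact tendsto_of_tendsto_of_tendsto_of_le_of_le hlow tendsto_const_nhds hlower hupper
end

section
/- Let P be a weakly relatively compact set of Borel probability measures on a metrizable separable space Ω and let c_p(f) = sup_{P∈P} E_P(|f|^p)^{1/p} on C_b(Ω), 1 ≤ p < ∞, be the associated capacity extended to L^1(c_p). Then for every X ∈ L^1(c_p), c_p(X) = sup_{Q∈P} E_Q(|X|^p)^{1/p}. -/
open Filter MeasureTheory Topology
open scoped ENNReal

/-- The lattice `C_b(Ω)` of bounded continuous real functions. -/
def Cb (Ω : Type) [TopologicalSpace Ω] : Set (Ω → ℝ) :=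
  {f | Continuous f ∧ ∃ M : ℝ, ∀ x, |f x| ≤ M}

/-- The capacity `c_{p,Ps}(f) = sup_{Q ∈ Ps} E_Q(|f|^p)^{1/p}` on `C_b(Ω)`. -/
noncomputable def cpCb {Ω : Type} [TopologicalSpace Ω] [MeasurableSpace Ω]
    (Ps : Set (Measure Ω)) (p : ℝ) (f : Ω → ℝ) : ℝ≥0∞ :=
  ⨆ Q ∈ Ps, (∫⁻ x, (ENNReal.ofReal |f x|) ^ p ∂Q) ^ (1 / p)

/-- Extension of `c_{p,Ps}` to non-negative lower semicontinuous functions: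
`c(f) = sup {c(φ) : 0 ≤ φ ≤ f, φ ∈ C_b(Ω)}`. -/
noncomputable def cpLsc {Ω : Type} [TopologicalSpace Ω] [MeasurableSpace Ω]
    (Ps : Set (Measure Ω)) (p : ℝ) (f : Ω → ℝ) : ℝ≥0∞ :=
  ⨆ φ ∈ {φ : Ω → ℝ | φ ∈ Cb Ω ∧ ∀ x, 0 ≤ φ x ∧ φ x ≤ f x}, cpCb Ps p φ

/-- Extension of `c_{p,Ps}` to arbitrary functions:
`c(g) = inf {c(f) : f ≥ |g|, f lower semicontinuous}`. -/
noncomputable def cpExt {Ω : Type} [TopologicalSpace Ω] [MeasurableSpace Ω]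
    (Ps : Set (Measure Ω)) (p : ℝ) (g : Ω → ℝ) : ℝ≥0∞ :=
  ⨅ f ∈ {f : Ω → ℝ | LowerSemicontinuous f ∧ ∀ x, |g x| ≤ f x}, cpLsc Ps p f

/-- Membership in `L^1(c)` for an `ℝ≥0∞`-valued capacity `c`: `g` is a `c`-limit of
bounded continuous functions. -/
def MemL1e {Ω : Type} [TopologicalSpace Ω] (c : (Ω → ℝ) → ℝ≥0∞) (g : Ω → ℝ) : Prop :=
  ∃ f : ℕ → Ω → ℝ, (∀ n, f n ∈ Cb Ω) ∧ Tendsto (fun n => c (g - f n)) atTop (𝓝 0)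

/-- The weak topology on measures: the coarsest topology making `μ ↦ ∫ f dμ` continuous
for every bounded continuous `f`. -/
noncomputable def WeakTop (Ω : Type) [TopologicalSpace Ω] [MeasurableSpace Ω] :
    TopologicalSpace (Measure Ω) :=
  TopologicalSpace.induced
    (fun μ => fun f : {g : Ω → ℝ // g ∈ Cb Ω} => ∫ x, f.1 x ∂μ) inferInstance

section Aux

variable {Ω : Type} [TopologicalSpace Ω] [TopologicalSpace.MetrizableSpace Ω]
    [MeasurableSpace Ω] [BorelSpace Ω]

/-- Key approximation lemma: for a nonnegative lower semicontinuous `f`, the `L^p(Q)`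
seminorm of `f` is bounded by `cpLsc Ps p f`, for every `Q ∈ Ps`. -/
lemma nq_lsc_le_cpLsc (Ps : Set (MeasureTheory.Measure Ω)) {p : ℝ} (hp : 1 ≤ p)
    {f : Ω → ℝ} (hlsc : LowerSemicontinuous f) (hf0 : ∀ x, 0 ≤ f x)
    {Q : MeasureTheory.Measure Ω} (hQ : Q ∈ Ps) :
    (∫⁻ x, (ENNReal.ofReal (f x)) ^ p ∂Q) ^ (1 / p) ≤ cpLsc Ps p f := by
  letI : MetricSpace Ω := TopologicalSpace.metrizableSpaceMetric Ω
  have hp0 : (0:ℝ) < p := lt_of_lt_of_le one_pos hp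
  set g : ℕ → Ω → ℝ := fun n x => ⨅ y, (f y + n * dist x y) with hgdef
  have hbd : ∀ (n : ℕ) (x : Ω), BddBelow (Set.range fun y => f y + n * dist x y) := by
    intro n x
    refine ⟨0, ?_⟩
    rintro r ⟨y, rfl⟩
    exact add_nonneg (hf0 y) (by positivity)
  have hg_le : ∀ n x, g n x ≤ f x := by
    intro n x
    have h := ciInf_le (hbd n x) x
    simpa using h
  have hg0 : ∀ n x, 0 ≤ g n x := by
    intro n x
    have : Nonempty Ω := ⟨x⟩
    exact le_ciInf fun y => add_nonneg (hf0 y) (by positivity)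
  set ψ : ℕ → Ω → ℝ := fun n x => min (n : ℝ) (g n x) with hψdef
  have hψ0 : ∀ n x, 0 ≤ ψ n x := fun n x => le_min (by positivity) (hg0 n x)
  have hψle : ∀ n x, ψ n x ≤ f x := fun n x => (min_le_right _ _).trans (hg_le n x)
  have hgmono : ∀ x, Monotone fun n => g n x := by
    intro x n m hnm
    have : Nonempty Ω := ⟨x⟩
    refine le_ciInf fun y => ?_
    refine (ciInf_le (hbd n x) y).trans ?_
    have h2 : (n : ℝ) * dist x y ≤ (m : ℝ) * dist x y :=
      mul_le_mul_of_nonneg_right (by exact_mod_cast hnm) dist_nonneg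
    linarith
  have hψmono : ∀ x, Monotone fun n => ψ n x := fun x n m hnm =>
    min_le_min (by exact_mod_cast hnm) (hgmono x hnm)
  have hglip : ∀ (n : ℕ) (x x' : Ω), g n x ≤ g n x' + n * dist x x' := by
    intro n x x'
    have : Nonempty Ω := ⟨x⟩
    rw [← sub_le_iff_le_add]
    refine le_ciInf fun y => ?_
    rw [sub_le_iff_le_add]
    refine (ciInf_le (hbd n x) y).trans ?_
    have h1 : dist x y ≤ dist x x' + dist x' y := dist_triangle x x' y
    have h2 : (n : ℝ) * dist x y ≤ (n : ℝ) * (dist x x' + dist x' y) :=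
      mul_le_mul_of_nonneg_left h1 (by positivity)
    rw [mul_add] at h2
    linarith
  have hgcont : ∀ n, Continuous (g n) := by
    intro n
    refine LipschitzWith.continuous (K := n) (LipschitzWith.of_dist_le_mul fun x x' => ?_)
    rw [Real.dist_eq, abs_sub_le_iff]
    constructor
    · have := hglip n x x'
      push_cast
      linarith
    · have := hglip n x' x
      rw [dist_comm x' x] at this
      push_cast
      linarith
  have hψcont : ∀ n, Continuous (ψ n) := fun n => continuous_const.min (hgcont n)
  have hψCb : ∀ n, ψ n ∈ Cb Ω := by
    intro n
    refine ⟨hψcont n, ⟨n, fun x => ?_⟩⟩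
    rw [abs_of_nonneg (hψ0 n x)]
    exact min_le_left _ _
  have htend : ∀ x, Filter.Tendsto (fun n => ψ n x) Filter.atTop (nhds (f x)) := by
    intro x
    have hne : Nonempty Ω := ⟨x⟩
    refine tendsto_order.2 ⟨fun c hc => ?_, fun c hc =>
      Filter.Eventually.of_forall fun n => lt_of_le_of_lt (hψle n x) hc⟩
    obtain ⟨c', hc1, hc2⟩ := exists_between hc
    obtain ⟨δ, hδ, hδf⟩ := Metric.eventually_nhds_iff.1 (hlsc x c' hc2)
    obtain ⟨N, hN⟩ := exists_nat_ge (max c' (c' / δ))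
    refine (Filter.eventually_ge_atTop N).mono fun n hn => ?_
    have hNn : (N : ℝ) ≤ (n : ℝ) := by exact_mod_cast hn
    have h1 : c' ≤ (n : ℝ) := le_trans (le_trans (le_max_left _ _) hN) hNn
    have h2 : c' ≤ g n x := by
      refine le_ciInf fun y => ?_
      by_cases hy : dist y x < δ
      · have h3 := (hδf hy).le
        have h4 : (0:ℝ) ≤ (n : ℝ) * dist x y := by positivity
        linarith
      · push_neg at hy
        have h3 : c' / δ ≤ (n : ℝ) := le_trans (le_trans (le_max_right _ _) hN) hNn
        have h4 : c' ≤ (n : ℝ) * δ := by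
          rw [div_le_iff₀ hδ] at h3
          linarith
        have h5 : (n : ℝ) * δ ≤ (n : ℝ) * dist x y := by
          refine mul_le_mul_of_nonneg_left ?_ (by positivity)
          rwa [dist_comm]
        linarith [hf0 y]
    exact lt_of_lt_of_le hc1 (le_min h1 h2)
  have hsup : ∀ x, (⨆ n, (ENNReal.ofReal (ψ n x)) ^ p) = (ENNReal.ofReal (f x)) ^ p := by
    intro x
    refine iSup_eq_of_tendsto ?_ ?_
    · intro n m hnm
      exact ENNReal.rpow_le_rpow (ENNReal.ofReal_le_ofReal (hψmono x hnm)) hp0.le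
    · exact (ENNReal.continuous_rpow_const.tendsto _).comp
        ((ENNReal.continuous_ofReal.tendsto _).comp (htend x))
  have hmeas : ∀ n, Measurable fun x => (ENNReal.ofReal (ψ n x)) ^ p := fun n =>
    ((hψcont n).measurable.ennreal_ofReal).pow_const p
  have hmct : (∫⁻ x, (ENNReal.ofReal (f x)) ^ p ∂Q)
      = ⨆ n, ∫⁻ x, (ENNReal.ofReal (ψ n x)) ^ p ∂Q := by
    rw [← MeasureTheory.lintegral_iSup hmeas]
    · exact MeasureTheory.lintegral_congr fun x => (hsup x).symm
    · intro n m hnm x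
      exact ENNReal.rpow_le_rpow (ENNReal.ofReal_le_ofReal (hψmono x hnm)) hp0.le
  have hψbound : ∀ n, (∫⁻ x, (ENNReal.ofReal (ψ n x)) ^ p ∂Q) ^ (1 / p) ≤ cpLsc Ps p f := by
    intro n
    have e0 : (∫⁻ x, (ENNReal.ofReal |ψ n x|) ^ p ∂Q)
        = ∫⁻ x, (ENNReal.ofReal (ψ n x)) ^ p ∂Q :=
      MeasureTheory.lintegral_congr fun x => by rw [abs_of_nonneg (hψ0 n x)]
    have e1 : (∫⁻ x, (ENNReal.ofReal (ψ n x)) ^ p ∂Q) ^ (1 / p) ≤ cpCb Ps p (ψ n) := by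
      rw [← e0]
      exact le_iSup₂ (f := fun (Q : MeasureTheory.Measure Ω) (_ : Q ∈ Ps) =>
        (∫⁻ x, (ENNReal.ofReal |ψ n x|) ^ p ∂Q) ^ (1 / p)) Q hQ
    refine e1.trans ?_
    exact le_iSup₂ (f := fun (φ : Ω → ℝ) (_ : φ ∈ {φ : Ω → ℝ | φ ∈ Cb Ω ∧
      ∀ x, 0 ≤ φ x ∧ φ x ≤ f x}) => cpCb Ps p φ) (ψ n) ⟨hψCb n, fun x => ⟨hψ0 n x, hψle n x⟩⟩
  have hIle : (∫⁻ x, (ENNReal.ofReal (f x)) ^ p ∂Q) ≤ (cpLsc Ps p f) ^ p := by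
    rw [hmct]
    refine iSup_le fun n => ?_
    have h := hψbound n
    calc (∫⁻ x, (ENNReal.ofReal (ψ n x)) ^ p ∂Q)
        = ((∫⁻ x, (ENNReal.ofReal (ψ n x)) ^ p ∂Q) ^ (1 / p)) ^ p := by
          rw [← ENNReal.rpow_mul, one_div_mul_cancel hp0.ne', ENNReal.rpow_one]
      _ ≤ (cpLsc Ps p f) ^ p := ENNReal.rpow_le_rpow h hp0.le
  calc (∫⁻ x, (ENNReal.ofReal (f x)) ^ p ∂Q) ^ (1 / p)
      ≤ ((cpLsc Ps p f) ^ p) ^ (1 / p) := ENNReal.rpow_le_rpow hIle (by positivity)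
    _ = cpLsc Ps p f := by
        rw [← ENNReal.rpow_mul, mul_one_div_cancel hp0.ne', ENNReal.rpow_one]

/-- Minkowski-type triangle inequality for the `L^p(Q)` seminorm. -/
lemma lp_tri {p : ℝ} (hp : 1 ≤ p) (Q : MeasureTheory.Measure Ω) {u : Ω → ℝ} {a b : Ω → ℝ≥0∞}
    (ha : Measurable a) (hb : Measurable b) (h : ∀ x, ENNReal.ofReal |u x| ≤ a x + b x) :
    (∫⁻ x, (ENNReal.ofReal |u x|) ^ p ∂Q) ^ (1 / p)
      ≤ (∫⁻ x, (a x) ^ p ∂Q) ^ (1 / p) + (∫⁻ x, (b x) ^ p ∂Q) ^ (1 / p) := by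
  have hp0 : (0:ℝ) < p := lt_of_lt_of_le one_pos hp
  refine le_trans ?_ (ENNReal.lintegral_Lp_add_le ha.aemeasurable hb.aemeasurable hp)
  refine ENNReal.rpow_le_rpow (MeasureTheory.lintegral_mono fun x => ?_) (by positivity)
  exact ENNReal.rpow_le_rpow (by simpa using h x) hp0.le

/-- Subadditivity of the extended capacity. -/
lemma cpExt_add_le (Ps : Set (MeasureTheory.Measure Ω)) {p : ℝ} (hp : 1 ≤ p) (a b : Ω → ℝ) :
    cpExt Ps p (a + b) ≤ cpExt Ps p a + cpExt Ps p b := by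
  have hp0 : (0:ℝ) < p := lt_of_lt_of_le one_pos hp
  have key : ∀ f ∈ {f : Ω → ℝ | LowerSemicontinuous f ∧ ∀ x, |a x| ≤ f x},
      ∀ g ∈ {f : Ω → ℝ | LowerSemicontinuous f ∧ ∀ x, |b x| ≤ f x},
      cpExt Ps p (a + b) ≤ cpLsc Ps p f + cpLsc Ps p g := by
    intro f hf g hg
    have hfg : (fun x => f x + g x) ∈
        {h : Ω → ℝ | LowerSemicontinuous h ∧ ∀ x, |(a + b) x| ≤ h x} := by
      refine ⟨hf.1.add hg.1, fun x => ?_⟩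
      calc |(a + b) x| = |a x + b x| := rfl
        _ ≤ |a x| + |b x| := abs_add_le _ _
        _ ≤ f x + g x := add_le_add (hf.2 x) (hg.2 x)
    refine le_trans (iInf₂_le _ hfg) ?_
    -- cpLsc (f + g) ≤ cpLsc f + cpLsc g
    refine iSup₂_le fun ψ hψ => iSup₂_le fun R hR => ?_
    have hf0 : ∀ x, 0 ≤ f x := fun x => (abs_nonneg _).trans (hf.2 x)
    have hg0 : ∀ x, 0 ≤ g x := fun x => (abs_nonneg _).trans (hg.2 x)
    have hfm : Measurable fun x => ENNReal.ofReal (f x) := hf.1.measurable.ennreal_ofReal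
    have hgm : Measurable fun x => ENNReal.ofReal (g x) := hg.1.measurable.ennreal_ofReal
    have h1 : ∀ x, ENNReal.ofReal |ψ x| ≤ ENNReal.ofReal (f x) + ENNReal.ofReal (g x) := by
      intro x
      refine le_trans (ENNReal.ofReal_le_ofReal ?_) ENNReal.ofReal_add_le
      rw [abs_of_nonneg (hψ.2 x).1]
      exact (hψ.2 x).2
    refine le_trans (lp_tri hp R hfm hgm h1) ?_
    exact add_le_add (nq_lsc_le_cpLsc Ps hp hf.1 hf0 hR) (nq_lsc_le_cpLsc Ps hp hg.1 hg0 hR)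
  conv_rhs => rw [cpExt, cpExt]
  rw [ENNReal.iInf_add]
  refine le_iInf fun f => ?_
  rw [ENNReal.iInf_add]
  refine le_iInf fun hf => ?_
  rw [ENNReal.add_iInf]
  refine le_iInf fun g => ?_
  rw [ENNReal.add_iInf]
  exact le_iInf fun hg => key f hf g hg

/-- Reverse triangle-type estimate: for continuous `g` and arbitrary `X`,
`N_Q(g) ≤ N_Q(X) + cpExt (X - g)`. -/
lemma nq_cont_le (Ps : Set (MeasureTheory.Measure Ω)) {p : ℝ} (hp : 1 ≤ p)
    {g X : Ω → ℝ} (hg : Continuous g) {Q : MeasureTheory.Measure Ω} (hQ : Q ∈ Ps) :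
    (∫⁻ x, (ENNReal.ofReal |g x|) ^ p ∂Q) ^ (1 / p)
      ≤ (∫⁻ x, (ENNReal.ofReal |X x|) ^ p ∂Q) ^ (1 / p) + cpExt Ps p (X - g) := by
  have hp0 : (0:ℝ) < p := lt_of_lt_of_le one_pos hp
  rw [cpExt, ENNReal.add_iInf]
  refine le_iInf fun f => ?_
  rw [ENNReal.add_iInf]
  refine le_iInf fun hf => ?_
  have hfX : ∀ x, |X x - g x| ≤ f x := fun x => hf.2 x
  have hf0 : ∀ x, 0 ≤ f x := fun x => (abs_nonneg _).trans (hfX x)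
  set m : Ω → ℝ := fun x => max (|g x| - f x) 0 with hmdef
  have hm : Measurable m :=
    (hg.abs.measurable.sub hf.1.measurable).max measurable_const
  have hmX : ∀ x, m x ≤ |X x| := by
    intro x
    have h1 : |g x| - |X x| ≤ |g x - X x| := abs_sub_abs_le_abs_sub _ _
    have h2 : |g x - X x| = |X x - g x| := abs_sub_comm _ _
    exact max_le (by linarith [hfX x]) (abs_nonneg _)
  have h1 : ∀ x, ENNReal.ofReal |g x| ≤ ENNReal.ofReal (m x) + ENNReal.ofReal (f x) := by
    intro x
    refine le_trans (ENNReal.ofReal_le_ofReal ?_) ENNReal.ofReal_add_le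
    have : |g x| - f x ≤ m x := le_max_left _ _
    linarith
  refine le_trans (lp_tri hp Q hm.ennreal_ofReal hf.1.measurable.ennreal_ofReal h1) ?_
  refine add_le_add ?_ (nq_lsc_le_cpLsc Ps hp hf.1 hf0 hQ)
  refine ENNReal.rpow_le_rpow (MeasureTheory.lintegral_mono fun x => ?_) (by positivity)
  exact ENNReal.rpow_le_rpow (ENNReal.ofReal_le_ofReal (hmX x)) hp0.le

/-- On `C_b`, the extension is dominated by the original capacity. -/
lemma cpExt_le_cpCb (Ps : Set (MeasureTheory.Measure Ω)) {p : ℝ} (hp : 1 ≤ p)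
    {g : Ω → ℝ} (hg : Continuous g) :
    cpExt Ps p g ≤ cpCb Ps p g := by
  have hp0 : (0:ℝ) < p := lt_of_lt_of_le one_pos hp
  have hmem : (fun x => |g x|) ∈
      {f : Ω → ℝ | LowerSemicontinuous f ∧ ∀ x, |g x| ≤ f x} :=
    ⟨hg.abs.lowerSemicontinuous, fun x => le_rfl⟩
  refine le_trans (iInf₂_le _ hmem) ?_
  refine iSup₂_le fun ψ hψ => iSup₂_le fun R hR => ?_
  have h1 : (∫⁻ x, (ENNReal.ofReal |ψ x|) ^ p ∂ R) ^ (1 / p)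
      ≤ (∫⁻ x, (ENNReal.ofReal |g x|) ^ p ∂ R) ^ (1 / p) := by
    refine ENNReal.rpow_le_rpow (MeasureTheory.lintegral_mono fun x => ?_) (by positivity)
    refine ENNReal.rpow_le_rpow (ENNReal.ofReal_le_ofReal ?_) hp0.le
    rw [abs_of_nonneg (hψ.2 x).1]
    exact (hψ.2 x).2
  exact h1.trans (le_iSup₂ (f := fun (R : MeasureTheory.Measure Ω) (_ : R ∈ Ps) =>
    (∫⁻ x, (ENNReal.ofReal |g x|) ^ p ∂ R) ^ (1 / p)) R hR)

end Aux

/-- For a weakly relatively compact set `Ps` of Borel probability measures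
on a metrizable separable space and `1 ≤ p < ∞`, the canonical extension of the
capacity `c_p(f) = sup_{Q ∈ Ps} E_Q(|f|^p)^{1/p}` satisfies
`c_p(X) = sup_{Q ∈ Ps} E_Q(|X|^p)^{1/p}` for every `X ∈ L^1(c_p)`. -/
theorem stmt14 {Ω : Type} [TopologicalSpace Ω] [TopologicalSpace.MetrizableSpace Ω]
    [TopologicalSpace.SeparableSpace Ω] [MeasurableSpace Ω] [BorelSpace Ω]
    (Ps : Set (Measure Ω)) (hprob : ∀ Q ∈ Ps, IsProbabilityMeasure Q)
    (hcomp : @IsCompact _ (WeakTop Ω) (@closure _ (WeakTop Ω) Ps))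
    (p : ℝ) (hp : 1 ≤ p) :
    ∀ X : Ω → ℝ, MemL1e (cpExt Ps p) X →
      cpExt Ps p X = ⨆ Q ∈ Ps, (∫⁻ x, (ENNReal.ofReal |X x|) ^ p ∂Q) ^ (1 / p) := by
  intro X hX
  obtain ⟨φ, hφ, hlim⟩ := hX
  have hp0 : (0:ℝ) < p := lt_of_lt_of_le one_pos hp
  refine le_antisymm ?_ ?_
  · -- cpExt X ≤ sup of seminorms
    set S : ℝ≥0∞ := ⨆ Q ∈ Ps, (∫⁻ x, (ENNReal.ofReal |X x|) ^ p ∂Q) ^ (1 / p) with hSdef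
    have bound : ∀ n, cpExt Ps p X ≤ S + 2 * cpExt Ps p (X - φ n) := by
      intro n
      have h1 : cpExt Ps p X ≤ cpExt Ps p (X - φ n) + cpExt Ps p (φ n) := by
        have := cpExt_add_le Ps hp (X - φ n) (φ n)
        rwa [sub_add_cancel] at this
      have h2 : cpExt Ps p (φ n) ≤ cpCb Ps p (φ n) := cpExt_le_cpCb Ps hp (hφ n).1
      have h3 : cpCb Ps p (φ n) ≤ S + cpExt Ps p (X - φ n) := by
        refine iSup₂_le fun Q hQ => ?_
        refine le_trans (nq_cont_le Ps hp (X := X) (hφ n).1 hQ) ?_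
        refine add_le_add_left ?_ _
        exact le_iSup₂ (f := fun (Q : Measure Ω) (_ : Q ∈ Ps) =>
          (∫⁻ x, (ENNReal.ofReal |X x|) ^ p ∂Q) ^ (1 / p)) Q hQ
      calc cpExt Ps p X ≤ cpExt Ps p (X - φ n) + cpExt Ps p (φ n) := h1
        _ ≤ cpExt Ps p (X - φ n) + (S + cpExt Ps p (X - φ n)) :=
            add_le_add_right (h2.trans h3) _
        _ = S + 2 * cpExt Ps p (X - φ n) := by ring
    have hT : Tendsto (fun n => S + 2 * cpExt Ps p (X - φ n)) atTop (𝓝 (S + 2 * 0)) := by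
      refine Tendsto.const_add _ ?_
      exact ENNReal.Tendsto.const_mul hlim (Or.inr ENNReal.ofNat_ne_top)
    rw [mul_zero, add_zero] at hT
    exact ge_of_tendsto' hT bound
  · -- sup of seminorms ≤ cpExt X
    refine iSup₂_le fun Q hQ => le_iInf₂ fun f hf => ?_
    have hf0 : ∀ x, 0 ≤ f x := fun x => (abs_nonneg _).trans (hf.2 x)
    refine le_trans ?_ (nq_lsc_le_cpLsc Ps hp hf.1 hf0 hQ)
    refine ENNReal.rpow_le_rpow (lintegral_mono fun x => ?_) (by positivity)
    exact ENNReal.rpow_le_rpow (ENNReal.ofReal_le_ofReal (hf.2 x)) hp0.le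
end

section
/- Let Ω be a Polish space and P a weakly relatively compact set of Borel probability measures. Then there exists a countable subset {P_n : n ∈ ℕ} ⊆ P such that for every X ∈ L^1(c_{p,P}) and every p ∈ [1,∞), c_{p,P}(X) = sup_{n∈ℕ} E_{P_n}(|X|^p)^{1/p}; in particular the capacities c_{p,P} and c_{p,{P_n}} coincide and L^1(c_{p,P}) = L^1(c_{p,{P_n}}). -/
open Filter MeasureTheory Topology
open scoped ENNReal
open scoped NNReal

section Aux
variable {Ω : Type} [TopologicalSpace Ω] [MeasurableSpace Ω] [OpensMeasurableSpace Ω]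

set_option linter.unusedSectionVars false
omit [MeasurableSpace Ω] [OpensMeasurableSpace Ω] in
lemma cb_abs_rpow {φ : Ω → ℝ} (hφ : φ ∈ Cb Ω) {p : ℝ} (hp : 1 ≤ p) :
    (fun x => |φ x| ^ p) ∈ Cb Ω := by
  obtain ⟨hc, M, hM⟩ := hφ
  refine ⟨(Real.continuous_rpow_const (by linarith)).comp hc.abs, (max M 0) ^ p, fun x => ?_⟩
  rw [abs_of_nonneg (Real.rpow_nonneg (abs_nonneg _) _)]
  exact Real.rpow_le_rpow (abs_nonneg _) (le_max_of_le_left (hM x)) (by linarith)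

/-- L2 -/
lemma lintegral_ofReal_abs_rpow {φ : Ω → ℝ} (hφ : φ ∈ Cb Ω) {p : ℝ} (hp : 1 ≤ p)
    (Q : Measure Ω) [IsFiniteMeasure Q] :
    ∫⁻ x, (ENNReal.ofReal |φ x|) ^ p ∂Q = ENNReal.ofReal (∫ x, |φ x| ^ p ∂Q) := by
  have h1 : ∀ x, (ENNReal.ofReal |φ x|) ^ p = ENNReal.ofReal (|φ x| ^ p) := fun x =>
    (ENNReal.ofReal_rpow_of_nonneg (abs_nonneg _) (by linarith))
  simp_rw [h1]
  obtain ⟨hc, M, hM⟩ := cb_abs_rpow hφ hp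
  have hint : Integrable (fun x => |φ x| ^ p) Q :=
    ⟨hc.aestronglyMeasurable, HasFiniteIntegral.of_bounded (C := M)
      (Filter.Eventually.of_forall (fun x => by simpa using hM x))⟩
  rw [MeasureTheory.ofReal_integral_eq_lintegral_ofReal hint
    (Filter.Eventually.of_forall fun x => Real.rpow_nonneg (abs_nonneg _) _)]

/-- L3 -/
lemma ennreal_iSup_rpow {ι : Sort*} (a : ι → ℝ≥0∞) {y : ℝ} (hy : 0 < y) :
    (⨆ i, a i) ^ y = ⨆ i, (a i) ^ y := by
  refine le_antisymm ?_ (iSup_le fun i => ENNReal.rpow_le_rpow (le_iSup a i) hy.le)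
  have h : ∀ i, a i ≤ (⨆ j, (a j) ^ y) ^ y⁻¹ := fun i => by
    rw [← ENNReal.rpow_rpow_inv hy.ne' (a i)]
    exact ENNReal.rpow_le_rpow (le_iSup (fun j => (a j) ^ y) i) (inv_nonneg.2 hy.le)
  calc (⨆ i, a i) ^ y ≤ ((⨆ j, (a j) ^ y) ^ y⁻¹) ^ y :=
        ENNReal.rpow_le_rpow (iSup_le h) hy.le
    _ = ⨆ j, (a j) ^ y := ENNReal.rpow_inv_rpow hy.ne' _


section MY
variable {Ω : Type} [MetricSpace Ω]

lemma my_approx {f : Ω → ℝ} (hf : LowerSemicontinuous f) (hf0 : ∀ x, 0 ≤ f x) :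
    ∃ φ : ℕ → Ω → ℝ, (∀ k, Continuous (φ k)) ∧ (∀ k x, 0 ≤ φ k x) ∧ (∀ k x, φ k x ≤ (k:ℝ)) ∧
      (∀ k x, φ k x ≤ f x) ∧ (∀ k k', k ≤ k' → ∀ x, φ k x ≤ φ k' x) ∧
      (∀ x c, c < f x → ∃ k, c < φ k x) := by
  classical
  set φ : ℕ → Ω → ℝ := fun k x => ⨅ y, (min (f y) k + k * dist x y) with hφdef
  have hterm : ∀ (k : ℕ) (x y : Ω), (0:ℝ) ≤ min (f y) k + k * dist x y := fun k x y =>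
    add_nonneg (le_min (hf0 y) (Nat.cast_nonneg k)) (mul_nonneg (Nat.cast_nonneg k) dist_nonneg)
  have hbdd : ∀ (k : ℕ) (x : Ω), BddBelow (Set.range fun y => min (f y) (k:ℝ) + k * dist x y) := by
    intro k x
    exact ⟨0, by rintro r ⟨y, rfl⟩; exact hterm k x y⟩
  have h0 : ∀ k x, 0 ≤ φ k x := fun k x => Real.iInf_nonneg (hterm k x)
  have hle_term : ∀ (k : ℕ) (x y : Ω), φ k x ≤ min (f y) k + k * dist x y := by
    intro k x y
    haveI : Nonempty Ω := ⟨x⟩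
    exact ciInf_le (hbdd k x) y
  have hle_f : ∀ k x, φ k x ≤ f x := by
    intro k x
    have h := hle_term k x x
    rw [dist_self, mul_zero, add_zero] at h
    exact h.trans (min_le_left _ _)
  have hle_k : ∀ k x, φ k x ≤ (k:ℝ) := by
    intro k x
    have h := hle_term k x x
    rw [dist_self, mul_zero, add_zero] at h
    exact h.trans (min_le_right _ _)
  have hmono : ∀ k k', k ≤ k' → ∀ x, φ k x ≤ φ k' x := by
    intro k k' h x
    haveI : Nonempty Ω := ⟨x⟩
    refine ciInf_mono (hbdd k x) fun y => ?_
    exact add_le_add (min_le_min le_rfl (by exact_mod_cast h))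
      (mul_le_mul_of_nonneg_right (by exact_mod_cast h) dist_nonneg)
  have hkey : ∀ (k : ℕ) (x x' : Ω), φ k x ≤ φ k x' + k * dist x x' := by
    intro k x x'
    haveI : Nonempty Ω := ⟨x⟩
    rw [← sub_le_iff_le_add]
    refine le_ciInf fun y => ?_
    have h1 := hle_term k x y
    have h2 : dist x y ≤ dist x x' + dist x' y := dist_triangle x x' y
    have h3 : (k:ℝ) * dist x y ≤ k * dist x x' + k * dist x' y := by
      rw [← mul_add]; exact mul_le_mul_of_nonneg_left h2 (Nat.cast_nonneg k)
    linarith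
  have hcont : ∀ k, Continuous (φ k) := by
    intro k
    have hl : LipschitzWith (k : ℝ≥0) (φ k) := by
      refine LipschitzWith.of_dist_le_mul fun x x' => ?_
      rw [Real.dist_eq, abs_sub_le_iff]
      constructor
      · have := hkey k x x'
        simp only [NNReal.coe_natCast]
        linarith
      · have := hkey k x' x
        rw [dist_comm x' x] at this
        simp only [NNReal.coe_natCast]
        linarith
    exact hl.continuous
  have htend : ∀ x c, c < f x → ∃ k, c < φ k x := by
    intro x c hc
    haveI : Nonempty Ω := ⟨x⟩
    obtain ⟨c', hc1, hc2⟩ := exists_between hc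
    obtain ⟨δ, hδ, hball⟩ := Metric.eventually_nhds_iff.1 (hf x c' hc2)
    obtain ⟨k, hk⟩ := exists_nat_ge (max c' (c' / δ))
    refine ⟨k, lt_of_lt_of_le hc1 (le_ciInf fun y => ?_)⟩
    rcases lt_or_ge (dist y x) δ with hy | hy
    · have hfy : c' < f y := hball hy
      have : c' ≤ min (f y) (k:ℝ) := le_min hfy.le ((le_max_left _ _).trans hk)
      have h5 : (0:ℝ) ≤ (k:ℝ) * dist x y := mul_nonneg (Nat.cast_nonneg k) dist_nonneg
      linarith
    · have h1 : c' / δ ≤ (k:ℝ) := (le_max_right _ _).trans hk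
      have h2 : c' ≤ (k:ℝ) * δ := by
        rw [div_le_iff₀ hδ] at h1; linarith
      have h3 : (k:ℝ) * δ ≤ (k:ℝ) * dist x y := by
        rw [dist_comm x y]
        exact mul_le_mul_of_nonneg_left hy (Nat.cast_nonneg k)
      have h4 : (0:ℝ) ≤ min (f y) k := le_min (hf0 y) (Nat.cast_nonneg k)
      linarith
  exact ⟨φ, hcont, h0, hle_k, hle_f, hmono, htend⟩



variable {Ω : Type} [MetricSpace Ω] [MeasurableSpace Ω] [OpensMeasurableSpace Ω]

/-- L4: for lower semicontinuous nonneg f and Q ∈ Ps. -/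
lemma lsc_cpLsc_bound (Ps : Set (Measure Ω)) {p : ℝ} (hp : 1 ≤ p)
    {f : Ω → ℝ} (hf : LowerSemicontinuous f) (hf0 : ∀ x, 0 ≤ f x)
    {Q : Measure Ω} (hQ : Q ∈ Ps) :
    (∫⁻ x, (ENNReal.ofReal (f x)) ^ p ∂Q) ^ (1/p) ≤ cpLsc Ps p f := by
  have hp0 : (0:ℝ) < p := by linarith
  obtain ⟨φ, hcont, h0, hle_k, hle_f, hmono, htend⟩ := my_approx hf hf0
  have hsupR : ∀ x, f x = ⨆ k, φ k x := by
    intro x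
    refine le_antisymm (le_of_forall_lt fun c hc => ?_) (ciSup_le fun k => hle_f k x)
    obtain ⟨k, hk⟩ := htend x c hc
    exact hk.trans_le (le_ciSup ⟨f x, by rintro r ⟨k', rfl⟩; exact hle_f k' x⟩ k)
  have hsup : ∀ x, (⨆ k, ENNReal.ofReal (φ k x)) = ENNReal.ofReal (f x) := by
    intro x
    rw [hsupR x]
    exact (Monotone.map_ciSup_of_continuousAt (ENNReal.continuous_ofReal.continuousAt)
      (fun a b hab => ENNReal.ofReal_le_ofReal hab)
      ⟨f x, by rintro r ⟨k', rfl⟩; exact hle_f k' x⟩).symm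
  have key : ∫⁻ x, (ENNReal.ofReal (f x)) ^ p ∂Q
      = ⨆ k, ∫⁻ x, (ENNReal.ofReal (φ k x)) ^ p ∂Q := by
    have hm : ∀ k, Measurable fun x => (ENNReal.ofReal (φ k x)) ^ p := fun k =>
      (ENNReal.continuous_rpow_const.measurable).comp ((hcont k).measurable.ennreal_ofReal)
    have hmo : Monotone fun k => fun x => (ENNReal.ofReal (φ k x)) ^ p :=
      fun a b hab x => ENNReal.rpow_le_rpow
        (ENNReal.ofReal_le_ofReal (hmono a b hab x)) hp0.le
    rw [← MeasureTheory.lintegral_iSup hm hmo]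
    congr 1; funext x
    rw [← hsup x, ennreal_iSup_rpow _ hp0]
  rw [key, ennreal_iSup_rpow _ (by positivity : (0:ℝ) < 1/p)]
  refine iSup_le fun k => ?_
  have habs : ∀ x, ENNReal.ofReal (φ k x) = ENNReal.ofReal |φ k x| := by
    intro x; rw [abs_of_nonneg (h0 k x)]
  refine le_trans ?_ (le_iSup₂ (f := fun φ' (_ : φ' ∈ {φ' : Ω → ℝ | φ' ∈ Cb Ω ∧
      ∀ x, 0 ≤ φ' x ∧ φ' x ≤ f x}) => cpCb Ps p φ') (φ k)
      ⟨⟨hcont k, k, fun x => by rw [abs_of_nonneg (h0 k x)]; exact hle_k k x⟩,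
        fun x => ⟨h0 k x, hle_f k x⟩⟩)
  simp_rw [habs]
  exact le_iSup₂ (f := fun Q' (_ : Q' ∈ Ps) => (∫⁻ x, (ENNReal.ofReal |φ k x|) ^ p ∂Q') ^ (1/p)) Q hQ

/-- L7 -/
lemma cpExt_lower_bound (Ps : Set (Measure Ω)) {p : ℝ} (hp : 1 ≤ p) (g : Ω → ℝ)
    {Q : Measure Ω} (hQ : Q ∈ Ps) :
    (∫⁻ x, (ENNReal.ofReal |g x|) ^ p ∂Q) ^ (1/p) ≤ cpExt Ps p g := by
  refine le_iInf₂ fun f hf => ?_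
  obtain ⟨hlsc, hmaj⟩ := hf
  have hf0 : ∀ x, 0 ≤ f x := fun x => (abs_nonneg _).trans (hmaj x)
  refine le_trans ?_ (lsc_cpLsc_bound Ps hp hlsc hf0 hQ)
  exact ENNReal.rpow_le_rpow (lintegral_mono fun x => ENNReal.rpow_le_rpow
    (ENNReal.ofReal_le_ofReal (hmaj x)) (by linarith)) (by positivity)

/-- L5 -/
lemma cpExt_add_le_s15 (Ps : Set (Measure Ω)) {p : ℝ} (hp : 1 ≤ p) (g φ : Ω → ℝ)
    (hφ : φ ∈ Cb Ω) : cpExt Ps p (g + φ) ≤ cpExt Ps p g + cpCb Ps p φ := by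
  have key : ∀ f ∈ {f : Ω → ℝ | LowerSemicontinuous f ∧ ∀ x, |g x| ≤ f x},
      cpExt Ps p (g + φ) ≤ cpLsc Ps p f + cpCb Ps p φ := by
    rintro f ⟨hlsc, hmaj⟩
    have hf0 : ∀ x, 0 ≤ f x := fun x => (abs_nonneg _).trans (hmaj x)
    set F := fun x => f x + |φ x| with hF
    have hFlsc : LowerSemicontinuous F := hlsc.add hφ.1.abs.lowerSemicontinuous
    have hFmaj : ∀ x, |(g + φ) x| ≤ F x := fun x =>
      (abs_add_le _ _).trans (add_le_add (hmaj x) le_rfl)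
    refine le_trans (iInf₂_le F ⟨hFlsc, hFmaj⟩) ?_
    refine iSup₂_le fun ψ hψ => ?_
    obtain ⟨⟨hψc, Mψ, hψM⟩, hψ0F⟩ := hψ
    set ψ' : Ω → ℝ := fun x => max (ψ x - |φ x|) 0 with hψ'
    have hψ'0 : ∀ x, 0 ≤ ψ' x := fun x => le_max_right _ _
    have hψ'c : Continuous ψ' := (hψc.sub hφ.1.abs).max continuous_const
    have hψ'Cb : ψ' ∈ Cb Ω := by
      refine ⟨hψ'c, max Mψ 0, fun x => ?_⟩
      rw [abs_of_nonneg (hψ'0 x)]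
      refine max_le (le_trans ?_ (le_max_left _ _)) (le_max_right _ _)
      have := hψM x
      have := abs_nonneg (φ x)
      have := le_abs_self (ψ x)
      linarith
    have hψ'f : ∀ x, ψ' x ≤ f x := by
      intro x
      refine max_le ?_ (hf0 x)
      have := (hψ0F x).2
      simp only [hF] at this
      linarith
    have hpoint : ∀ x, ENNReal.ofReal |ψ x| ≤ ENNReal.ofReal |ψ' x| + ENNReal.ofReal |φ x| := by
      intro x
      rw [← ENNReal.ofReal_add (abs_nonneg _) (abs_nonneg _)]
      refine ENNReal.ofReal_le_ofReal ?_
      rw [abs_of_nonneg (hψ0F x).1, abs_of_nonneg (hψ'0 x)]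
      have : ψ x - |φ x| ≤ ψ' x := le_max_left _ _
      linarith
    refine iSup₂_le fun Q hQ => ?_
    have hmink := ENNReal.lintegral_Lp_add_le (μ := Q)
      (hψ'c.abs.measurable.ennreal_ofReal).aemeasurable
      (hφ.1.abs.measurable.ennreal_ofReal).aemeasurable hp
    calc (∫⁻ x, (ENNReal.ofReal |ψ x|) ^ p ∂Q) ^ (1/p)
        ≤ (∫⁻ x, (ENNReal.ofReal |ψ' x| + ENNReal.ofReal |φ x|) ^ p ∂Q) ^ (1/p) :=
          ENNReal.rpow_le_rpow (lintegral_mono fun x =>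
            ENNReal.rpow_le_rpow (hpoint x) (by linarith)) (by positivity)
      _ ≤ (∫⁻ x, (ENNReal.ofReal |ψ' x|) ^ p ∂Q) ^ (1/p)
          + (∫⁻ x, (ENNReal.ofReal |φ x|) ^ p ∂Q) ^ (1/p) := hmink
      _ ≤ cpLsc Ps p f + cpCb Ps p φ := by
          refine add_le_add ?_
            (le_iSup₂ (f := fun Q' (_ : Q' ∈ Ps) =>
              (∫⁻ x, (ENNReal.ofReal |φ x|) ^ p ∂Q') ^ (1/p)) Q hQ)
          refine le_trans (le_iSup₂ (f := fun Q' (_ : Q' ∈ Ps) =>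
            (∫⁻ x, (ENNReal.ofReal |ψ' x|) ^ p ∂Q') ^ (1/p)) Q hQ) ?_
          exact le_iSup₂ (f := fun φ'' (_ : φ'' ∈ {φ'' : Ω → ℝ | φ'' ∈ Cb Ω ∧
            ∀ x, 0 ≤ φ'' x ∧ φ'' x ≤ f x}) => cpCb Ps p φ'') ψ'
            ⟨hψ'Cb, fun x => ⟨hψ'0 x, hψ'f x⟩⟩
  have hre : cpExt Ps p g + cpCb Ps p φ
      = ⨅ f ∈ {f : Ω → ℝ | LowerSemicontinuous f ∧ ∀ x, |g x| ≤ f x},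
        (cpLsc Ps p f + cpCb Ps p φ) := by
    rw [cpExt, ENNReal.iInf_add]
    exact iInf_congr fun f => ENNReal.iInf_add
  rw [hre]
  exact le_iInf₂ key

/-- T0: open set measure as sup of integrals of cutoff functions. -/
lemma measure_open_eq_iSup (U : Set Ω) (hU : IsOpen U) (hne : Uᶜ.Nonempty) (μ : Measure Ω) :
    μ U = ⨆ k : ℕ, ∫⁻ x, ENNReal.ofReal (min 1 ((k:ℝ) * Metric.infDist x Uᶜ)) ∂μ := by
  have hcont : ∀ k : ℕ, Continuous fun x => min 1 ((k:ℝ) * Metric.infDist x Uᶜ) :=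
    fun k => continuous_const.min (continuous_const.mul (Metric.continuous_infDist_pt Uᶜ))
  have hm : ∀ k : ℕ, Measurable fun x =>
      ENNReal.ofReal (min 1 ((k:ℝ) * Metric.infDist x Uᶜ)) :=
    fun k => (hcont k).measurable.ennreal_ofReal
  have hmono : Monotone fun (k : ℕ) (x : Ω) =>
      ENNReal.ofReal (min 1 ((k:ℝ) * Metric.infDist x Uᶜ)) := by
    intro a b hab x
    exact ENNReal.ofReal_le_ofReal (min_le_min le_rfl
      (mul_le_mul_of_nonneg_right (by exact_mod_cast hab) Metric.infDist_nonneg))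
  rw [← MeasureTheory.lintegral_indicator_one hU.measurableSet, ← MeasureTheory.lintegral_iSup hm hmono]
  congr 1; funext x
  by_cases hx : x ∈ U
  · have hd : 0 < Metric.infDist x Uᶜ := by
      rcases eq_or_lt_of_le (Metric.infDist_nonneg (x := x) (s := Uᶜ)) with h | h
      · exfalso
        have : x ∈ closure Uᶜ := (Metric.mem_closure_iff_infDist_zero hne).2 h.symm
        rw [hU.isClosed_compl.closure_eq] at this
        exact this hx
      · exact h
    obtain ⟨k, hk⟩ := exists_nat_ge (1 / Metric.infDist x Uᶜ)
    have h1 : (1:ℝ) ≤ (k:ℝ) * Metric.infDist x Uᶜ := by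
      rw [div_le_iff₀ hd] at hk; linarith
    refine le_antisymm ?_ (iSup_le fun j => ?_)
    · refine le_trans ?_ (le_iSup _ k)
      rw [min_eq_left h1]
      simp [Set.indicator_of_mem hx]
    · simp only [Set.indicator_of_mem hx, Pi.one_apply]
      calc ENNReal.ofReal (min 1 ((j:ℝ) * Metric.infDist x Uᶜ))
          ≤ ENNReal.ofReal 1 := ENNReal.ofReal_le_ofReal (min_le_left _ _)
        _ = 1 := ENNReal.ofReal_one
  · have hd : Metric.infDist x Uᶜ = 0 := Metric.infDist_zero_of_mem hx
    simp [Set.indicator_of_notMem hx, hd]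

end MY

section Polish
variable {Ω : Type} [TopologicalSpace Ω] [PolishSpace Ω] [MeasurableSpace Ω] [BorelSpace Ω]

lemma exists_separating_family :
    ∃ g : ℕ → Ω → ℝ, (∀ n, g n ∈ Cb Ω) ∧
      ∀ (μ ν : Measure Ω), IsProbabilityMeasure μ → IsProbabilityMeasure ν →
        (∀ n, ∫ x, g n x ∂μ = ∫ x, g n x ∂ν) → μ = ν := by
  letI := TopologicalSpace.upgradeIsCompletelyMetrizable Ω
  set B := TopologicalSpace.countableBasis Ω with hB
  set S : Set (Set Ω) := (fun t : Set (Set Ω) => ⋂₀ t) '' {t | t.Finite ∧ t ⊆ B} with hS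
  have hSc : S.Countable :=
    (Set.countable_setOf_finite_subset (TopologicalSpace.countable_countableBasis Ω)).image _
  have hSopen : ∀ s ∈ S, IsOpen s := by
    rintro s ⟨t, ⟨htf, htB⟩, rfl⟩
    exact htf.isOpen_sInter fun u hu => TopologicalSpace.isOpen_of_mem_countableBasis (htB hu)
  have hSuniv : Set.univ ∈ S := ⟨∅, ⟨Set.finite_empty, Set.empty_subset _⟩, Set.sInter_empty⟩
  have hPi : IsPiSystem S := by
    rintro s1 ⟨t1, ⟨h1f, h1B⟩, rfl⟩ s2 ⟨t2, ⟨h2f, h2B⟩, rfl⟩ _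
    exact ⟨t1 ∪ t2, ⟨h1f.union h2f, Set.union_subset h1B h2B⟩, Set.sInter_union t1 t2⟩
  have hGen : ‹MeasurableSpace Ω› = MeasurableSpace.generateFrom S := by
    rw [BorelSpace.measurable_eq (α := Ω)]
    refine le_antisymm ?_ (MeasurableSpace.generateFrom_le fun s hs =>
      MeasurableSpace.measurableSet_generateFrom (hSopen s hs))
    rw [(TopologicalSpace.isBasis_countableBasis Ω).borel_eq_generateFrom]
    refine MeasurableSpace.generateFrom_mono fun b hb => ?_
    exact ⟨{b}, ⟨Set.finite_singleton b, Set.singleton_subset_iff.2 hb⟩, Set.sInter_singleton b⟩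
  set gfun : Set Ω → ℕ → Ω → ℝ := fun U k x => min 1 ((k:ℝ) * Metric.infDist x Uᶜ) with hgfun
  have hFc : (Set.image2 gfun S (Set.univ : Set ℕ)).Countable :=
    Set.Countable.image2 hSc Set.countable_univ _
  have hFne : (Set.image2 gfun S (Set.univ : Set ℕ)).Nonempty :=
    ⟨gfun Set.univ 0, Set.mem_image2_of_mem hSuniv (Set.mem_univ 0)⟩
  obtain ⟨g, hg⟩ := hFc.exists_eq_range hFne
  have hgmem : ∀ n, ∃ U ∈ S, ∃ k : ℕ, g n = gfun U k := by
    intro n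
    have : g n ∈ Set.image2 gfun S Set.univ := by rw [hg]; exact Set.mem_range_self n
    obtain ⟨U, hU, k, -, h⟩ := this
    exact ⟨U, hU, k, h.symm⟩
  have hmemrange : ∀ U ∈ S, ∀ k : ℕ, ∃ n, g n = gfun U k := by
    intro U hU k
    have : gfun U k ∈ Set.range g := by
      rw [← hg]; exact Set.mem_image2_of_mem hU (Set.mem_univ k)
    obtain ⟨n, hn⟩ := this
    exact ⟨n, hn⟩
  have hgCb : ∀ U k, gfun U k ∈ Cb Ω := by
    intro U k
    refine ⟨continuous_const.min (continuous_const.mul (Metric.continuous_infDist_pt Uᶜ)),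
      1, fun x => ?_⟩
    rw [abs_le]
    refine ⟨?_, min_le_left _ _⟩
    have : (0:ℝ) ≤ min 1 ((k:ℝ) * Metric.infDist x Uᶜ) :=
      le_min zero_le_one (mul_nonneg (Nat.cast_nonneg k) Metric.infDist_nonneg)
    linarith
  refine ⟨g, fun n => ?_, ?_⟩
  · obtain ⟨U, hU, k, h⟩ := hgmem n
    rw [h]; exact hgCb U k
  · intro μ ν hμ hν hint
    haveI := hμ; haveI := hν
    have hlint : ∀ U ∈ S, ∀ k : ℕ,
        ∫⁻ x, ENNReal.ofReal (gfun U k x) ∂μ = ∫⁻ x, ENNReal.ofReal (gfun U k x) ∂ν := by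
      intro U hU k
      obtain ⟨n, hn⟩ := hmemrange U hU k
      have h0 : ∀ x, 0 ≤ gfun U k x := fun x =>
        le_min zero_le_one (mul_nonneg (Nat.cast_nonneg k) Metric.infDist_nonneg)
      have hintg : ∀ (ρ : Measure Ω), IsProbabilityMeasure ρ → Integrable (gfun U k) ρ := by
        intro ρ hρ
        obtain ⟨hc, M, hM⟩ := hgCb U k
        exact ⟨hc.aestronglyMeasurable, HasFiniteIntegral.of_bounded (C := M)
          (Filter.Eventually.of_forall fun x => by simpa using hM x)⟩
      rw [← MeasureTheory.ofReal_integral_eq_lintegral_ofReal (hintg μ hμ)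
          (Filter.Eventually.of_forall h0),
        ← MeasureTheory.ofReal_integral_eq_lintegral_ofReal (hintg ν hν)
          (Filter.Eventually.of_forall h0), ← hn, hint n]
    refine MeasureTheory.ext_of_generate_finite S hGen hPi (fun s hs => ?_)
      (by simp [measure_univ])
    rcases Set.eq_empty_or_nonempty sᶜ with hc | hc
    · have hsu : s = Set.univ := by rwa [Set.compl_empty_iff] at hc
      rw [hsu]; simp [measure_univ]
    · rw [measure_open_eq_iSup s (hSopen s hs) hc μ, measure_open_eq_iSup s (hSopen s hs) hc ν]
      exact iSup_congr fun k => hlint s hs k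

end Polish

section PolishWrap
variable {Ω : Type} [TopologicalSpace Ω] [PolishSpace Ω] [MeasurableSpace Ω] [BorelSpace Ω]

lemma lsc_cpLsc_bound' (Ps : Set (Measure Ω)) {p : ℝ} (hp : 1 ≤ p)
    {f : Ω → ℝ} (hf : LowerSemicontinuous f) (hf0 : ∀ x, 0 ≤ f x)
    {Q : Measure Ω} (hQ : Q ∈ Ps) :
    (∫⁻ x, (ENNReal.ofReal (f x)) ^ p ∂Q) ^ (1/p) ≤ cpLsc Ps p f := by
  letI := TopologicalSpace.upgradeIsCompletelyMetrizable Ω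
  exact lsc_cpLsc_bound Ps hp hf hf0 hQ

lemma cpExt_lower_bound' (Ps : Set (Measure Ω)) {p : ℝ} (hp : 1 ≤ p) (g : Ω → ℝ)
    {Q : Measure Ω} (hQ : Q ∈ Ps) :
    (∫⁻ x, (ENNReal.ofReal |g x|) ^ p ∂Q) ^ (1/p) ≤ cpExt Ps p g := by
  letI := TopologicalSpace.upgradeIsCompletelyMetrizable Ω
  exact cpExt_lower_bound Ps hp g hQ

lemma cpExt_add_le' (Ps : Set (Measure Ω)) {p : ℝ} (hp : 1 ≤ p) (g φ : Ω → ℝ)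
    (hφ : φ ∈ Cb Ω) : cpExt Ps p (g + φ) ≤ cpExt Ps p g + cpCb Ps p φ := by
  letI := TopologicalSpace.upgradeIsCompletelyMetrizable Ω
  exact cpExt_add_le_s15 Ps hp g φ hφ

end PolishWrap


set_option maxHeartbeats 1000000 in
/-- If `Ω` is Polish and `Ps` is a weakly relatively compact (nonempty)
set of Borel probability measures, there is a countable subset `{P n} ⊆ Ps` such that
for every `p ∈ [1,∞)` and every `X ∈ L^1(c_{p,Ps})`,
`c_{p,Ps}(X) = sup_n E_{P n}(|X|^p)^{1/p}`; in particular the capacities `c_{p,Ps}`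
and `c_{p,{P n}}` coincide and the spaces `L^1` coincide. -/
theorem stmt15 {Ω : Type} [TopologicalSpace Ω] [PolishSpace Ω]
    [MeasurableSpace Ω] [BorelSpace Ω]
    (Ps : Set (Measure Ω)) (hne : Ps.Nonempty)
    (hprob : ∀ Q ∈ Ps, IsProbabilityMeasure Q)
    (hcomp : @IsCompact _ (WeakTop Ω) (@closure _ (WeakTop Ω) Ps)) :
    ∃ P : ℕ → Measure Ω, (∀ n, P n ∈ Ps) ∧
      ∀ p : ℝ, 1 ≤ p →
        (∀ X : Ω → ℝ, MemL1e (cpExt Ps p) X →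
          cpExt Ps p X = ⨆ n : ℕ, (∫⁻ x, (ENNReal.ofReal |X x|) ^ p ∂(P n)) ^ (1 / p)) ∧
        cpExt Ps p = cpExt (Set.range P) p ∧
        (∀ X : Ω → ℝ, MemL1e (cpExt Ps p) X ↔ MemL1e (cpExt (Set.range P) p) X) := by
  classical
  letI tau : TopologicalSpace (Measure Ω) := WeakTop Ω
  obtain ⟨g, hgCb, hgsep⟩ := exists_separating_family (Ω := Ω)
  have hcoord : ∀ (h : Ω → ℝ), h ∈ Cb Ω → Continuous fun μ : Measure Ω => ∫ x, h x ∂μ := by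
    intro h hh
    have h1 : Continuous
        (fun μ : Measure Ω => fun f : {g' : Ω → ℝ // g' ∈ Cb Ω} => ∫ x, f.1 x ∂μ) :=
      continuous_induced_dom
    exact (continuous_apply (⟨h, hh⟩ : {g' : Ω → ℝ // g' ∈ Cb Ω})).comp h1
  have h1Cb : (fun _ : Ω => (1:ℝ)) ∈ Cb Ω := ⟨continuous_const, 1, fun x => by norm_num⟩
  have hKprob : ∀ μ ∈ closure Ps, IsProbabilityMeasure μ := by
    intro μ hμ
    have hclosed : IsClosed {ρ : Measure Ω | ∫ x, (1:ℝ) ∂ρ = 1} :=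
      isClosed_eq (hcoord _ h1Cb) continuous_const
    have hsub : Ps ⊆ {ρ : Measure Ω | ∫ x, (1:ℝ) ∂ρ = 1} := by
      intro Q hQ
      haveI := hprob Q hQ
      simp [integral_const]
    have hint : ∫ x, (1:ℝ) ∂μ = 1 := closure_minimal hsub hclosed hμ
    rw [integral_const, smul_eq_mul, mul_one] at hint
    exact ⟨(ENNReal.toReal_eq_one_iff _).1 hint⟩
  haveI hKcs : CompactSpace ↥(closure Ps) :=
    isCompact_iff_compactSpace.mp hcomp
  set e : ↥(closure Ps) → ℕ → ℝ := fun μ n => ∫ x, g n x ∂(μ.1) with he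
  have hecont : Continuous e :=
    continuous_pi fun n => (hcoord (g n) (hgCb n)).comp continuous_subtype_val
  have heinj : Function.Injective e := fun μ ν h =>
    Subtype.ext (hgsep μ.1 ν.1 (hKprob _ μ.2) (hKprob _ ν.2) fun n => congrFun h n)
  haveI : SecondCountableTopology ↥(closure Ps) :=
    (hecont.isClosedEmbedding heinj).toIsEmbedding.secondCountableTopology
  haveI : SecondCountableTopology ↥Ps :=
    (Topology.IsEmbedding.inclusion (subset_closure (s := Ps))).secondCountableTopology
  haveI : Nonempty ↥Ps := hne.to_subtype
  obtain ⟨D, hDc, hDd⟩ := TopologicalSpace.exists_countable_dense ↥Ps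
  obtain ⟨u, hu⟩ := hDc.exists_eq_range hDd.nonempty
  set P : ℕ → Measure Ω := fun n => (u n).1 with hP
  have hPmem : ∀ n, P n ∈ Ps := fun n => (u n).2
  have hprobP : ∀ n, IsProbabilityMeasure (P n) := fun n => hprob _ (hPmem n)
  have hdense : ∀ Q ∈ Ps, ∀ V : Set (Measure Ω), IsOpen V → Q ∈ V → ∃ n, P n ∈ V := by
    intro Q hQ V hV hQV
    have hmem : (⟨Q, hQ⟩ : ↥Ps) ∈ closure D := hDd _
    have hopen : IsOpen (Subtype.val ⁻¹' V : Set ↥Ps) :=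
      hV.preimage continuous_subtype_val
    rcases _root_.mem_closure_iff.1 hmem _ hopen hQV with ⟨d, hdV, hdD⟩
    rw [hu] at hdD
    obtain ⟨n, rfl⟩ := hdD
    exact ⟨n, hdV⟩
  have hsup_transfer : ∀ L : Measure Ω → ℝ≥0∞, Continuous L →
      (⨆ Q ∈ Ps, L Q) = ⨆ n, L (P n) := by
    intro L hL
    refine le_antisymm (iSup₂_le fun Q hQ => ?_) (iSup_le fun n => le_iSup₂ (f := fun Q (_ : Q ∈ Ps) => L Q) (P n) (hPmem n))
    by_contra hcon
    push_neg at hcon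
    have hV : IsOpen {μ : Measure Ω | (⨆ n, L (P n)) < L μ} := isOpen_Ioi.preimage hL
    obtain ⟨n, hn⟩ := hdense Q hQ _ hV hcon
    exact lt_irrefl _ (hn.trans_le (le_iSup (fun n' => L (P n')) n))
  have hcb_eq : ∀ (p : ℝ), 1 ≤ p → ∀ (φ : Ω → ℝ), φ ∈ Cb Ω →
      cpCb Ps p φ = ⨆ n, (∫⁻ x, (ENNReal.ofReal |φ x|) ^ p ∂(P n)) ^ (1/p) := by
    intro p hp φ hφ
    set L : Measure Ω → ℝ≥0∞ := fun μ => (ENNReal.ofReal (∫ x, |φ x| ^ p ∂μ)) ^ (1/p) with hL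
    have hLc : Continuous L :=
      (ENNReal.continuous_rpow_const.comp ENNReal.continuous_ofReal).comp
        (hcoord _ (cb_abs_rpow hφ hp))
    have hform : ∀ (Q : Measure Ω), IsProbabilityMeasure Q →
        (∫⁻ x, (ENNReal.ofReal |φ x|) ^ p ∂Q) ^ (1/p) = L Q := by
      intro Q hQ
      haveI := hQ
      rw [hL, lintegral_ofReal_abs_rpow hφ hp Q]
    calc cpCb Ps p φ = ⨆ Q ∈ Ps, L Q := by
          rw [cpCb]; exact iSup_congr fun Q => iSup_congr fun hQ => hform Q (hprob Q hQ)
      _ = ⨆ n, L (P n) := hsup_transfer L hLc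
      _ = _ := iSup_congr fun n => (hform (P n) (hprobP n)).symm
  have hcb_eq2 : ∀ (p : ℝ), 1 ≤ p → ∀ (φ : Ω → ℝ), φ ∈ Cb Ω →
      cpCb Ps p φ = cpCb (Set.range P) p φ := by
    intro p hp φ hφ
    rw [hcb_eq p hp φ hφ, cpCb, iSup_range]
  refine ⟨P, hPmem, ?_⟩
  intro p hp
  have hp0 : (0:ℝ) < p := lt_of_lt_of_le one_pos hp
  have hExtEq : cpExt Ps p = cpExt (Set.range P) p := by
    funext X
    rw [cpExt, cpExt]
    refine iInf_congr fun f => iInf_congr fun hf => ?_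
    rw [cpLsc, cpLsc]
    exact iSup_congr fun φ => iSup_congr fun hφ => hcb_eq2 p hp φ hφ.1
  refine ⟨?_, hExtEq, fun X => by rw [hExtEq]⟩
  intro X hX
  set SS := ⨆ n : ℕ, (∫⁻ x, (ENNReal.ofReal |X x|) ^ p ∂(P n)) ^ (1 / p) with hSS
  refine le_antisymm ?_ (iSup_le fun n => cpExt_lower_bound' Ps hp X (hPmem n))
  obtain ⟨fs, hfsCb, htend⟩ := hX
  refine ENNReal.le_of_forall_pos_le_add fun ε hε hStop => ?_
  have hε2 : (0:ℝ≥0∞) < (ε:ℝ≥0∞)/2 := ENNReal.half_pos (by exact_mod_cast hε.ne')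
  obtain ⟨m, hm⟩ := (htend.eventually_lt_const hε2).exists
  have hgm := hm
  rw [cpExt] at hgm
  simp only [iInf_lt_iff] at hgm
  obtain ⟨uu, huu, hcpu⟩ := hgm
  obtain ⟨hulsc, humaj⟩ := huu
  have hu0 : ∀ x, 0 ≤ uu x := fun x => (abs_nonneg _).trans (humaj x)
  have hXsplit : X = (X - fs m) + fs m := by funext x; simp
  have h1 : cpExt Ps p X ≤ cpExt Ps p (X - fs m) + cpCb Ps p (fs m) := by
    conv_lhs => rw [hXsplit]
    exact cpExt_add_le' Ps hp (X - fs m) (fs m) (hfsCb m)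
  have h2 : cpExt Ps p (X - fs m) ≤ cpLsc Ps p uu := iInf₂_le uu ⟨hulsc, humaj⟩
  set w : Ω → ℝ := fun x => max (|fs m x| - uu x) 0 with hw
  have hw0 : ∀ x, 0 ≤ w x := fun x => le_max_right _ _
  have hwmeas : Measurable w :=
    (((hfsCb m).1.abs.measurable).sub hulsc.measurable).max measurable_const
  have hwX : ∀ x, w x ≤ |X x| := by
    intro x
    refine max_le ?_ (abs_nonneg _)
    have h3 : |fs m x| - |X x| ≤ |fs m x - X x| := abs_sub_abs_le_abs_sub _ _
    have h4 : |fs m x - X x| = |(X - fs m) x| := by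
      rw [Pi.sub_apply, abs_sub_comm]
    rw [h4] at h3
    have h5 := humaj x
    linarith
  have hpoint : ∀ x, ENNReal.ofReal |fs m x| ≤ ENNReal.ofReal (uu x) + ENNReal.ofReal (w x) := by
    intro x
    rw [← ENNReal.ofReal_add (hu0 x) (hw0 x)]
    refine ENNReal.ofReal_le_ofReal ?_
    have h6 : |fs m x| - uu x ≤ w x := le_max_left _ _
    linarith
  have hbound : cpCb Ps p (fs m) ≤ cpLsc Ps p uu + SS := by
    rw [hcb_eq p hp (fs m) (hfsCb m)]
    refine iSup_le fun n => ?_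
    have hmink := ENNReal.lintegral_Lp_add_le (μ := P n)
      (hulsc.measurable.ennreal_ofReal).aemeasurable (hwmeas.ennreal_ofReal).aemeasurable hp
    calc (∫⁻ x, (ENNReal.ofReal |fs m x|) ^ p ∂(P n)) ^ (1/p)
        ≤ (∫⁻ x, (ENNReal.ofReal (uu x) + ENNReal.ofReal (w x)) ^ p ∂(P n)) ^ (1/p) :=
          ENNReal.rpow_le_rpow (lintegral_mono fun x =>
            ENNReal.rpow_le_rpow (hpoint x) hp0.le) (by positivity)
      _ ≤ (∫⁻ x, (ENNReal.ofReal (uu x)) ^ p ∂(P n)) ^ (1/p)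
          + (∫⁻ x, (ENNReal.ofReal (w x)) ^ p ∂(P n)) ^ (1/p) := hmink
      _ ≤ cpLsc Ps p uu + SS := by
          refine add_le_add (lsc_cpLsc_bound' Ps hp hulsc hu0 (hPmem n)) ?_
          refine le_trans ?_ (le_iSup (fun n' : ℕ =>
            (∫⁻ x, (ENNReal.ofReal |X x|) ^ p ∂(P n')) ^ (1 / p)) n)
          exact ENNReal.rpow_le_rpow (lintegral_mono fun x =>
            ENNReal.rpow_le_rpow (ENNReal.ofReal_le_ofReal (hwX x)) hp0.le) (by positivity)
  calc cpExt Ps p X ≤ cpExt Ps p (X - fs m) + cpCb Ps p (fs m) := h1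
    _ ≤ cpLsc Ps p uu + (cpLsc Ps p uu + SS) := add_le_add h2 hbound
    _ ≤ (ε:ℝ≥0∞)/2 + ((ε:ℝ≥0∞)/2 + SS) := add_le_add hcpu.le (add_le_add hcpu.le le_rfl)
    _ = SS + ε := by rw [← add_assoc, ENNReal.add_halves, add_comm]
end Aux
end

section
/- There exists a weakly relatively compact countable set of probability measures P = {δ_{x_n} : n ∈ ℕ} on Ω = [0,1] (with x_n ∈ (0,1) converging to 0) and a Borel set A = [0,1] ∖ {x_n : n ∈ ℕ} such that c_p(1_A) = 1 while sup_{Q∈P} Q(A)^{1/p} = 0; i.e. the identity c_p(1_A) = sup_{Q∈P} Q(A)^{1/p} fails for general Borel sets. -/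
open Filter MeasureTheory Topology
open scoped ENNReal

noncomputable def xseq : ℕ → (Set.Icc (0:ℝ) 1) := fun n =>
  ⟨1 / (n + 2), by
    constructor
    · positivity
    · rw [div_le_one (by positivity)]
      have : (0:ℝ) ≤ n := Nat.cast_nonneg n
      linarith⟩

def z0 : (Set.Icc (0:ℝ) 1) := ⟨0, by constructor <;> norm_num⟩

lemma xseq_pos (n : ℕ) : 0 < (xseq n : ℝ) := by
  simp only [xseq]; positivity

lemma xseq_lt_one (n : ℕ) : (xseq n : ℝ) < 1 := by
  simp only [xseq]
  rw [div_lt_one (by positivity)]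
  have : (0:ℝ) ≤ n := Nat.cast_nonneg n
  linarith

lemma xseq_tendsto : Filter.Tendsto (fun n => (xseq n : ℝ)) atTop (𝓝 0) := by
  have h2 := (tendsto_one_div_add_atTop_nhds_zero_nat (𝕜 := ℝ)).comp (tendsto_add_atTop_nat 1)
  convert h2 using 2 with n
  simp [xseq, Function.comp]
  ring

lemma z0_mem : z0 ∈ {y : (Set.Icc (0:ℝ) 1) | y ∉ Set.range xseq} := by
  rintro ⟨n, hn⟩
  have h := xseq_pos n
  rw [hn] at h
  simp [z0] at h

lemma cp_upper (p : ℝ) (hp : 1 ≤ p) :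
    cpExt (Set.range fun n => Measure.dirac (xseq n)) p
      (Set.indicator {y : (Set.Icc (0:ℝ) 1) | y ∉ Set.range xseq} fun _ => (1:ℝ)) ≤ 1 := by
  have hp0 : (0:ℝ) < p := by linarith
  have hmem : (fun _ : (Set.Icc (0:ℝ) 1) => (1:ℝ)) ∈
      {f : (Set.Icc (0:ℝ) 1) → ℝ | LowerSemicontinuous f ∧
        ∀ x, |Set.indicator {y : (Set.Icc (0:ℝ) 1) | y ∉ Set.range xseq}
          (fun _ => (1:ℝ)) x| ≤ f x} := by
    refine ⟨lowerSemicontinuous_const, fun y => ?_⟩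
    by_cases hy : y ∈ {y : (Set.Icc (0:ℝ) 1) | y ∉ Set.range xseq}
    · rw [Set.indicator_of_mem hy]; norm_num
    · rw [Set.indicator_of_notMem hy]; norm_num
  refine le_trans (iInf₂_le _ hmem) ?_
  refine iSup₂_le fun φ hφ => ?_
  refine iSup₂_le fun Q hQ => ?_
  obtain ⟨n, rfl⟩ := hQ
  rw [lintegral_dirac]
  have h1 : ENNReal.ofReal |φ (xseq n)| ≤ 1 := by
    rw [← ENNReal.ofReal_one]
    refine ENNReal.ofReal_le_ofReal (abs_le.2 ⟨?_, (hφ.2 (xseq n)).2⟩)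
    linarith [(hφ.2 (xseq n)).1]
  exact ENNReal.rpow_le_one (ENNReal.rpow_le_one h1 hp0.le) (by positivity)

lemma cp_lower (p : ℝ) (hp : 1 ≤ p) :
    (1:ℝ≥0∞) ≤ cpExt (Set.range fun n => Measure.dirac (xseq n)) p
      (Set.indicator {y : (Set.Icc (0:ℝ) 1) | y ∉ Set.range xseq} fun _ => (1:ℝ)) := by
  have hp0 : (0:ℝ) < p := by linarith
  refine le_iInf₂ fun f hf => ?_
  obtain ⟨hflsc, hfge⟩ := hf
  apply ENNReal.le_of_forall_pos_le_add
  intro ε hε hlt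
  rcases le_or_gt (1:ℝ≥0∞) (ε:ℝ≥0∞) with h1 | h1
  · exact le_trans h1 le_add_self
  have hεR : (0:ℝ) < (ε:ℝ) := hε
  have hε1 : (ε:ℝ) < 1 := by
    have : ε < (1:NNReal) := by exact_mod_cast h1
    exact_mod_cast this
  set r : ℝ := 1 - ε with hr
  have hr0 : 0 < r := by rw [hr]; linarith
  have hr1 : r < 1 := by rw [hr]; linarith
  have hfnonneg : ∀ y, 0 ≤ f y := fun y => le_trans (abs_nonneg _) (hfge y)
  have hf0 : 1 ≤ f z0 := by
    have h := hfge z0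
    rwa [Set.indicator_of_mem z0_mem, abs_one] at h
  have hev : ∀ᶠ y in 𝓝 z0, r < f y := hflsc _ r (lt_of_lt_of_le hr1 hf0)
  obtain ⟨δ, hδ, hball⟩ := Metric.eventually_nhds_iff_ball.mp hev
  obtain ⟨N, hN⟩ := (xseq_tendsto.eventually (gt_mem_nhds hδ)).exists
  set δ' : ℝ := δ - (xseq N : ℝ) with hδ'def
  have hδ' : 0 < δ' := by rw [hδ'def, sub_pos]; exact hN
  set φ : (Set.Icc (0:ℝ) 1) → ℝ := fun y => r * max 0 (1 - dist y (xseq N) / δ') with hφdef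
  have hφcont : Continuous φ := by
    apply continuous_const.mul
    exact continuous_const.max
      (continuous_const.sub ((continuous_id.dist continuous_const).div_const δ'))
  have hφnonneg : ∀ y, 0 ≤ φ y := fun y => mul_nonneg hr0.le (le_max_left 0 _)
  have hφler : ∀ y, φ y ≤ r := by
    intro y
    have hle1 : max 0 (1 - dist y (xseq N) / δ') ≤ 1 :=
      max_le zero_le_one (by
        have : 0 ≤ dist y (xseq N) / δ' := div_nonneg dist_nonneg hδ'.le
        linarith)
    calc φ y ≤ r * 1 := mul_le_mul_of_nonneg_left hle1 hr0.le
      _ = r := mul_one r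
  have hφbd : ∀ y, |φ y| ≤ r := fun y => abs_le.2 ⟨by linarith [hφnonneg y], hφler y⟩
  have hφle : ∀ y, φ y ≤ f y := by
    intro y
    by_cases h : dist y (xseq N) < δ'
    · have hdN : dist (xseq N) z0 = (xseq N : ℝ) := by
        rw [Subtype.dist_eq, Real.dist_eq]
        simp [z0, abs_of_pos (xseq_pos N)]
      have hyball : y ∈ Metric.ball z0 δ := by
        rw [Metric.mem_ball]
        calc dist y z0 ≤ dist y (xseq N) + dist (xseq N) z0 := dist_triangle _ _ _
          _ < δ' + (xseq N : ℝ) := by rw [hdN]; linarith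
          _ = δ := by rw [hδ'def]; ring
      exact le_trans (hφler y) (hball y hyball).le
    · have h0 : 1 - dist y (xseq N) / δ' ≤ 0 := by
        rw [sub_nonpos, le_div_iff₀ hδ']
        linarith [not_lt.mp h]
      have hφ0 : φ y = 0 := by
        rw [hφdef]
        simp only
        rw [max_eq_left h0, mul_zero]
      rw [hφ0]
      exact hfnonneg y
  have hφN : φ (xseq N) = r := by
    rw [hφdef]
    simp [dist_self]
  have key : ENNReal.ofReal r ≤
      cpLsc (Set.range fun n => Measure.dirac (xseq n)) p f := by
    have h1 : ENNReal.ofReal r ≤ cpCb (Set.range fun n => Measure.dirac (xseq n)) p φ := by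
      refine le_trans ?_
        (le_iSup₂ (f := fun Q (_ : Q ∈ Set.range fun n => Measure.dirac (xseq n)) =>
          (∫⁻ z, (ENNReal.ofReal |φ z|) ^ p ∂Q) ^ (1/p))
          (Measure.dirac (xseq N)) ⟨N, rfl⟩)
      rw [lintegral_dirac, hφN, abs_of_pos hr0, ← ENNReal.rpow_mul,
        mul_one_div_cancel hp0.ne', ENNReal.rpow_one]
    refine le_trans h1 ?_
    exact le_iSup₂ (f := fun φ (_ : φ ∈ {φ : (Set.Icc (0:ℝ) 1) → ℝ |
        φ ∈ Cb (Set.Icc (0:ℝ) 1) ∧ ∀ x, 0 ≤ φ x ∧ φ x ≤ f x}) =>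
        cpCb (Set.range fun n => Measure.dirac (xseq n)) p φ)
      φ ⟨⟨hφcont, r, hφbd⟩, fun y => ⟨hφnonneg y, hφle y⟩⟩
  calc (1:ℝ≥0∞) = ENNReal.ofReal (r + ε) := by rw [hr]; simp
    _ ≤ ENNReal.ofReal r + ENNReal.ofReal ε := ENNReal.ofReal_add_le
    _ = ENNReal.ofReal r + ε := by rw [ENNReal.ofReal_coe_nnreal]
    _ ≤ cpLsc (Set.range fun n => Measure.dirac (xseq n)) p f + ε :=
        add_le_add_left key ε

/-- On `Ω = [0,1]` there is a weakly relatively compact countable set of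
probability measures `P = {δ_{x n}}` (with `x n ∈ (0,1)`, `x n → 0`) and a Borel set
`A = [0,1] ∖ {x n}` such that `c_p(1_A) = 1` while `sup_{Q ∈ P} Q(A)^{1/p} = 0`:
the identity `c_p(1_A) = sup_Q Q(A)^{1/p}` fails for general Borel sets. -/
theorem stmt17 :
    ∃ x : ℕ → (Set.Icc (0:ℝ) 1),
      (∀ n, 0 < (x n : ℝ) ∧ (x n : ℝ) < 1) ∧
      Filter.Tendsto (fun n => (x n : ℝ)) atTop (𝓝 0) ∧
      @IsCompact _ (WeakTop (Set.Icc (0:ℝ) 1))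
        (@closure _ (WeakTop (Set.Icc (0:ℝ) 1))
          (Set.range fun n => Measure.dirac (x n))) ∧
      MeasurableSet {y : (Set.Icc (0:ℝ) 1) | y ∉ Set.range x} ∧
      ∀ p : ℝ, 1 ≤ p →
        cpExt (Set.range fun n => Measure.dirac (x n)) p
          (Set.indicator {y : (Set.Icc (0:ℝ) 1) | y ∉ Set.range x} fun _ => (1:ℝ))
            = 1 ∧
        (⨆ n : ℕ,
          (Measure.dirac (x n) {y : (Set.Icc (0:ℝ) 1) | y ∉ Set.range x}) ^ (1 / p))
            = 0 := by
  classical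
  set Ω := Set.Icc (0:ℝ) 1
  refine ⟨xseq, fun n => ⟨xseq_pos n, xseq_lt_one n⟩, xseq_tendsto, ?_, ?_, ?_⟩
  · -- weak relative compactness
    letI : TopologicalSpace (Measure Ω) := WeakTop Ω
    set Φ : Measure Ω → ({g : Ω → ℝ // g ∈ Cb Ω} → ℝ) :=
      fun μ => fun f => ∫ z, f.1 z ∂μ with hΦ
    have hind : Topology.IsInducing Φ := ⟨rfl⟩
    set ψ : Ω → ({g : Ω → ℝ // g ∈ Cb Ω} → ℝ) := fun y => fun f => f.1 y with hψ
    have hψc : Continuous ψ := continuous_pi fun f => f.2.1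
    have hψK : IsCompact (Set.range ψ) := isCompact_range hψc
    have hdir : ∀ y : Ω, Φ (Measure.dirac y) = ψ y := by
      intro y
      funext f
      exact integral_dirac f.1 y
    have hsub : Set.range ψ ⊆ Set.range Φ := by
      rintro _ ⟨y, rfl⟩
      exact ⟨Measure.dirac y, hdir y⟩
    have hKc : IsCompact (Φ ⁻¹' Set.range ψ) := by
      rw [hind.isCompact_iff, Set.image_preimage_eq_inter_range,
        Set.inter_eq_self_of_subset_left hsub]
      exact hψK
    have hcl : IsClosed (Φ ⁻¹' Set.range ψ) := hψK.isClosed.preimage hind.continuous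
    refine hKc.of_isClosed_subset isClosed_closure (closure_minimal ?_ hcl)
    rintro _ ⟨n, rfl⟩
    exact ⟨xseq n, (hdir (xseq n)).symm⟩
  · -- measurability of A
    have h : {y : Ω | y ∉ Set.range xseq} = (Set.range xseq)ᶜ := rfl
    rw [h]
    exact (Set.countable_range xseq).measurableSet.compl
  · intro p hp
    have hp0 : (0:ℝ) < p := by linarith
    refine ⟨le_antisymm (cp_upper p hp) (cp_lower p hp), ?_⟩
    have hd : ∀ n, Measure.dirac (xseq n) {y : Ω | y ∉ Set.range xseq} = 0 := by
      intro n
      rw [Measure.dirac_apply]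
      have hmem : xseq n ∉ {y : Ω | y ∉ Set.range xseq} := fun h => h ⟨n, rfl⟩
      rw [Set.indicator_of_notMem hmem]
    simp only [hd, ENNReal.zero_rpow_of_pos (by positivity : (0:ℝ) < 1/p), iSup_const]
end

section
/- Let {Q_n : n ∈ ℕ} be probability measures with c_p(X) = sup_n E_{Q_n}(|X|^p)^{1/p} for all X ∈ L^1(c_p), and let α_n > 0 with ∑ α_n = 1. Then P = ∑_n α_n Q_n is a probability measure in the canonical c_p-class: for every X ∈ L^1(c_p) with X ≥ 0, E_P(X) = 0 if and only if X = 0 in L^1(c_p). -/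
open Filter MeasureTheory Topology
open scoped ENNReal

/-- `X ≥ 0` in `L^1(c)` for an `ℝ≥0∞`-valued capacity: `X` is approximable in the
`c`-seminorm by non-negative bounded continuous functions. -/
def NonnegL1e {Ω : Type} [TopologicalSpace Ω] (c : (Ω → ℝ) → ℝ≥0∞) (g : Ω → ℝ) : Prop :=
  ∃ f : ℕ → Ω → ℝ, (∀ n, f n ∈ Cb Ω ∧ ∀ x, 0 ≤ f n x) ∧
    Tendsto (fun n => c (g - f n)) atTop (𝓝 0)

lemma cpExt_zero' {Ω : Type} [TopologicalSpace Ω] [MeasurableSpace Ω]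
    (Ps : Set (Measure Ω)) {p : ℝ} (hp : 0 < p) : cpExt Ps p (0 : Ω → ℝ) = 0 := by
  refine le_antisymm ?_ (zero_le)
  have h1 : cpExt Ps p (0 : Ω → ℝ) ≤ cpLsc Ps p (fun _ => (0 : ℝ)) := by
    refine iInf₂_le (fun _ => (0:ℝ)) ⟨lowerSemicontinuous_const, fun x => by simp⟩
  refine h1.trans ?_
  refine iSup₂_le fun φ hφ => ?_
  have hφ0 : ∀ x, φ x = 0 := fun x => le_antisymm (hφ.2 x).2 (hφ.2 x).1
  refine iSup₂_le fun Q hQ => ?_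
  have h2 : ∀ x, (ENNReal.ofReal |φ x|) ^ p = 0 := fun x => by
    simp [hφ0 x, ENNReal.zero_rpow_of_pos hp]
  rw [lintegral_congr h2, lintegral_zero, ENNReal.zero_rpow_of_pos (one_div_pos.mpr hp)]

lemma memL1e_of_cb {Ω : Type} [TopologicalSpace Ω] [MeasurableSpace Ω]
    (Ps : Set (Measure Ω)) {p : ℝ} (hp : 0 < p) {g : Ω → ℝ} (hg : g ∈ Cb Ω) :
    MemL1e (cpExt Ps p) g := by
  refine ⟨fun _ => g, fun _ => hg, ?_⟩
  have h : (fun _ : ℕ => cpExt Ps p (g - g)) = fun _ => (0 : ℝ≥0∞) := by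
    funext n; rw [sub_self]; exact cpExt_zero' Ps hp
  rw [h]; exact tendsto_const_nhds

/-- Key approximation lemma: the `L^p(Q n)` norm of a non-negative lower semicontinuous
function is bounded by `cpLsc`. -/
lemma lsc_bound {Ω : Type} [TopologicalSpace Ω] [PolishSpace Ω] [Nonempty Ω]
    [MeasurableSpace Ω] [BorelSpace Ω]
    (Ps : Set (Measure Ω)) {p : ℝ} (hp : 1 ≤ p)
    (Q : ℕ → Measure Ω)
    (hQrep : ∀ X : Ω → ℝ, MemL1e (cpExt Ps p) X →
      cpExt Ps p X = ⨆ n : ℕ, (∫⁻ x, (ENNReal.ofReal |X x|) ^ p ∂(Q n)) ^ (1 / p))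
    (n : ℕ) {F : Ω → ℝ} (hF : LowerSemicontinuous F) (hF0 : ∀ x, 0 ≤ F x) :
    (∫⁻ x, (ENNReal.ofReal (F x)) ^ p ∂(Q n)) ^ (1 / p) ≤ cpLsc Ps p F := by
  have hp0 : (0:ℝ) < p := lt_of_lt_of_le one_pos hp
  letI := TopologicalSpace.upgradeIsCompletelyMetrizable Ω
  set g : ℕ → Ω → ℝ := fun j x => ⨅ y, (min (F y) j + j * dist x y) with hgdef
  have hbdd : ∀ (j : ℕ) (x : Ω), BddBelow (Set.range fun y => min (F y) (j:ℝ) + (j:ℝ) * dist x y) := by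
    intro j x
    refine ⟨0, ?_⟩; rintro r ⟨y, rfl⟩
    exact add_nonneg (le_min (hF0 y) (Nat.cast_nonneg j))
      (mul_nonneg (Nat.cast_nonneg j) dist_nonneg)
  have hg0 : ∀ j x, 0 ≤ g j x := fun j x => le_ciInf fun y =>
    add_nonneg (le_min (hF0 y) (Nat.cast_nonneg j)) (mul_nonneg (Nat.cast_nonneg j) dist_nonneg)
  have hgle : ∀ j x, g j x ≤ F x := by
    intro j x
    have h1 := ciInf_le (hbdd j x) x
    rw [dist_self, mul_zero, add_zero] at h1
    exact h1.trans (min_le_left _ _)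
  have hgbd : ∀ j x, g j x ≤ (j:ℝ) := by
    intro j x
    have h1 := ciInf_le (hbdd j x) x
    rw [dist_self, mul_zero, add_zero] at h1
    exact h1.trans (min_le_right _ _)
  have hlip : ∀ j x z, g j x ≤ g j z + (j:ℝ) * dist x z := by
    intro j x z
    rw [← sub_le_iff_le_add]
    refine le_ciInf fun y => ?_
    rw [sub_le_iff_le_add]
    calc g j x ≤ min (F y) (j:ℝ) + (j:ℝ) * dist x y := ciInf_le (hbdd j x) y
      _ ≤ min (F y) (j:ℝ) + (j:ℝ) * (dist z y + dist x z) := by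
          have hd : dist x y ≤ dist z y + dist x z := by
            calc dist x y ≤ dist x z + dist z y := dist_triangle x z y
              _ = dist z y + dist x z := by ring
          have := mul_le_mul_of_nonneg_left hd (Nat.cast_nonneg (α := ℝ) j)
          linarith
      _ = (min (F y) (j:ℝ) + (j:ℝ) * dist z y) + (j:ℝ) * dist x z := by ring
  have hcont : ∀ j, Continuous (g j) := by
    intro j
    refine (LipschitzWith.of_dist_le_mul (K := (j : NNReal)) (f := g j) fun x z => ?_).continuous
    have hc : (((j : NNReal)) : ℝ) = (j:ℝ) := by simp
    rw [hc, Real.dist_eq, abs_sub_le_iff]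
    constructor
    · linarith [hlip j x z]
    · have h1 := hlip j z x
      rw [dist_comm z x] at h1
      linarith
  have hmono : ∀ x, Monotone fun j => g j x := by
    intro x
    refine monotone_nat_of_le_succ fun j => ?_
    refine le_ciInf fun y => ?_
    have h1 : min (F y) (j:ℝ) ≤ min (F y) ((j:ℝ)+1) := min_le_min le_rfl (by linarith)
    have h2 : (j:ℝ) * dist x y ≤ ((j:ℝ)+1) * dist x y :=
      mul_le_mul_of_nonneg_right (by linarith) dist_nonneg
    have h3 := ciInf_le (hbdd j x) y
    have h4 : ((j+1:ℕ):ℝ) = (j:ℝ) + 1 := by push_cast; ring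
    rw [h4]
    linarith
  have hsup : ∀ x, (⨆ j, ENNReal.ofReal (g j x)) = ENNReal.ofReal (F x) := by
    intro x
    refine le_antisymm (iSup_le fun j => ENNReal.ofReal_le_ofReal (hgle j x)) ?_
    refine le_of_forall_lt_imp_le_of_dense fun c hc => ?_
    have hcne : c ≠ ⊤ := (hc.trans ENNReal.ofReal_lt_top).ne
    have hr : c.toReal < F x := (ENNReal.lt_ofReal_iff_toReal_lt hcne).mp hc
    set r := c.toReal with hrdef
    have hr0 : (0:ℝ) ≤ r := ENNReal.toReal_nonneg
    obtain ⟨δ, hδ, hball⟩ : ∃ δ : ℝ, 0 < δ ∧ ∀ y : Ω, dist y x < δ → r < F y := by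
      have h1 := hF x r hr
      rcases Metric.eventually_nhds_iff_ball.mp h1 with ⟨δ, hδ, h⟩
      exact ⟨δ, hδ, fun y hy => h y (Metric.mem_ball.mpr hy)⟩
    obtain ⟨j, hj⟩ := exists_nat_ge (max r (r / δ))
    have hjr : r ≤ (j:ℝ) := (le_max_left _ _).trans hj
    have hjd : r / δ ≤ (j:ℝ) := (le_max_right _ _).trans hj
    have hkey : r ≤ g j x := by
      refine le_ciInf fun y => ?_
      rcases lt_or_ge (dist y x) δ with h | h
      · have h1 : r ≤ min (F y) (j:ℝ) := le_min (hball y h).le hjr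
        exact h1.trans (le_add_of_nonneg_right (mul_nonneg (Nat.cast_nonneg j) dist_nonneg))
      · have h1 : r ≤ (j:ℝ) * dist x y := by
          have hxy : δ ≤ dist x y := by rwa [dist_comm]
          calc r = (r/δ) * δ := (div_mul_cancel₀ r hδ.ne').symm
            _ ≤ (j:ℝ) * dist x y := mul_le_mul hjd hxy hδ.le (Nat.cast_nonneg j)
        exact h1.trans (le_add_of_nonneg_left (le_min (hF0 y) (Nat.cast_nonneg j)))
    calc c = ENNReal.ofReal r := (ENNReal.ofReal_toReal hcne).symm
      _ ≤ ENNReal.ofReal (g j x) := ENNReal.ofReal_le_ofReal hkey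
      _ ≤ ⨆ j, ENNReal.ofReal (g j x) := le_iSup (fun j => ENNReal.ofReal (g j x)) j
  have hmeas : ∀ j, Measurable fun x => (ENNReal.ofReal (g j x)) ^ p := fun j =>
    ENNReal.continuous_rpow_const.measurable.comp ((hcont j).measurable.ennreal_ofReal)
  have hmono2 : Monotone fun j => fun x => (ENNReal.ofReal (g j x)) ^ p := by
    intro j k hjk x
    exact ENNReal.rpow_le_rpow (ENNReal.ofReal_le_ofReal (hmono x hjk)) hp0.le
  have hptw : ∀ x, (⨆ j, (ENNReal.ofReal (g j x)) ^ p) = (ENNReal.ofReal (F x)) ^ p := by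
    intro x
    have h1 : Monotone fun j => ENNReal.ofReal (g j x) := fun j k h =>
      ENNReal.ofReal_le_ofReal (hmono x h)
    have h2 := tendsto_atTop_iSup h1
    rw [hsup x] at h2
    have h3 : Tendsto (fun j => (ENNReal.ofReal (g j x))^p) atTop
        (𝓝 ((ENNReal.ofReal (F x))^p)) :=
      (ENNReal.continuous_rpow_const.tendsto _).comp h2
    have h4 := tendsto_atTop_iSup (fun j k h =>
      ENNReal.rpow_le_rpow (ENNReal.ofReal_le_ofReal (hmono x h)) hp0.le)
    exact tendsto_nhds_unique h4 h3
  have hlin : ∫⁻ x, (ENNReal.ofReal (F x)) ^ p ∂(Q n)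
      = ⨆ j, ∫⁻ x, (ENNReal.ofReal (g j x)) ^ p ∂(Q n) := by
    rw [← lintegral_iSup hmeas hmono2]
    exact lintegral_congr fun x => (hptw x).symm
  have hjle : ∀ j, (∫⁻ x, (ENNReal.ofReal (g j x)) ^ p ∂(Q n)) ^ (1/p) ≤ cpLsc Ps p F := by
    intro j
    have hCb : g j ∈ Cb Ω :=
      ⟨hcont j, ⟨j, fun x => abs_le.mpr ⟨by linarith [hg0 j x], hgbd j x⟩⟩⟩
    have habs : ∀ x, |g j x| = g j x := fun x => abs_of_nonneg (hg0 j x)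
    have h1 : (∫⁻ x, (ENNReal.ofReal |g j x|) ^ p ∂(Q n)) ^ (1/p) ≤ cpExt Ps p (g j) := by
      rw [hQrep (g j) (memL1e_of_cb Ps hp0 hCb)]
      exact le_iSup (fun m => (∫⁻ x, (ENNReal.ofReal |g j x|) ^ p ∂(Q m)) ^ (1/p)) n
    have h2 : cpExt Ps p (g j) ≤ cpLsc Ps p F := by
      refine iInf₂_le F ⟨hF, fun x => ?_⟩
      rw [habs x]; exact hgle j x
    simp_rw [habs] at h1
    exact h1.trans h2
  have hfin : ∫⁻ x, (ENNReal.ofReal (F x)) ^ p ∂(Q n) ≤ (cpLsc Ps p F) ^ p := by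
    rw [hlin]
    refine iSup_le fun j => ?_
    have h5 := ENNReal.rpow_le_rpow (hjle j) hp0.le
    rwa [← ENNReal.rpow_mul, one_div, inv_mul_cancel₀ hp0.ne', ENNReal.rpow_one] at h5
  have h6 := ENNReal.rpow_le_rpow hfin (one_div_pos.mpr hp0).le
  rwa [← ENNReal.rpow_mul, mul_one_div_cancel hp0.ne', ENNReal.rpow_one] at h6

/-- If `{Q n}` are probability measures with
`c_p(X) = sup_n E_{Q n}(|X|^p)^{1/p}` for all `X ∈ L^1(c_p)` and `α n > 0` with
`∑ α n = 1`, then `P = ∑ α n • Q n` is a probability measure in the canonical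
`c_p`-class: for every `X ≥ 0` in `L^1(c_p)`, `E_P(X) = 0` iff `X = 0` in `L^1(c_p)`. -/
theorem stmt18 {Ω : Type} [TopologicalSpace Ω] [PolishSpace Ω]
    [MeasurableSpace Ω] [BorelSpace Ω]
    (Ps : Set (Measure Ω)) (hprob : ∀ Q ∈ Ps, IsProbabilityMeasure Q)
    (hcomp : @IsCompact _ (WeakTop Ω) (@closure _ (WeakTop Ω) Ps))
    (p : ℝ) (hp : 1 ≤ p)
    (Q : ℕ → Measure Ω) (hQprob : ∀ n, IsProbabilityMeasure (Q n))
    (hQrep : ∀ X : Ω → ℝ, MemL1e (cpExt Ps p) X →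
      cpExt Ps p X = ⨆ n : ℕ, (∫⁻ x, (ENNReal.ofReal |X x|) ^ p ∂(Q n)) ^ (1 / p))
    (α : ℕ → ℝ≥0∞) (hα : ∀ n, 0 < α n) (hsum : (∑' n, α n) = 1) :
    IsProbabilityMeasure (Measure.sum fun n => α n • Q n) ∧
    ∀ X : Ω → ℝ, MemL1e (cpExt Ps p) X → NonnegL1e (cpExt Ps p) X →
      ((∫⁻ x, ENNReal.ofReal (X x) ∂(Measure.sum fun n => α n • Q n)) = 0 ↔
        cpExt Ps p X = 0) := by
  have hp0 : (0:ℝ) < p := lt_of_lt_of_le one_pos hp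
  haveI hΩ : Nonempty Ω := by
    by_contra h
    rw [not_nonempty_iff] at h
    have h1 := (hQprob 0).measure_univ
    have h2 : (Q 0) Set.univ = 0 := by
      rw [Set.univ_eq_empty_iff.mpr h]; exact measure_empty
    rw [h2] at h1
    exact zero_ne_one h1
  constructor
  · refine ⟨?_⟩
    rw [Measure.sum_apply _ MeasurableSet.univ]
    calc (∑' n, (α n • Q n) Set.univ) = ∑' n, α n := by
          refine tsum_congr fun n => ?_
          rw [Measure.smul_apply, smul_eq_mul, (hQprob n).measure_univ, mul_one]
      _ = 1 := hsum
  · intro X hX hXnn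
    obtain ⟨f, hfprop, hftend⟩ := hXnn
    have hsumP : ∫⁻ x, ENNReal.ofReal (X x) ∂(Measure.sum fun n => α n • Q n)
        = ∑' n, α n * ∫⁻ x, ENNReal.ofReal (X x) ∂(Q n) := by
      rw [lintegral_sum_measure]
      exact tsum_congr fun n => lintegral_smul_measure _ _
    constructor
    · intro h0
      have hQn : ∀ n, ∫⁻ x, ENNReal.ofReal (X x) ∂(Q n) = 0 := by
        intro n
        rw [hsumP] at h0
        have h1 := ENNReal.tsum_eq_zero.mp h0 n
        rcases mul_eq_zero.mp h1 with h | h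
        · exact absurd h (hα n).ne'
        · exact h
      rw [hQrep X hX, ENNReal.iSup_eq_zero]
      intro n
      have key : ∀ ε : NNReal, 0 < ε →
          (∫⁻ x, (ENNReal.ofReal |X x|) ^ p ∂(Q n)) ^ (1/p) ≤ 2 * (ε : ℝ≥0∞) := by
        intro ε hε
        set δ : ℝ≥0∞ := (ε : ℝ≥0∞) with hδdef
        have hδ0 : (0:ℝ≥0∞) < δ := ENNReal.coe_pos.mpr hε
        obtain ⟨k, hk⟩ := (hftend.eventually_lt_const hδ0).exists
        have hklt : cpExt Ps p (X - f k) < δ := hk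
        unfold cpExt at hklt
        obtain ⟨F, hF⟩ := iInf_lt_iff.mp hklt
        obtain ⟨hFS, hFlt⟩ := iInf_lt_iff.mp hF
        obtain ⟨hFlsc, hFmaj⟩ := hFS
        have hFmaj' : ∀ x, |X x - f k x| ≤ F x := by
          intro x; have h2 := hFmaj x; rwa [Pi.sub_apply] at h2
        have hF0 : ∀ x, 0 ≤ F x := fun x => (abs_nonneg _).trans (hFmaj' x)
        have hfk0 : ∀ x, 0 ≤ f k x := (hfprop k).2
        have hfkCb := (hfprop k).1
        obtain ⟨M, hM⟩ := hfkCb.2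
        have hnF : (∫⁻ x, (ENNReal.ofReal (F x)) ^ p ∂(Q n)) ^ (1/p) ≤ δ :=
          (lsc_bound Ps hp Q hQrep n hFlsc hF0).trans hFlt.le
        set Fe : Ω → ℝ≥0∞ := fun x => ENNReal.ofReal (F x) with hFe
        set fke : Ω → ℝ≥0∞ := fun x => ENNReal.ofReal (f k x) with hfke
        have hFemeas : Measurable Fe := hFlsc.measurable.ennreal_ofReal
        have hfkemeas : Measurable fke := hfkCb.1.measurable.ennreal_ofReal
        set D : Ω → ℝ≥0∞ := fun x => fke x - Fe x with hDdef
        have hDmeas : Measurable D := hfkemeas.sub hFemeas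
        have hDX : ∀ x, D x ≤ ENNReal.ofReal (X x) := by
          intro x
          refine tsub_le_iff_right.mpr ?_
          calc fke x = ENNReal.ofReal (f k x) := rfl
            _ ≤ ENNReal.ofReal (X x + F x) := by
                refine ENNReal.ofReal_le_ofReal ?_
                have h2 := hFmaj' x
                have h3 : f k x - X x ≤ |X x - f k x| := by
                  rw [abs_sub_comm]; exact le_abs_self _
                linarith
            _ ≤ ENNReal.ofReal (X x) + ENNReal.ofReal (F x) := ENNReal.ofReal_add_le
        have hDint : ∫⁻ x, D x ∂(Q n) = 0 :=
          le_antisymm ((lintegral_mono hDX).trans (hQn n).le) (zero_le)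
        set C : ℝ≥0∞ := ENNReal.ofReal M + 1 with hCdef
        have hCt : C ≠ ⊤ := by
          rw [hCdef]
          exact ENNReal.add_ne_top.mpr ⟨ENNReal.ofReal_ne_top, ENNReal.one_ne_top⟩
        have hDle : ∀ x, D x ≤ C := by
          intro x
          calc D x ≤ fke x := tsub_le_self
            _ ≤ ENNReal.ofReal M := ENNReal.ofReal_le_ofReal ((le_abs_self _).trans (hM x))
            _ ≤ C := le_self_add
        have hDp : ∫⁻ x, (D x) ^ p ∂(Q n) = 0 := by
          have hpt : ∀ x, (D x) ^ p ≤ C ^ (p-1) * D x := by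
            intro x
            rcases eq_or_ne (D x) 0 with h | h
            · rw [h, ENNReal.zero_rpow_of_pos hp0]; exact zero_le
            · have hDt : D x ≠ ⊤ := ne_top_of_le_ne_top hCt (hDle x)
              have heq : (D x) ^ (p-1) * D x = (D x) ^ p := by
                have h5 := ENNReal.rpow_add (x := D x) (p-1) 1 h hDt
                rw [ENNReal.rpow_one] at h5
                rw [← h5]; norm_num
              rw [← heq]
              exact mul_le_mul_left (ENNReal.rpow_le_rpow (hDle x) (by linarith)) _
          have h1 := lintegral_mono (μ := Q n) hpt
          rw [lintegral_const_mul' _ _ (ENNReal.rpow_ne_top_of_nonneg (by linarith) hCt),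
            hDint, mul_zero] at h1
          exact le_antisymm h1 (zero_le)
        have hnfk : (∫⁻ x, (fke x) ^ p ∂(Q n)) ^ (1/p) ≤ δ := by
          have h1 : (∫⁻ x, (fke x) ^ p ∂(Q n)) ^ (1/p)
              ≤ (∫⁻ x, ((D + Fe) x) ^ p ∂(Q n)) ^ (1/p) := by
            refine ENNReal.rpow_le_rpow (lintegral_mono fun x => ?_) (one_div_pos.mpr hp0).le
            exact ENNReal.rpow_le_rpow (le_tsub_add : fke x ≤ fke x - Fe x + Fe x) hp0.le
          have h2 := ENNReal.lintegral_Lp_add_le (μ := Q n)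
            hDmeas.aemeasurable hFemeas.aemeasurable hp
          have h3 : (∫⁻ x, (D x) ^ p ∂(Q n)) ^ (1/p) = 0 := by
            rw [hDp]; exact ENNReal.zero_rpow_of_pos (one_div_pos.mpr hp0)
          calc (∫⁻ x, (fke x) ^ p ∂(Q n)) ^ (1/p)
              ≤ (∫⁻ x, ((D + Fe) x) ^ p ∂(Q n)) ^ (1/p) := h1
            _ ≤ (∫⁻ x, (D x)^p ∂(Q n))^(1/p) + (∫⁻ x, (Fe x)^p ∂(Q n))^(1/p) := h2
            _ ≤ 0 + δ := by rw [h3]; exact add_le_add le_rfl hnF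
            _ = δ := zero_add δ
        have hXptw : ∀ x, ENNReal.ofReal |X x| ≤ (Fe + fke) x := by
          intro x
          have hr : |X x| ≤ F x + f k x := by
            have h1 : |X x| - |f k x| ≤ |X x - f k x| := abs_sub_abs_le_abs_sub _ _
            have h2 := hFmaj' x
            have h3 : |f k x| = f k x := abs_of_nonneg (hfk0 x)
            linarith
          calc ENNReal.ofReal |X x| ≤ ENNReal.ofReal (F x + f k x) :=
                ENNReal.ofReal_le_ofReal hr
            _ ≤ Fe x + fke x := ENNReal.ofReal_add_le
        have hfinal : (∫⁻ x, (ENNReal.ofReal |X x|) ^ p ∂(Q n)) ^ (1/p)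
            ≤ (∫⁻ x, ((Fe + fke) x) ^ p ∂(Q n)) ^ (1/p) :=
          ENNReal.rpow_le_rpow
            (lintegral_mono fun x => ENNReal.rpow_le_rpow (hXptw x) hp0.le)
            (one_div_pos.mpr hp0).le
        have h4 := ENNReal.lintegral_Lp_add_le (μ := Q n)
          hFemeas.aemeasurable hfkemeas.aemeasurable hp
        calc (∫⁻ x, (ENNReal.ofReal |X x|) ^ p ∂(Q n)) ^ (1/p)
            ≤ (∫⁻ x, ((Fe + fke) x) ^ p ∂(Q n)) ^ (1/p) := hfinal
          _ ≤ (∫⁻ x, (Fe x)^p ∂(Q n))^(1/p) + (∫⁻ x, (fke x)^p ∂(Q n))^(1/p) := h4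
          _ ≤ δ + δ := add_le_add hnF hnfk
          _ = 2 * δ := (two_mul δ).symm
      refine le_antisymm ?_ (zero_le)
      refine ENNReal.le_of_forall_pos_le_add fun ε hε _ => ?_
      rw [zero_add]
      have h5 := key (ε/2) (by positivity)
      have h6 : 2 * ((ε/2 : NNReal) : ℝ≥0∞) = (ε : ℝ≥0∞) := by
        rw [ENNReal.coe_div (by norm_num : (2:NNReal) ≠ 0)]
        have h7 : ((2:NNReal) : ℝ≥0∞) = 2 := by norm_num
        rw [h7, ENNReal.mul_div_cancel (by norm_num : (2:ℝ≥0∞) ≠ 0)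
          (by norm_num : (2:ℝ≥0∞) ≠ ⊤)]
      rw [h6] at h5
      exact h5
    · intro hc
      have hTn : ∀ n, ∫⁻ x, (ENNReal.ofReal |X x|) ^ p ∂(Q n) = 0 := by
        intro n
        rw [hQrep X hX] at hc
        have h2 := ENNReal.iSup_eq_zero.mp hc n
        rcases ENNReal.rpow_eq_zero_iff.mp h2 with ⟨h3, _⟩ | ⟨h3, h4⟩
        · exact h3
        · exact absurd h4 (by simp [not_lt]; positivity)
      have hQn0 : ∀ n, ∫⁻ x, ENNReal.ofReal (X x) ∂(Q n) = 0 := by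
        intro n
        refine le_antisymm ?_ (zero_le)
        refine ENNReal.le_of_forall_pos_le_add fun ε hε _ => ?_
        rw [zero_add]
        set t : ℝ≥0∞ := (ε : ℝ≥0∞) with htdef
        have ht0 : t ≠ 0 := by
          simp only [htdef, ne_eq, ENNReal.coe_eq_zero]
          exact hε.ne'
        have ht0' : (0:ℝ≥0∞) < t := pos_iff_ne_zero.mpr ht0
        have htt : t ≠ ⊤ := ENNReal.coe_ne_top
        have hpt : ∀ x, ENNReal.ofReal (X x) ≤ t + t^(1-p) * (ENNReal.ofReal |X x|)^p := by
          intro x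
          set a := ENNReal.ofReal |X x| with ha
          have hax : ENNReal.ofReal (X x) ≤ a := ENNReal.ofReal_le_ofReal (le_abs_self _)
          refine hax.trans ?_
          rcases le_or_gt a t with h | h
          · exact h.trans le_self_add
          · have ha0 : a ≠ 0 := (ht0'.trans h).ne'
            have hat : a ≠ ⊤ := ENNReal.ofReal_ne_top
            have h5 : a ^ (p-1) * a = a ^ p := by
              have h5' := ENNReal.rpow_add (x := a) (p-1) 1 ha0 hat
              rw [ENNReal.rpow_one] at h5'
              rw [← h5']; norm_num
            have h6 : t^(p-1) ≤ a^(p-1) := ENNReal.rpow_le_rpow h.le (by linarith)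
            have h7 : t^(1-p) * (t^(p-1) * a) ≤ t^(1-p) * (a^(p-1) * a) :=
              mul_le_mul_right (mul_le_mul_left h6 a) _
            have h8 : t^(1-p) * t^(p-1) = 1 := by
              have h8' := ENNReal.rpow_add (x := t) (1-p) (p-1) ht0 htt
              rw [← h8']
              norm_num
            have key2 : a ≤ t^(1-p) * a^p := by
              calc a = 1 * a := (one_mul a).symm
                _ = (t^(1-p) * t^(p-1)) * a := by rw [h8]
                _ = t^(1-p) * (t^(p-1) * a) := mul_assoc _ _ _
                _ ≤ t^(1-p) * (a^(p-1) * a) := h7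
                _ = t^(1-p) * a^p := by rw [h5]
            exact key2.trans le_add_self
        have htp : t^(1-p) ≠ ⊤ := by
          intro hco
          rcases ENNReal.rpow_eq_top_iff.mp hco with ⟨h1,_⟩|⟨h1,_⟩
          exacts [ht0 h1, htt h1]
        have h9 := lintegral_mono (μ := Q n) hpt
        rw [lintegral_add_left measurable_const, lintegral_const, (hQprob n).measure_univ,
          mul_one, lintegral_const_mul' _ _ htp, hTn n, mul_zero, add_zero] at h9
        exact h9
      rw [hsumP]
      simp [hQn0]
end

section
/- Let ρ be a normalized uniformly regular convex risk measure on a lattice L ⊆ C_b(Ω), and let ρ_1 be a regular sublinear risk measure on L majorizing ρ. Then c(X) := ρ_1(−|X|) defines a capacity on L, ρ_1 extends uniquely to a continuous sublinear risk measure on L^1(c), and ρ extends uniquely to a continuous normalized convex risk measure on L^1(c) majorized by the extension of ρ_1; moreover both ρ and ρ_1 are 1-Lipschitz for the seminorm c on L. -/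
open Filter Topology
open scoped ENNReal

/-- The capacity `c(X) = ρ₁(-|X|)` associated with a sublinear risk measure `ρ₁`. -/
noncomputable def capL {Ω : Type} (ρ1 : (Ω → ℝ) → ℝ) (f : Ω → ℝ) : ℝ :=
  ρ1 fun x => -|f x|

/-- Extension of `c = ρ₁(-|·|)` to non-negative lower semicontinuous functions:
`c(g) = sup {c(φ) : 0 ≤ φ ≤ g, φ ∈ L}`. -/
noncomputable def capLsc {Ω : Type} [TopologicalSpace Ω] (L : Set (Ω → ℝ)) (ρ1 : (Ω → ℝ) → ℝ)
    (g : Ω → ℝ) : ℝ≥0∞ :=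
  ⨆ φ ∈ {φ : Ω → ℝ | φ ∈ L ∧ ∀ x, 0 ≤ φ x ∧ φ x ≤ g x}, ENNReal.ofReal (capL ρ1 φ)

/-- Extension of `c = ρ₁(-|·|)` to arbitrary functions:
`c(h) = inf {c(f) : f ≥ |h|, f lower semicontinuous}`. -/
noncomputable def capExt {Ω : Type} [TopologicalSpace Ω] (L : Set (Ω → ℝ)) (ρ1 : (Ω → ℝ) → ℝ)
    (h : Ω → ℝ) : ℝ≥0∞ :=
  ⨅ f ∈ {f : Ω → ℝ | LowerSemicontinuous f ∧ ∀ x, |h x| ≤ f x}, capLsc L ρ1 f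

/-- Membership in `L^1(c)`: `c`-limit of elements of the lattice `L`. -/
def MemE {Ω : Type} [TopologicalSpace Ω] (L : Set (Ω → ℝ)) (ρ1 : (Ω → ℝ) → ℝ) (g : Ω → ℝ) : Prop :=
  ∃ f : ℕ → Ω → ℝ, (∀ n, f n ∈ L) ∧
    Tendsto (fun n => capExt L ρ1 (g - f n)) atTop (𝓝 0)

/-- `X ≥ 0` in `L^1(c)`: `c`-approximable by non-negative elements of `L`. -/
def NonnegE {Ω : Type} [TopologicalSpace Ω] (L : Set (Ω → ℝ)) (ρ1 : (Ω → ℝ) → ℝ) (g : Ω → ℝ) : Prop :=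
  ∃ f : ℕ → Ω → ℝ, (∀ n, f n ∈ L ∧ ∀ x, 0 ≤ f n x) ∧
    Tendsto (fun n => capExt L ρ1 (g - f n)) atTop (𝓝 0)

set_option linter.unusedSectionVars false
set_option linter.unusedVariables false
section Aux

variable {Ω : Type}

/-- Bundled hypotheses on the lattice `L`. -/
structure LatHyp (Ω : Type) [TopologicalSpace Ω] (L : Set (Ω → ℝ)) : Prop where
  cont : ∀ f ∈ L, Continuous f ∧ ∃ M : ℝ, ∀ x, |f x| ≤ M
  const : ∀ a : ℝ, (fun _ => a) ∈ L
  add : ∀ f ∈ L, ∀ g ∈ L, f + g ∈ L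
  smul : ∀ (a : ℝ), ∀ f ∈ L, a • f ∈ L
  abs : ∀ f ∈ L, (fun x => |f x|) ∈ L

/-- Bundled hypotheses on the sublinear risk measure `ρ₁`. -/
structure RM1 (Ω : Type) (L : Set (Ω → ℝ)) (ρ1 : (Ω → ℝ) → ℝ) : Prop where
  mono : ∀ f ∈ L, ∀ g ∈ L, (∀ x, f x ≤ g x) → ρ1 g ≤ ρ1 f
  subadd : ∀ f ∈ L, ∀ g ∈ L, ρ1 (f + g) ≤ ρ1 f + ρ1 g
  hom : ∀ s : ℝ, 0 < s → ∀ f ∈ L, ρ1 (s • f) = s * ρ1 f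

variable [t : TopologicalSpace Ω] {L : Set (Ω → ℝ)} {ρ1 : (Ω → ℝ) → ℝ}

namespace LatHyp

theorem neg (hL : LatHyp Ω L) {f : Ω → ℝ} (hf : f ∈ L) : -f ∈ L := by
  have := hL.smul (-1) f hf
  rwa [neg_one_smul] at this

theorem zero (hL : LatHyp Ω L) : (0 : Ω → ℝ) ∈ L := hL.const 0

theorem sub (hL : LatHyp Ω L) {f g : Ω → ℝ} (hf : f ∈ L) (hg : g ∈ L) : f - g ∈ L := by
  rw [sub_eq_add_neg]; exact hL.add f hf _ (hL.neg hg)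

theorem max' (hL : LatHyp Ω L) {f g : Ω → ℝ} (hf : f ∈ L) (hg : g ∈ L) :
    (fun x => max (f x) (g x)) ∈ L := by
  have h1 : (fun x => |(f - g) x|) ∈ L := hL.abs _ (hL.sub hf hg)
  have : (fun x => max (f x) (g x)) = (2⁻¹ : ℝ) • (f + g + fun x => |(f - g) x|) := by
    funext x
    simp only [Pi.smul_apply, Pi.add_apply, Pi.sub_apply, smul_eq_mul]
    rcases le_total (f x) (g x) with h | h
    · rw [max_eq_right h, abs_of_nonpos (by linarith)]; ring
    · rw [max_eq_left h, abs_of_nonneg (by linarith)]; ring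
  rw [this]
  exact hL.smul _ _ (hL.add _ (hL.add f hf g hg) _ h1)

theorem min' (hL : LatHyp Ω L) {f g : Ω → ℝ} (hf : f ∈ L) (hg : g ∈ L) :
    (fun x => min (f x) (g x)) ∈ L := by
  have h1 : (fun x => |(f - g) x|) ∈ L := hL.abs _ (hL.sub hf hg)
  have : (fun x => min (f x) (g x)) = (2⁻¹ : ℝ) • (f + g - fun x => |(f - g) x|) := by
    funext x
    simp only [Pi.smul_apply, Pi.add_apply, Pi.sub_apply, smul_eq_mul]
    rcases le_total (f x) (g x) with h | h
    · rw [min_eq_left h, abs_of_nonpos (by linarith)]; ring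
    · rw [min_eq_right h, abs_of_nonneg (by linarith)]; ring
  rw [this]
  exact hL.smul _ _ (hL.sub (hL.add f hf g hg) h1)

theorem pos' (hL : LatHyp Ω L) {f : Ω → ℝ} (hf : f ∈ L) :
    (fun x => max 0 (f x)) ∈ L := by
  have := hL.max' (hL.const 0) hf
  exact this

end LatHyp

namespace RM1

theorem zero' (h1 : RM1 Ω L ρ1) (hL : LatHyp Ω L) : ρ1 0 = 0 := by
  have h := h1.hom 2 two_pos 0 hL.zero
  rw [smul_zero] at h
  linarith

theorem nonneg_of_nonpos (h1 : RM1 Ω L ρ1) (hL : LatHyp Ω L) {f : Ω → ℝ} (hf : f ∈ L)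
    (h : ∀ x, f x ≤ 0) : 0 ≤ ρ1 f := by
  have := h1.mono f hf 0 hL.zero h
  rw [h1.zero' hL] at this
  linarith

end RM1

section CapL

variable (ρ1)

theorem capL_def (f : Ω → ℝ) : capL ρ1 f = ρ1 (-(fun x => |f x|)) := rfl

variable {ρ1}

theorem capL_nonneg (h1 : RM1 Ω L ρ1) (hL : LatHyp Ω L) {f : Ω → ℝ} (hf : f ∈ L) :
    0 ≤ capL ρ1 f := by
  refine h1.nonneg_of_nonpos hL (hL.neg (hL.abs f hf)) fun x => ?_
  simp [neg_nonpos, abs_nonneg]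

theorem capL_mono (h1 : RM1 Ω L ρ1) (hL : LatHyp Ω L) {f g : Ω → ℝ} (hf : f ∈ L) (hg : g ∈ L)
    (h : ∀ x, |f x| ≤ |g x|) : capL ρ1 f ≤ capL ρ1 g := by
  refine h1.mono _ (hL.neg (hL.abs g hg)) _ (hL.neg (hL.abs f hf)) fun x => ?_
  simpa using h x

theorem capL_congr (h1 : RM1 Ω L ρ1) (hL : LatHyp Ω L) {f g : Ω → ℝ} (hf : f ∈ L) (hg : g ∈ L)
    (h : ∀ x, |f x| = |g x|) : capL ρ1 f = capL ρ1 g :=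
  le_antisymm (capL_mono h1 hL hf hg fun x => (h x).le)
    (capL_mono h1 hL hg hf fun x => (h x).ge)

theorem capL_subadd (h1 : RM1 Ω L ρ1) (hL : LatHyp Ω L) {f g : Ω → ℝ} (hf : f ∈ L) (hg : g ∈ L) :
    capL ρ1 (f + g) ≤ capL ρ1 f + capL ρ1 g := by
  have step1 : capL ρ1 (f + g) ≤ ρ1 (-(fun x => |f x|) + -(fun x => |g x|)) := by
    refine h1.mono _ (hL.add _ (hL.neg (hL.abs f hf)) _ (hL.neg (hL.abs g hg))) _
      (hL.neg (hL.abs _ (hL.add f hf g hg))) fun x => ?_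
    have := abs_add_le (f x) (g x)
    simp only [Pi.add_apply, Pi.neg_apply]
    linarith
  exact step1.trans (h1.subadd _ (hL.neg (hL.abs f hf)) _ (hL.neg (hL.abs g hg)))

theorem capL_smul (h1 : RM1 Ω L ρ1) (hL : LatHyp Ω L) (a : ℝ) {f : Ω → ℝ} (hf : f ∈ L) :
    capL ρ1 (a • f) = |a| * capL ρ1 f := by
  rcases eq_or_ne a 0 with rfl | ha
  · have h0 : capL ρ1 ((0 : ℝ) • f) = ρ1 0 := by
      rw [capL_def]
      congr 1
      funext x
      simp
    rw [h0, h1.zero' hL]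
    simp
  · have hpos : 0 < |a| := abs_pos.2 ha
    have key : (-(fun x => |(a • f) x|)) = |a| • (-(fun x => |f x|)) := by
      funext x
      simp [abs_mul, mul_comm]
    rw [capL_def, key, h1.hom _ hpos _ (hL.neg (hL.abs f hf))]
    rfl

theorem capL_of_nonneg (h1 : RM1 Ω L ρ1) {f : Ω → ℝ} (h : ∀ x, 0 ≤ f x) :
    capL ρ1 f = ρ1 (-f) := by
  rw [capL_def]
  congr 1
  funext x
  simp [abs_of_nonneg (h x)]

theorem capL_tendsto (h1 : RM1 Ω L ρ1)
    (hρ1reg : ∀ X : ℕ → Ω → ℝ, (∀ n, X n ∈ L) → (∀ x, Antitone fun n => X n x) →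
      (∀ x, Tendsto (fun n => X n x) atTop (𝓝 0)) →
      Tendsto (fun n => ρ1 (-(X n))) atTop (𝓝 0))
    (f : ℕ → Ω → ℝ) (hfL : ∀ n, f n ∈ L) (hanti : ∀ x, Antitone fun n => f n x)
    (hlim : ∀ x, Tendsto (fun n => f n x) atTop (𝓝 0)) :
    Tendsto (fun n => capL ρ1 (f n)) atTop (𝓝 0) := by
  have hnn : ∀ n x, 0 ≤ f n x := by
    intro n x
    refine le_of_tendsto (hlim x) ?_
    filter_upwards [eventually_ge_atTop n] with m hm
    exact hanti x hm
  have : (fun n => capL ρ1 (f n)) = fun n => ρ1 (-(f n)) := by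
    funext n
    exact capL_of_nonneg h1 (hnn n)
  rw [this]
  exact hρ1reg f hfL hanti hlim

end CapL
section Lip

variable [t : TopologicalSpace Ω] {L : Set (Ω → ℝ)} {ρ1 : (Ω → ℝ) → ℝ}

/-- Key convexity estimate: `ρ f - ρ g ≤ ρ1 (f - g)` for a convex `ρ` majorized by `ρ1`. -/
theorem rho_sub_le (hL : LatHyp Ω L) (h1 : RM1 Ω L ρ1) {ρ : (Ω → ℝ) → ℝ}
    (hρconv : ∀ f ∈ L, ∀ g ∈ L, ∀ s : ℝ, 0 ≤ s → s ≤ 1 →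
      ρ (s • f + (1 - s) • g) ≤ s * ρ f + (1 - s) * ρ g)
    (hmaj : ∀ f ∈ L, ρ f ≤ ρ1 f) {f g : Ω → ℝ} (hf : f ∈ L) (hg : g ∈ L) :
    ρ f - ρ g ≤ ρ1 (f - g) := by
  set D : ℝ := max (ρ ((2:ℝ) • g) - 2 * ρ g) 0 with hDdef
  have hD : 0 ≤ D := le_max_right _ _
  have key : ∀ ε : ℝ, 0 < ε → ε ≤ 1 → ρ f - ρ g ≤ ρ1 (f - g) + ε * D := by
    intro ε hε hε1
    have hε1' : (0:ℝ) < 1 + ε := by linarith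
    set s : ℝ := ε / (1 + ε) with hs
    have hs0 : 0 < s := div_pos hε hε1'
    have hs1 : s < 1 := by rw [hs, div_lt_one hε1']; linarith
    have h1s : 1 - s = 1 / (1 + ε) := by
      rw [hs]; field_simp; ring
    set A : Ω → ℝ := ((1 + ε) / ε) • (f - g) with hA'
    set B : Ω → ℝ := (1 + ε) • g with hB'
    have hA : A ∈ L := hL.smul _ _ (hL.sub hf hg)
    have hB : B ∈ L := hL.smul _ _ hg
    have hcomb : s • A + (1 - s) • B = f := by
      funext x
      simp only [hA', hB', hs, Pi.add_apply, Pi.smul_apply, Pi.sub_apply, smul_eq_mul]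
      field_simp
      ring
    have h2 := hρconv A hA B hB s hs0.le hs1.le
    rw [hcomb] at h2
    have hA1 : ρ A ≤ ((1 + ε) / ε) * ρ1 (f - g) := by
      refine (hmaj A hA).trans ?_
      rw [hA', h1.hom _ (by positivity) _ (hL.sub hf hg)]
    have hsA : s * ρ A ≤ ρ1 (f - g) := by
      have h' := mul_le_mul_of_nonneg_left hA1 hs0.le
      refine h'.trans_eq ?_
      rw [hs]
      field_simp
    have hB2g : (2:ℝ) • g ∈ L := hL.smul _ _ hg
    have hBcomb : ε • ((2:ℝ) • g) + (1 - ε) • g = B := by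
      funext x
      simp only [hB', Pi.add_apply, Pi.smul_apply, smul_eq_mul]
      ring
    have h3 := hρconv _ hB2g g hg ε hε.le hε1
    rw [hBcomb] at h3
    have h1snn : (0:ℝ) ≤ 1 - s := by linarith
    have h4 : (1 - s) * ρ B ≤ (1 - s) * (ε * ρ ((2:ℝ) • g) + (1 - ε) * ρ g) :=
      mul_le_mul_of_nonneg_left h3 h1snn
    have h6 : (1 - s) * (ε * ρ ((2:ℝ) • g) + (1 - ε) * ρ g) - ρ g ≤ ε * D := by
      rw [h1s]
      have hDD : ρ ((2:ℝ) • g) - 2 * ρ g ≤ D := le_max_left _ _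
      have e1 : (1:ℝ) / (1 + ε) * (ε * ρ ((2:ℝ) • g) + (1 - ε) * ρ g) - ρ g
          = ε * (ρ ((2:ℝ) • g) - 2 * ρ g) / (1 + ε) := by
        field_simp
        ring
      rw [e1]
      have e2 : ε * (ρ ((2:ℝ) • g) - 2 * ρ g) ≤ ε * D * (1 + ε) := by
        have t1 : ε * (ρ ((2:ℝ) • g) - 2 * ρ g) ≤ ε * D := mul_le_mul_of_nonneg_left hDD hε.le
        have t2 : (0:ℝ) ≤ ε * D * ε := by positivity
        nlinarith
      calc ε * (ρ ((2:ℝ) • g) - 2 * ρ g) / (1 + ε) ≤ ε * D * (1 + ε) / (1 + ε) :=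
            (div_le_div_iff_of_pos_right hε1').2 e2
        _ = ε * D := by field_simp
    linarith
  by_contra hcon
  push_neg at hcon
  set δ : ℝ := ρ f - ρ g - ρ1 (f - g) with hδdef
  have hδ : 0 < δ := by simp only [hδdef]; linarith
  set ε : ℝ := min 1 (δ / (2 * (D + 1))) with hεdef
  have hε : 0 < ε := lt_min one_pos (by positivity)
  have hε1 : ε ≤ 1 := min_le_left _ _
  have hεD : ε * D < δ := by
    have h' : ε * D ≤ δ / (2 * (D + 1)) * D :=
      mul_le_mul_of_nonneg_right (min_le_right _ _) hD
    refine h'.trans_lt ?_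
    rw [div_mul_eq_mul_div, div_lt_iff₀ (by positivity)]
    nlinarith
  have := key ε hε hε1
  simp only [hδdef] at hεD
  linarith

theorem rho1_sub_le (hL : LatHyp Ω L) (h1 : RM1 Ω L ρ1) {f g : Ω → ℝ}
    (hf : f ∈ L) (hg : g ∈ L) : ρ1 f - ρ1 g ≤ ρ1 (f - g) := by
  have h := h1.subadd g hg (f - g) (hL.sub hf hg)
  rw [show g + (f - g) = f by abel] at h
  linarith

/-- From the one-sided estimate to the `capL`-Lipschitz estimate. -/
theorem lip_abs (hL : LatHyp Ω L) (h1 : RM1 Ω L ρ1) {τ : (Ω → ℝ) → ℝ}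
    (hlip : ∀ f ∈ L, ∀ g ∈ L, τ f - τ g ≤ ρ1 (f - g)) {f g : Ω → ℝ}
    (hf : f ∈ L) (hg : g ∈ L) : |τ f - τ g| ≤ capL ρ1 (f - g) := by
  have bound : ∀ u ∈ L, ∀ v ∈ L, τ u - τ v ≤ capL ρ1 (u - v) := by
    intro u hu v hv
    refine (hlip u hu v hv).trans ?_
    refine h1.mono _ (hL.neg (hL.abs _ (hL.sub hu hv))) _ (hL.sub hu hv) fun x => ?_
    simpa using neg_abs_le ((u - v) x)
  rw [abs_sub_le_iff]
  refine ⟨bound f hf g hg, (bound g hg f hf).trans ?_⟩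
  refine le_of_eq (capL_congr h1 hL (hL.sub hg hf) (hL.sub hf hg) fun x => ?_)
  simp [abs_sub_comm]

end Lip
section Top

variable [t : TopologicalSpace Ω] {L : Set (Ω → ℝ)}

/-- Bump function construction from the generating family. -/
theorem bump (hL : LatHyp Ω L)
    (hgen : t = TopologicalSpace.induced (fun x (f : L) => f.1 x) Pi.topologicalSpace)
    {F : Ω → ℝ} (hF : LowerSemicontinuous F) (hF0 : ∀ x, 0 ≤ F x)
    {x0 : Ω} {c : ℝ} (hc : 0 < c) (hcF : c < F x0) :
    ∃ φ, φ ∈ L ∧ (∀ x, 0 ≤ φ x ∧ φ x ≤ F x) ∧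
      ∃ U : Set Ω, IsOpen U ∧ x0 ∈ U ∧ ∀ x ∈ U, φ x = c := by
  have hO : IsOpen {x | c < F x} := hF.isOpen_preimage c
  rw [hgen] at hO
  obtain ⟨V, hV, hVO⟩ := isOpen_induced_iff.1 hO
  have hx0V : (fun f : L => f.1 x0) ∈ V := by
    have : x0 ∈ (fun x (f : L) => f.1 x) ⁻¹' V := by rw [hVO]; exact hcF
    exact this
  obtain ⟨I, u, hu, hpi⟩ := (isOpen_pi_iff.1 hV) _ hx0V
  have hradius : ∀ i : L, ∃ ε : ℝ, 0 < ε ∧ (i ∈ I → Metric.ball (i.1 x0) ε ⊆ u i) := by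
    intro i
    by_cases hi : i ∈ I
    · obtain ⟨hui, hxi⟩ := hu i hi
      obtain ⟨ε, hε, hball⟩ := Metric.isOpen_iff.1 hui _ hxi
      exact ⟨ε, hε, fun _ => hball⟩
    · exact ⟨1, one_pos, fun h => absurd h hi⟩
  choose ε hε hball using hradius
  set ψ : L → Ω → ℝ := fun i x => min 1 (max 0 (2 - (2 / ε i) * |i.1 x - i.1 x0|)) with hψ
  have hψL : ∀ i : L, ψ i ∈ L := by
    intro i
    have m1 : (fun x => i.1 x - i.1 x0) ∈ L := hL.sub i.2 (hL.const (i.1 x0))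
    have m2 : (fun x => |i.1 x - i.1 x0|) ∈ L := hL.abs _ m1
    have m3 : (fun x => 2 - (2 / ε i) * |i.1 x - i.1 x0|) ∈ L :=
      hL.sub (hL.const 2) (hL.smul (2 / ε i) _ m2)
    exact hL.min' (hL.const 1) (hL.max' (hL.const 0) m3)
  have hψ0 : ∀ i x, 0 ≤ ψ i x := fun i x => le_min zero_le_one (le_max_left _ _)
  have hψ1 : ∀ i x, ψ i x ≤ 1 := fun i x => min_le_left _ _
  have hψpos : ∀ i, ∀ x, 0 < ψ i x → |i.1 x - i.1 x0| < ε i := by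
    intro i x hx
    by_contra hcon
    push_neg at hcon
    have h2 : (2:ℝ) ≤ (2 / ε i) * |i.1 x - i.1 x0| := by
      rw [div_mul_eq_mul_div, le_div_iff₀ (hε i)]
      nlinarith [hε i]
    have : ψ i x ≤ 0 := by
      simp only [hψ]
      have : max 0 (2 - (2 / ε i) * |i.1 x - i.1 x0|) = 0 := max_eq_left (by linarith)
      rw [this]
      exact min_le_right _ _
    linarith
  have hψone : ∀ i x, |i.1 x - i.1 x0| ≤ ε i / 2 → ψ i x = 1 := by
    intro i x h
    have hv : (1:ℝ) ≤ 2 - (2 / ε i) * |i.1 x - i.1 x0| := by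
      have hipos := hε i
      have : (2 / ε i) * |i.1 x - i.1 x0| ≤ (2 / ε i) * (ε i / 2) :=
        mul_le_mul_of_nonneg_left h (by positivity)
      have he : (2 / ε i) * (ε i / 2) = 1 := by
        field_simp
      linarith [this.trans_eq he]
    simp only [hψ]
    rw [max_eq_right (by linarith), min_eq_left hv]
  set χ : Ω → ℝ := fun x => max 0 (1 - ∑ i ∈ I, (1 - ψ i x)) with hχ
  have hχL : χ ∈ L := by
    have hsum : (∑ i ∈ I, ((fun _ => (1:ℝ)) - ψ i)) ∈ L := by
      refine Finset.sum_induction _ (· ∈ L) (fun a b ha hb => hL.add a ha b hb) hL.zero ?_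
      intro i _
      exact hL.sub (hL.const 1) (hψL i)
    have hin : (fun x => 1 - ∑ i ∈ I, (1 - ψ i x)) ∈ L := by
      have heq : (fun x => 1 - ∑ i ∈ I, (1 - ψ i x))
          = (fun _ => (1:ℝ)) - ∑ i ∈ I, ((fun _ => (1:ℝ)) - ψ i) := by
        funext x
        simp [Finset.sum_apply]
      rw [heq]
      exact hL.sub (hL.const 1) hsum
    exact hL.max' (hL.const 0) hin
  have hχ0 : ∀ x, 0 ≤ χ x := fun x => le_max_left _ _
  have hχ1 : ∀ x, χ x ≤ 1 := by
    intro x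
    refine max_le zero_le_one ?_
    have : (0:ℝ) ≤ ∑ i ∈ I, (1 - ψ i x) :=
      Finset.sum_nonneg fun i _ => by linarith [hψ1 i x]
    linarith
  have hχle : ∀ i ∈ I, ∀ x, χ x ≤ ψ i x := by
    intro i hi x
    refine max_le (hψ0 i x) ?_
    have h1' := Finset.single_le_sum (f := fun j => 1 - ψ j x)
      (fun j _ => by have := hψ1 j x; linarith) hi
    linarith
  have hχpos : ∀ x, 0 < χ x → c < F x := by
    intro x hx
    have hmem : (fun f : L => f.1 x) ∈ Set.pi (I : Set L) u := by
      intro i hi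
      have h1' : 0 < ψ i x := lt_of_lt_of_le hx (hχle i hi x)
      have h2' := hψpos i x h1'
      exact hball i hi (by rwa [Metric.mem_ball, Real.dist_eq])
    have hxV : (fun f : L => f.1 x) ∈ V := hpi hmem
    have : x ∈ (fun x (f : L) => f.1 x) ⁻¹' V := hxV
    rw [hVO] at this
    exact this
  set U : Set Ω := {x | ∀ i ∈ I, |i.1 x - i.1 x0| < ε i / 2} with hU
  have hUopen : IsOpen U := by
    have heq : U = ⋂ i ∈ I, {x | |i.1 x - i.1 x0| < ε i / 2} := by
      ext x
      simp [hU]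
    rw [heq]
    refine isOpen_biInter_finset fun i _ => ?_
    have hci : Continuous i.1 := (hL.cont i.1 i.2).1
    exact isOpen_lt ((hci.sub continuous_const).abs) continuous_const
  have hx0U : x0 ∈ U := by
    intro i _
    simp only [sub_self, abs_zero]
    have := hε i
    positivity
  have hχU : ∀ x ∈ U, χ x = 1 := by
    intro x hx
    have hz : ∑ i ∈ I, (1 - ψ i x) = 0 := by
      refine Finset.sum_eq_zero fun i hi => ?_
      rw [hψone i x (hx i hi).le]
      ring
    simp only [hχ, hz, sub_zero]
    exact max_eq_right zero_le_one
  refine ⟨c • χ, hL.smul c _ hχL, ?_, U, hUopen, hx0U, ?_⟩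
  · intro x
    refine ⟨mul_nonneg hc.le (hχ0 x), ?_⟩
    rcases eq_or_lt_of_le (hχ0 x) with h | h
    · simp only [Pi.smul_apply, smul_eq_mul, ← h, mul_zero]
      exact hF0 x
    · have hcF' : c < F x := hχpos x h
      have : c * χ x ≤ c * 1 := mul_le_mul_of_nonneg_left (hχ1 x) hc.le
      simp only [Pi.smul_apply, smul_eq_mul]
      linarith
  · intro x hx
    simp only [Pi.smul_apply, smul_eq_mul, hχU x hx, mul_one]

/-- Countable monotone approximation of a nonnegative lsc function from below by lattice
elements. -/
theorem density [TopologicalSpace.MetrizableSpace Ω] [TopologicalSpace.SeparableSpace Ω]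
    (hL : LatHyp Ω L)
    (hgen : t = TopologicalSpace.induced (fun x (f : L) => f.1 x) Pi.topologicalSpace)
    {F : Ω → ℝ} (hF : LowerSemicontinuous F) (hF0 : ∀ x, 0 ≤ F x) :
    ∃ ψ : ℕ → Ω → ℝ, (∀ n, ψ n ∈ L ∧ ∀ x, 0 ≤ ψ n x ∧ ψ n x ≤ F x) ∧
      (∀ n x, ψ n x ≤ ψ (n + 1) x) ∧ (∀ x, ∀ cc : ℝ, cc < F x → ∃ n, cc ≤ ψ n x) := by
  haveI : SecondCountableTopology Ω := by
    letI : MetricSpace Ω := TopologicalSpace.metrizableSpaceMetric Ω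
    exact UniformSpace.secondCountable_of_separable Ω
  have main : ∀ q : ℚ, ∃ G : Set (Ω → ℝ), G.Countable ∧
      (∀ φ ∈ G, φ ∈ L ∧ ∀ x, 0 ≤ φ x ∧ φ x ≤ F x) ∧
      (0 < q → ∀ x, (q : ℝ) < F x → ∃ φ ∈ G, φ x = (q : ℝ)) := by
    intro q
    by_cases hq : 0 < q
    · set O := {x | (q : ℝ) < F x} with hO
      have hbump : ∀ x0 : O, ∃ φU : (Ω → ℝ) × Set Ω, φU.1 ∈ L ∧
          (∀ x, 0 ≤ φU.1 x ∧ φU.1 x ≤ F x) ∧ IsOpen φU.2 ∧ (x0 : Ω) ∈ φU.2 ∧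
          ∀ x ∈ φU.2, φU.1 x = (q : ℝ) := by
        intro x0
        obtain ⟨φ, h1, h2, U, h3, h4, h5⟩ := bump hL hgen hF hF0 (by exact_mod_cast hq) x0.2
        exact ⟨(φ, U), h1, h2, h3, h4, h5⟩
      choose Φ hΦL hΦb hΦopen hΦmem hΦval using hbump
      obtain ⟨T, hTc, hTU⟩ := TopologicalSpace.isOpen_iUnion_countable (fun x0 : O => (Φ x0).2) hΦopen
      refine ⟨(fun x0 : O => (Φ x0).1) '' T, hTc.image _, ?_, ?_⟩
      · rintro φ ⟨x0, _, rfl⟩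
        exact ⟨hΦL x0, hΦb x0⟩
      · intro _ x hx
        have hxU : x ∈ ⋃ x0 : O, (Φ x0).2 := Set.mem_iUnion.2 ⟨⟨x, hx⟩, hΦmem _⟩
        rw [← hTU] at hxU
        obtain ⟨x0, hx0T, hxU2⟩ := Set.mem_iUnion₂.1 hxU
        exact ⟨(Φ x0).1, ⟨x0, hx0T, rfl⟩, hΦval x0 x hxU2⟩
    · exact ⟨∅, Set.countable_empty, by simp, fun h => absurd h hq⟩
  choose G hGc hGL hGv using main
  set S : Set (Ω → ℝ) := insert 0 (⋃ q : ℚ, G q) with hS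
  have hSc : S.Countable := (Set.countable_iUnion hGc).insert 0
  have hSne : S.Nonempty := ⟨0, Set.mem_insert _ _⟩
  have hSL : ∀ φ ∈ S, φ ∈ L ∧ ∀ x, 0 ≤ φ x ∧ φ x ≤ F x := by
    intro φ hφ
    rcases Set.mem_insert_iff.1 hφ with rfl | h
    · exact ⟨hL.zero, fun x => ⟨le_refl 0, hF0 x⟩⟩
    · obtain ⟨q, hq⟩ := Set.mem_iUnion.1 h
      exact hGL q φ hq
  obtain ⟨e, he⟩ := hSc.exists_eq_range hSne
  have heS : ∀ k, e k ∈ S := fun k => he ▸ Set.mem_range_self k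
  obtain ⟨Ψ, hΨ0, hΨs⟩ : ∃ Ψ : ℕ → Ω → ℝ, Ψ 0 = e 0 ∧
      ∀ n, Ψ (n + 1) = fun x => max (Ψ n x) (e (n + 1) x) :=
    ⟨fun n => Nat.rec (e 0) (fun n p => fun x => max (p x) (e (n + 1) x)) n, rfl, fun _ => rfl⟩
  have hΨok : ∀ n, Ψ n ∈ L ∧ ∀ x, 0 ≤ Ψ n x ∧ Ψ n x ≤ F x := by
    intro n
    induction n with
    | zero =>
      rw [hΨ0]
      exact ⟨(hSL _ (heS 0)).1, (hSL _ (heS 0)).2⟩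
    | succ m ih =>
      rw [hΨs]
      refine ⟨hL.max' ih.1 (hSL _ (heS (m + 1))).1, fun x => ?_⟩
      have h1 := ih.2 x
      have h2 := (hSL _ (heS (m + 1))).2 x
      exact ⟨le_max_of_le_left h1.1, max_le h1.2 h2.2⟩
  have hΨe : ∀ m x, e m x ≤ Ψ m x := by
    intro m x
    cases m with
    | zero => rw [hΨ0]
    | succ k => rw [hΨs]; exact le_max_right _ _
  refine ⟨Ψ, hΨok, fun n x => by rw [hΨs]; exact le_max_left _ _, ?_⟩
  intro x cc hcc
  rcases lt_or_ge cc 0 with h | h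
  · exact ⟨0, h.le.trans ((hΨok 0).2 x).1⟩
  · obtain ⟨q, hq1, hq2⟩ := exists_rat_btwn hcc
    have hq0 : 0 < q := by exact_mod_cast h.trans_lt hq1
    obtain ⟨φ, hφG, hφx⟩ := hGv q hq0 x hq2
    have hφS : φ ∈ S := Set.mem_insert_of_mem _ (Set.mem_iUnion.2 ⟨q, hφG⟩)
    have hφr : φ ∈ Set.range e := he ▸ hφS
    obtain ⟨m, rfl⟩ := hφr
    refine ⟨m, ?_⟩
    have := hΨe m x
    rw [hφx] at this
    linarith [hq1.le]

end Top
section MasterSec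

variable [t : TopologicalSpace Ω] [TopologicalSpace.MetrizableSpace Ω]
  [TopologicalSpace.SeparableSpace Ω] {L : Set (Ω → ℝ)} {ρ1 : (Ω → ℝ) → ℝ}

theorem capL_zero (hL : LatHyp Ω L) (h1 : RM1 Ω L ρ1) : capL ρ1 (0 : Ω → ℝ) = 0 := by
  have : capL ρ1 (0 : Ω → ℝ) = ρ1 0 := by
    rw [capL_def]
    congr 1
    funext x
    simp
  rw [this, h1.zero' hL]

/-- The master estimate: a lattice element dominated by a sum of two nonnegative lsc
functions has capacity at most the sum of their outer capacities. -/
theorem master (hL : LatHyp Ω L) (h1 : RM1 Ω L ρ1)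
    (hgen : t = TopologicalSpace.induced (fun x (f : L) => f.1 x) Pi.topologicalSpace)
    (hρ1reg : ∀ X : ℕ → Ω → ℝ, (∀ n, X n ∈ L) → (∀ x, Antitone fun n => X n x) →
      (∀ x, Tendsto (fun n => X n x) atTop (𝓝 0)) →
      Tendsto (fun n => ρ1 (-(X n))) atTop (𝓝 0))
    {φ F1 F2 : Ω → ℝ} (hφ : φ ∈ L)
    (h1lsc : LowerSemicontinuous F1) (h10 : ∀ x, 0 ≤ F1 x)
    (h2lsc : LowerSemicontinuous F2) (h20 : ∀ x, 0 ≤ F2 x)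
    (hbound : ∀ x, |φ x| ≤ F1 x + F2 x) :
    ENNReal.ofReal (capL ρ1 φ) ≤ capLsc L ρ1 F1 + capLsc L ρ1 F2 := by
  obtain ⟨ψ1, hψ1ok, hψ1mono, hψ1sup⟩ := density hL hgen h1lsc h10
  obtain ⟨ψ2, hψ2ok, hψ2mono, hψ2sup⟩ := density hL hgen h2lsc h20
  have hm1 : ∀ x, Monotone fun k => ψ1 k x :=
    fun x => monotone_nat_of_le_succ fun n => hψ1mono n x
  have hm2 : ∀ x, Monotone fun k => ψ2 k x :=
    fun x => monotone_nat_of_le_succ fun n => hψ2mono n x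
  set θ : ℕ → Ω → ℝ := fun k x => max 0 (|φ x| - ψ1 k x - ψ2 k x) with hθ
  have hθL : ∀ k, θ k ∈ L := fun k =>
    hL.max' (hL.const 0) (hL.sub (hL.sub (hL.abs φ hφ) (hψ1ok k).1) (hψ2ok k).1)
  have hθ0 : ∀ k x, 0 ≤ θ k x := fun k x => le_max_left _ _
  have hθanti : ∀ x, Antitone fun k => θ k x := by
    intro x
    refine antitone_nat_of_succ_le fun n => ?_
    simp only [hθ]
    refine max_le (le_max_left _ _) (le_trans ?_ (le_max_right _ _))
    have e1 := hψ1mono n x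
    have e2 := hψ2mono n x
    linarith
  have hθtend : ∀ x, Tendsto (fun k => θ k x) atTop (𝓝 0) := by
    intro x
    have hbdd : BddBelow (Set.range fun k => θ k x) := by
      refine ⟨0, ?_⟩
      rintro y ⟨k, rfl⟩
      exact hθ0 k x
    have htend := tendsto_atTop_ciInf (hθanti x) hbdd
    have hiInf : (⨅ k, θ k x) = 0 := by
      refine le_antisymm ?_ (le_ciInf fun k => hθ0 k x)
      have key : ∀ δ : ℝ, 0 < δ → (⨅ k, θ k x) ≤ δ := by
        intro δ hδ
        obtain ⟨k1, hk1⟩ := hψ1sup x (F1 x - δ / 2) (by linarith)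
        obtain ⟨k2, hk2⟩ := hψ2sup x (F2 x - δ / 2) (by linarith)
        set k := max k1 k2 with hk
        have e1 : ψ1 k1 x ≤ ψ1 k x := hm1 x (le_max_left _ _)
        have e2 : ψ2 k2 x ≤ ψ2 k x := hm2 x (le_max_right _ _)
        have hb := hbound x
        have : θ k x ≤ δ := by
          simp only [hθ]
          exact max_le hδ.le (by linarith)
        exact (ciInf_le hbdd k).trans this
      have h0 := le_of_forall_pos_le_add (a := ⨅ k, θ k x) (b := 0) ?_
      · exact h0
      · intro ε hε
        simpa using key ε hε
    rwa [hiInf] at htend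
  have keyk : ∀ k, ENNReal.ofReal (capL ρ1 φ) ≤
      capLsc L ρ1 F1 + capLsc L ρ1 F2 + ENNReal.ofReal (ρ1 (-(θ k))) := by
    intro k
    have hψ1L := (hψ1ok k).1
    have hψ2L := (hψ2ok k).1
    have hr : capL ρ1 φ ≤ capL ρ1 (ψ1 k) + capL ρ1 (ψ2 k) + ρ1 (-(θ k)) := by
      set m : Ω → ℝ := fun x => min (|φ x|) (ψ1 k x + ψ2 k x) with hm
      have hmL : m ∈ L := hL.min' (hL.abs φ hφ) (hL.add _ hψ1L _ hψ2L)
      have hsplit : (-(fun x => |φ x|) : Ω → ℝ) = -m + -(θ k) := by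
        funext x
        simp only [Pi.add_apply, Pi.neg_apply, hθ, hm]
        rcases le_total (|φ x|) (ψ1 k x + ψ2 k x) with h | h
        · rw [min_eq_left h, max_eq_left (by linarith)]
          ring
        · rw [min_eq_right h, max_eq_right (by linarith)]
          ring
      have s1 : capL ρ1 φ ≤ ρ1 (-m) + ρ1 (-(θ k)) := by
        rw [capL_def, hsplit]
        exact h1.subadd _ (hL.neg hmL) _ (hL.neg (hθL k))
      have s2 : ρ1 (-m) ≤ ρ1 (-(ψ1 k) + -(ψ2 k)) := by
        refine h1.mono _ (hL.add _ (hL.neg hψ1L) _ (hL.neg hψ2L)) _ (hL.neg hmL) fun x => ?_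
        simp only [Pi.add_apply, Pi.neg_apply, hm]
        have := min_le_right (|φ x|) (ψ1 k x + ψ2 k x)
        linarith
      have s3 : ρ1 (-(ψ1 k) + -(ψ2 k)) ≤ ρ1 (-(ψ1 k)) + ρ1 (-(ψ2 k)) :=
        h1.subadd _ (hL.neg hψ1L) _ (hL.neg hψ2L)
      have s4 : ρ1 (-(ψ1 k)) = capL ρ1 (ψ1 k) :=
        (capL_of_nonneg h1 fun x => ((hψ1ok k).2 x).1).symm
      have s5 : ρ1 (-(ψ2 k)) = capL ρ1 (ψ2 k) :=
        (capL_of_nonneg h1 fun x => ((hψ2ok k).2 x).1).symm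
      linarith
    have nn1 : 0 ≤ capL ρ1 (ψ1 k) := capL_nonneg h1 hL hψ1L
    have nn2 : 0 ≤ capL ρ1 (ψ2 k) := capL_nonneg h1 hL hψ2L
    have nn3 : 0 ≤ ρ1 (-(θ k)) := by
      refine h1.nonneg_of_nonpos hL (hL.neg (hθL k)) fun x => ?_
      simp only [Pi.neg_apply]
      linarith [hθ0 k x]
    have hle1 : ENNReal.ofReal (capL ρ1 (ψ1 k)) ≤ capLsc L ρ1 F1 := by
      exact le_iSup₂ (f := fun ψ (_ : ψ ∈ {ψ : Ω → ℝ | ψ ∈ L ∧ ∀ x, 0 ≤ ψ x ∧ ψ x ≤ F1 x}) =>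
        ENNReal.ofReal (capL ρ1 ψ)) (ψ1 k) ⟨hψ1L, fun x => (hψ1ok k).2 x⟩
    have hle2 : ENNReal.ofReal (capL ρ1 (ψ2 k)) ≤ capLsc L ρ1 F2 := by
      exact le_iSup₂ (f := fun ψ (_ : ψ ∈ {ψ : Ω → ℝ | ψ ∈ L ∧ ∀ x, 0 ≤ ψ x ∧ ψ x ≤ F2 x}) =>
        ENNReal.ofReal (capL ρ1 ψ)) (ψ2 k) ⟨hψ2L, fun x => (hψ2ok k).2 x⟩
    calc ENNReal.ofReal (capL ρ1 φ)
        ≤ ENNReal.ofReal (capL ρ1 (ψ1 k) + capL ρ1 (ψ2 k) + ρ1 (-(θ k))) :=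
          ENNReal.ofReal_le_ofReal hr
      _ = ENNReal.ofReal (capL ρ1 (ψ1 k)) + ENNReal.ofReal (capL ρ1 (ψ2 k))
          + ENNReal.ofReal (ρ1 (-(θ k))) := by
          rw [ENNReal.ofReal_add (by linarith) nn3, ENNReal.ofReal_add nn1 nn2]
      _ ≤ capLsc L ρ1 F1 + capLsc L ρ1 F2 + ENNReal.ofReal (ρ1 (-(θ k))) :=
          add_le_add (add_le_add hle1 hle2) le_rfl
  have hreg := hρ1reg θ hθL hθanti hθtend
  refine ENNReal.le_of_forall_pos_le_add fun δ hδ _ => ?_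
  have hev : ∀ᶠ k in atTop, ρ1 (-(θ k)) < (δ : ℝ) :=
    hreg.eventually (gt_mem_nhds (by exact_mod_cast hδ))
  obtain ⟨k, hk⟩ := hev.exists
  refine (keyk k).trans (add_le_add le_rfl ?_)
  calc ENNReal.ofReal (ρ1 (-(θ k))) ≤ ENNReal.ofReal (δ : ℝ) :=
        ENNReal.ofReal_le_ofReal hk.le
    _ = (δ : ℝ≥0∞) := ENNReal.ofReal_coe_nnreal

theorem capExt_mono {g1 g2 : Ω → ℝ} (h12 : ∀ x, |g1 x| ≤ |g2 x|) :
    capExt L ρ1 g1 ≤ capExt L ρ1 g2 := by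
  refine le_iInf₂ fun F hF => ?_
  exact iInf₂_le F ⟨hF.1, fun x => (h12 x).trans (hF.2 x)⟩

theorem capExt_neg (g : Ω → ℝ) : capExt L ρ1 (-g) = capExt L ρ1 g := by
  refine le_antisymm (capExt_mono fun x => ?_) (capExt_mono fun x => ?_) <;>
    simp

theorem capExt_eq_capL (hL : LatHyp Ω L) (h1 : RM1 Ω L ρ1) {f : Ω → ℝ} (hf : f ∈ L) :
    capExt L ρ1 f = ENNReal.ofReal (capL ρ1 f) := by
  refine le_antisymm ?_ ?_
  · have h2 : capExt L ρ1 f ≤ capLsc L ρ1 (fun x => |f x|) :=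
      iInf₂_le _ ⟨((hL.cont f hf).1.abs).lowerSemicontinuous, fun x => le_refl _⟩
    refine h2.trans ?_
    refine iSup₂_le fun ψ hψ => ?_
    refine ENNReal.ofReal_le_ofReal (capL_mono h1 hL hψ.1 hf fun x => ?_)
    rw [abs_of_nonneg (hψ.2 x).1]
    exact (hψ.2 x).2
  · refine le_iInf₂ fun F hF => ?_
    have hmem : (fun x => |f x|) ∈ {ψ : Ω → ℝ | ψ ∈ L ∧ ∀ x, 0 ≤ ψ x ∧ ψ x ≤ F x} :=
      ⟨hL.abs f hf, fun x => ⟨abs_nonneg _, hF.2 x⟩⟩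
    have : ENNReal.ofReal (capL ρ1 f) = ENNReal.ofReal (capL ρ1 (fun x => |f x|)) := by
      rw [capL_congr h1 hL hf (hL.abs f hf) fun x => (abs_abs (f x)).symm]
    rw [this]
    exact le_iSup₂ (f := fun ψ (_ : ψ ∈ {ψ : Ω → ℝ | ψ ∈ L ∧ ∀ x, 0 ≤ ψ x ∧ ψ x ≤ F x}) =>
      ENNReal.ofReal (capL ρ1 ψ)) _ hmem

theorem capExt_zero (hL : LatHyp Ω L) (h1 : RM1 Ω L ρ1) : capExt L ρ1 (0 : Ω → ℝ) = 0 := by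
  rw [capExt_eq_capL hL h1 hL.zero, capL_zero hL h1, ENNReal.ofReal_zero]

theorem capExt_triangle (hL : LatHyp Ω L) (h1 : RM1 Ω L ρ1)
    (hgen : t = TopologicalSpace.induced (fun x (f : L) => f.1 x) Pi.topologicalSpace)
    (hρ1reg : ∀ X : ℕ → Ω → ℝ, (∀ n, X n ∈ L) → (∀ x, Antitone fun n => X n x) →
      (∀ x, Tendsto (fun n => X n x) atTop (𝓝 0)) →
      Tendsto (fun n => ρ1 (-(X n))) atTop (𝓝 0))
    (g1 g2 : Ω → ℝ) :
    capExt L ρ1 (g1 + g2) ≤ capExt L ρ1 g1 + capExt L ρ1 g2 := by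
  by_cases h1top : capExt L ρ1 g1 = ⊤
  · rw [h1top, top_add]
    exact le_top
  by_cases h2top : capExt L ρ1 g2 = ⊤
  · rw [h2top, add_top]
    exact le_top
  refine ENNReal.le_of_forall_pos_le_add fun δ hδ _ => ?_
  have hδ2 : ((δ : ℝ≥0∞) / 2) ≠ 0 := by
    simp only [ne_eq, ENNReal.div_eq_zero_iff]
    push_neg
    exact ⟨by exact_mod_cast hδ.ne', by norm_num⟩
  have hlt1 : capExt L ρ1 g1 < capExt L ρ1 g1 + (δ : ℝ≥0∞) / 2 :=
    ENNReal.lt_add_right h1top hδ2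
  have hlt2 : capExt L ρ1 g2 < capExt L ρ1 g2 + (δ : ℝ≥0∞) / 2 :=
    ENNReal.lt_add_right h2top hδ2
  rw [show capExt L ρ1 g1 =
    ⨅ f ∈ {f : Ω → ℝ | LowerSemicontinuous f ∧ ∀ x, |g1 x| ≤ f x}, capLsc L ρ1 f from rfl]
    at hlt1
  simp only [iInf_lt_iff] at hlt1
  obtain ⟨F1, hF1S, hlt1'⟩ := hlt1
  rw [show capExt L ρ1 g2 =
    ⨅ f ∈ {f : Ω → ℝ | LowerSemicontinuous f ∧ ∀ x, |g2 x| ≤ f x}, capLsc L ρ1 f from rfl]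
    at hlt2
  simp only [iInf_lt_iff] at hlt2
  obtain ⟨F2, hF2S, hlt2'⟩ := hlt2
  have hF10 : ∀ x, 0 ≤ F1 x := fun x => (abs_nonneg _).trans (hF1S.2 x)
  have hF20 : ∀ x, 0 ≤ F2 x := fun x => (abs_nonneg _).trans (hF2S.2 x)
  have hsum : capExt L ρ1 (g1 + g2) ≤ capLsc L ρ1 (fun x => F1 x + F2 x) := by
    refine iInf₂_le _ ⟨hF1S.1.add hF2S.1, fun x => ?_⟩
    exact (abs_add_le _ _).trans (add_le_add (hF1S.2 x) (hF2S.2 x))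
  have hsub : capLsc L ρ1 (fun x => F1 x + F2 x) ≤ capLsc L ρ1 F1 + capLsc L ρ1 F2 := by
    refine iSup₂_le fun ψ hψ => ?_
    refine master hL h1 hgen hρ1reg hψ.1 hF1S.1 hF10 hF2S.1 hF20 fun x => ?_
    rw [abs_of_nonneg (hψ.2 x).1]
    exact (hψ.2 x).2
  calc capExt L ρ1 (g1 + g2) ≤ capLsc L ρ1 F1 + capLsc L ρ1 F2 := hsum.trans hsub
    _ ≤ (capExt L ρ1 g1 + (δ : ℝ≥0∞) / 2) + (capExt L ρ1 g2 + (δ : ℝ≥0∞) / 2) :=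
        add_le_add hlt1'.le hlt2'.le
    _ = capExt L ρ1 g1 + capExt L ρ1 g2 + (δ : ℝ≥0∞) := by
        rw [add_add_add_comm, ENNReal.add_halves]

theorem capExt_nsmul (hL : LatHyp Ω L) (h1 : RM1 Ω L ρ1)
    (hgen : t = TopologicalSpace.induced (fun x (f : L) => f.1 x) Pi.topologicalSpace)
    (hρ1reg : ∀ X : ℕ → Ω → ℝ, (∀ n, X n ∈ L) → (∀ x, Antitone fun n => X n x) →
      (∀ x, Tendsto (fun n => X n x) atTop (𝓝 0)) →
      Tendsto (fun n => ρ1 (-(X n))) atTop (𝓝 0))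
    (m : ℕ) (h : Ω → ℝ) :
    capExt L ρ1 ((m : ℝ) • h) ≤ (m : ℝ≥0∞) * capExt L ρ1 h := by
  induction m with
  | zero =>
    have : ((0 : ℕ) : ℝ) • h = (0 : Ω → ℝ) := by
      funext x
      simp
    rw [this, capExt_zero hL h1]
    simp
  | succ k ih =>
    have hsplit : ((k + 1 : ℕ) : ℝ) • h = (k : ℝ) • h + h := by
      funext x
      simp only [Pi.add_apply, Pi.smul_apply, smul_eq_mul]
      push_cast
      ring
    rw [hsplit]
    refine (capExt_triangle hL h1 hgen hρ1reg _ _).trans ?_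
    refine (add_le_add ih le_rfl).trans ?_
    rw [show ((k + 1 : ℕ) : ℝ≥0∞) = (k : ℝ≥0∞) + 1 by push_cast; ring, add_mul, one_mul]

theorem capExt_smul_le (hL : LatHyp Ω L) (h1 : RM1 Ω L ρ1)
    (hgen : t = TopologicalSpace.induced (fun x (f : L) => f.1 x) Pi.topologicalSpace)
    (hρ1reg : ∀ X : ℕ → Ω → ℝ, (∀ n, X n ∈ L) → (∀ x, Antitone fun n => X n x) →
      (∀ x, Tendsto (fun n => X n x) atTop (𝓝 0)) →
      Tendsto (fun n => ρ1 (-(X n))) atTop (𝓝 0))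
    (a : ℝ) (h : Ω → ℝ) :
    capExt L ρ1 (a • h) ≤ ((⌈|a|⌉₊ : ℕ) : ℝ≥0∞) * capExt L ρ1 h := by
  refine le_trans (capExt_mono fun x => ?_) (capExt_nsmul hL h1 hgen hρ1reg ⌈|a|⌉₊ h)
  simp only [Pi.smul_apply, smul_eq_mul, abs_mul]
  rw [abs_of_nonneg (by positivity : (0:ℝ) ≤ (⌈|a|⌉₊ : ℝ))]
  exact mul_le_mul_of_nonneg_right (Nat.le_ceil |a|) (abs_nonneg _)

end MasterSec
section ExtSec

variable [t : TopologicalSpace Ω] [TopologicalSpace.MetrizableSpace Ω]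
  [TopologicalSpace.SeparableSpace Ω] {L : Set (Ω → ℝ)} {ρ1 : (Ω → ℝ) → ℝ}

theorem memE_of_mem (hL : LatHyp Ω L) (h1 : RM1 Ω L ρ1) {f : Ω → ℝ} (hf : f ∈ L) :
    MemE L ρ1 f := by
  refine ⟨fun _ => f, fun _ => hf, ?_⟩
  have : (fun _ : ℕ => capExt L ρ1 (f - f)) = fun _ => (0 : ℝ≥0∞) := by
    funext n
    rw [sub_self, capExt_zero hL h1]
  rw [this]
  exact tendsto_const_nhds

/-- Distance estimate for a `capL`-Lipschitz functional through a common anchor. -/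
theorem distE (hL : LatHyp Ω L) (h1 : RM1 Ω L ρ1)
    (hgen : t = TopologicalSpace.induced (fun x (f : L) => f.1 x) Pi.topologicalSpace)
    (hρ1reg : ∀ X : ℕ → Ω → ℝ, (∀ n, X n ∈ L) → (∀ x, Antitone fun n => X n x) →
      (∀ x, Tendsto (fun n => X n x) atTop (𝓝 0)) →
      Tendsto (fun n => ρ1 (-(X n))) atTop (𝓝 0))
    {τ : (Ω → ℝ) → ℝ}
    (hlip : ∀ f ∈ L, ∀ g ∈ L, |τ f - τ g| ≤ capL ρ1 (f - g))
    {u v : Ω → ℝ} (hu : u ∈ L) (hv : v ∈ L) (X : Ω → ℝ) :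
    ENNReal.ofReal |τ u - τ v| ≤ capExt L ρ1 (X - u) + capExt L ρ1 (X - v) := by
  have h0 : ENNReal.ofReal |τ u - τ v| ≤ capExt L ρ1 (u - v) := by
    rw [capExt_eq_capL hL h1 (hL.sub hu hv)]
    exact ENNReal.ofReal_le_ofReal (hlip u hu v hv)
  refine h0.trans ?_
  have hsplit : u - v = (u - X) + (X - v) := (sub_add_sub_cancel u X v).symm
  rw [hsplit]
  refine (capExt_triangle hL h1 hgen hρ1reg _ _).trans ?_
  rw [show u - X = -(X - u) from (neg_sub X u).symm, capExt_neg]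

/-- Existence of a continuous extension of a `capL`-Lipschitz functional to `L¹(c)`. -/
theorem extension (hL : LatHyp Ω L) (h1 : RM1 Ω L ρ1)
    (hgen : t = TopologicalSpace.induced (fun x (f : L) => f.1 x) Pi.topologicalSpace)
    (hρ1reg : ∀ X : ℕ → Ω → ℝ, (∀ n, X n ∈ L) → (∀ x, Antitone fun n => X n x) →
      (∀ x, Tendsto (fun n => X n x) atTop (𝓝 0)) →
      Tendsto (fun n => ρ1 (-(X n))) atTop (𝓝 0))
    {τ : (Ω → ℝ) → ℝ}
    (hlip : ∀ f ∈ L, ∀ g ∈ L, |τ f - τ g| ≤ capL ρ1 (f - g)) :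
    ∃ τb : (Ω → ℝ) → ℝ, ∀ X, MemE L ρ1 X → ∀ u : ℕ → Ω → ℝ, (∀ n, u n ∈ L) →
      Tendsto (fun n => capExt L ρ1 (X - u n)) atTop (𝓝 0) →
      Tendsto (fun n => τ (u n)) atTop (𝓝 (τb X)) := by
  classical
  set sel : (Ω → ℝ) → ℕ → Ω → ℝ := fun X =>
    if h : MemE L ρ1 X then h.choose else fun _ => 0 with hsel
  have hselspec : ∀ X, MemE L ρ1 X → (∀ n, sel X n ∈ L) ∧
      Tendsto (fun n => capExt L ρ1 (X - sel X n)) atTop (𝓝 0) := by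
    intro X hX
    simp only [hsel, dif_pos hX]
    exact ⟨hX.choose_spec.1, hX.choose_spec.2⟩
  have hconv : ∀ X, MemE L ρ1 X → ∃ l, Tendsto (fun n => τ (sel X n)) atTop (𝓝 l) := by
    intro X hX
    obtain ⟨hXL, hXt⟩ := hselspec X hX
    apply cauchySeq_tendsto_of_complete
    rw [Metric.cauchySeq_iff]
    intro ε hε
    have hev : ∀ᶠ n in atTop, capExt L ρ1 (X - sel X n) < ENNReal.ofReal (ε / 2) :=
      hXt.eventually (gt_mem_nhds (by rw [ENNReal.ofReal_pos]; linarith))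
    rw [eventually_atTop] at hev
    obtain ⟨N, hN⟩ := hev
    refine ⟨N, fun m hm n hn => ?_⟩
    rw [Real.dist_eq]
    have hb := distE hL h1 hgen hρ1reg hlip (hXL m) (hXL n) X
    have hlt : ENNReal.ofReal |τ (sel X m) - τ (sel X n)| < ENNReal.ofReal ε := by
      refine hb.trans_lt ?_
      calc capExt L ρ1 (X - sel X m) + capExt L ρ1 (X - sel X n)
          < ENNReal.ofReal (ε / 2) + ENNReal.ofReal (ε / 2) :=
            ENNReal.add_lt_add (hN m hm) (hN n hn)
        _ = ENNReal.ofReal ε := by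
            rw [← ENNReal.ofReal_add (by linarith) (by linarith)]
            norm_num
    exact (ENNReal.ofReal_lt_ofReal_iff hε).1 hlt
  refine ⟨fun X => if h : MemE L ρ1 X then (hconv X h).choose else 0, ?_⟩
  intro X hX u huL hut
  have hsl : Tendsto (fun n => τ (sel X n)) atTop (𝓝 ((hconv X hX).choose)) :=
    (hconv X hX).choose_spec
  obtain ⟨hXL, hXt⟩ := hselspec X hX
  have hdiff : Tendsto (fun n => τ (u n) - τ (sel X n)) atTop (𝓝 0) := by
    rw [Metric.tendsto_atTop]
    intro ε hε
    have hev1 : ∀ᶠ n in atTop, capExt L ρ1 (X - u n) < ENNReal.ofReal (ε / 2) :=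
      hut.eventually (gt_mem_nhds (by rw [ENNReal.ofReal_pos]; linarith))
    have hev2 : ∀ᶠ n in atTop, capExt L ρ1 (X - sel X n) < ENNReal.ofReal (ε / 2) :=
      hXt.eventually (gt_mem_nhds (by rw [ENNReal.ofReal_pos]; linarith))
    rw [eventually_atTop] at hev1 hev2
    obtain ⟨N1, hN1⟩ := hev1
    obtain ⟨N2, hN2⟩ := hev2
    refine ⟨max N1 N2, fun n hn => ?_⟩
    rw [Real.dist_0_eq_abs]
    have hb := distE hL h1 hgen hρ1reg hlip (huL n) (hXL n) X
    have hlt : ENNReal.ofReal |τ (u n) - τ (sel X n)| < ENNReal.ofReal ε := by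
      refine hb.trans_lt ?_
      calc capExt L ρ1 (X - u n) + capExt L ρ1 (X - sel X n)
          < ENNReal.ofReal (ε / 2) + ENNReal.ofReal (ε / 2) :=
            ENNReal.add_lt_add (hN1 n (le_trans (le_max_left _ _) hn))
              (hN2 n (le_trans (le_max_right _ _) hn))
        _ = ENNReal.ofReal ε := by
            rw [← ENNReal.ofReal_add (by linarith) (by linarith)]
            norm_num
    exact (ENNReal.ofReal_lt_ofReal_iff hε).1 hlt
  have hfinal : Tendsto (fun n => τ (u n)) atTop (𝓝 (0 + (hconv X hX).choose)) := by
    have := hdiff.add hsl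
    have heq : (fun n => τ (u n) - τ (sel X n) + τ (sel X n)) = fun n => τ (u n) := by
      funext n
      ring
    rwa [heq] at this
  rw [zero_add] at hfinal
  simpa only [dif_pos hX] using hfinal

end ExtSec

end Aux

/-- Let `ρ` be a normalized uniformly regular convex risk measure on a
lattice `L ⊆ C_b(Ω)` and `ρ₁` a regular sublinear risk measure majorizing `ρ`. Then
`c(X) = ρ₁(-|X|)` defines a capacity on `L`, both `ρ` and `ρ₁` are `1`-Lipschitz for
the seminorm `c` on `L`, `ρ₁` extends uniquely to a continuous sublinear risk measure
on `L^1(c)` and `ρ` extends uniquely to a continuous normalized convex risk measure on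
`L^1(c)` majorized by the extension of `ρ₁`. -/
theorem stmt19 {Ω : Type} [t : TopologicalSpace Ω] [TopologicalSpace.MetrizableSpace Ω]
    [TopologicalSpace.SeparableSpace Ω]
    (L : Set (Ω → ℝ))
    (hLc : ∀ f ∈ L, Continuous f ∧ ∃ M : ℝ, ∀ x, |f x| ≤ M)
    (hLconst : ∀ a : ℝ, (fun _ => a) ∈ L)
    (hLadd : ∀ f ∈ L, ∀ g ∈ L, f + g ∈ L)
    (hLsmul : ∀ (a : ℝ), ∀ f ∈ L, a • f ∈ L)
    (hLabs : ∀ f ∈ L, (fun x => |f x|) ∈ L)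
    (hgen : t = TopologicalSpace.induced (fun x (f : L) => f.1 x) Pi.topologicalSpace)
    (ρ ρ1 : (Ω → ℝ) → ℝ)
    -- ρ is a normalized convex risk measure on L
    (hρmono : ∀ f ∈ L, ∀ g ∈ L, (∀ x, f x ≤ g x) → ρ g ≤ ρ f)
    (hρconv : ∀ f ∈ L, ∀ g ∈ L, ∀ s : ℝ, 0 ≤ s → s ≤ 1 →
      ρ (s • f + (1 - s) • g) ≤ s * ρ f + (1 - s) * ρ g)
    (hρcash : ∀ f ∈ L, ∀ a : ℝ, ρ (f + fun _ => a) = ρ f - a)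
    (hρ0 : ρ 0 = 0)
    -- ρ is uniformly regular
    (hρbdd : ∀ f ∈ L, BddAbove {r : ℝ | ∃ s : ℝ, 0 < s ∧ r = ρ (s • f) / s})
    (hρureg : ∀ X : ℕ → Ω → ℝ, (∀ n, X n ∈ L) → (∀ x, Antitone fun n => X n x) →
      (∀ x, Tendsto (fun n => X n x) atTop (𝓝 0)) →
      ∀ ε : ℝ, 0 < ε → ∃ N, ∀ n ≥ N, ∀ s : ℝ, 0 < s → ρ (-(s • X n)) / s < ε)
    -- ρ1 is a regular sublinear risk measure majorizing ρ
    (hρ1mono : ∀ f ∈ L, ∀ g ∈ L, (∀ x, f x ≤ g x) → ρ1 g ≤ ρ1 f)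
    (hρ1cash : ∀ f ∈ L, ∀ a : ℝ, ρ1 (f + fun _ => a) = ρ1 f - a)
    (hρ1sub : ∀ f ∈ L, ∀ g ∈ L, ρ1 (f + g) ≤ ρ1 f + ρ1 g)
    (hρ1hom : ∀ s : ℝ, 0 < s → ∀ f ∈ L, ρ1 (s • f) = s * ρ1 f)
    (hρ1reg : ∀ X : ℕ → Ω → ℝ, (∀ n, X n ∈ L) → (∀ x, Antitone fun n => X n x) →
      (∀ x, Tendsto (fun n => X n x) atTop (𝓝 0)) →
      Tendsto (fun n => ρ1 (-(X n))) atTop (𝓝 0))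
    (hmaj : ∀ f ∈ L, ρ f ≤ ρ1 f) :
    -- (A) `c = ρ₁(-|·|)` is a capacity on L
    ((∀ f ∈ L, 0 ≤ capL ρ1 f) ∧
      (∀ f ∈ L, ∀ g ∈ L, capL ρ1 (f + g) ≤ capL ρ1 f + capL ρ1 g) ∧
      (∀ (a : ℝ), ∀ f ∈ L, capL ρ1 (a • f) = |a| * capL ρ1 f) ∧
      (∀ f ∈ L, ∀ g ∈ L, (∀ x, |f x| ≤ |g x|) → capL ρ1 f ≤ capL ρ1 g) ∧
      (∀ f : ℕ → Ω → ℝ, (∀ n, f n ∈ L) → (∀ x, Antitone fun n => f n x) →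
        (∀ x, Tendsto (fun n => f n x) atTop (𝓝 0)) →
        Tendsto (fun n => capL ρ1 (f n)) atTop (𝓝 0))) ∧
    -- (B) ρ and ρ₁ are 1-Lipschitz for the seminorm c on L
    (∀ f ∈ L, ∀ g ∈ L,
      |ρ f - ρ g| ≤ capL ρ1 (f - g) ∧ |ρ1 f - ρ1 g| ≤ capL ρ1 (f - g)) ∧
    -- (C) unique continuous extensions to `L^1(c)`
    (∃ ρb ρ1b : (Ω → ℝ) → ℝ,
      (∀ f ∈ L, ρb f = ρ f ∧ ρ1b f = ρ1 f) ∧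
      -- both extensions are 1-Lipschitz w.r.t. the extended capacity
      (∀ X Y : Ω → ℝ, MemE L ρ1 X → MemE L ρ1 Y →
        ENNReal.ofReal |ρb X - ρb Y| ≤ capExt L ρ1 (X - Y) ∧
        ENNReal.ofReal |ρ1b X - ρ1b Y| ≤ capExt L ρ1 (X - Y)) ∧
      -- ρb is a normalized convex risk measure on `L^1(c)` majorized by ρ1b
      ρb 0 = 0 ∧
      (∀ X Y : Ω → ℝ, MemE L ρ1 X → MemE L ρ1 Y → NonnegE L ρ1 (Y - X) → ρb Y ≤ ρb X) ∧
      (∀ X Y : Ω → ℝ, MemE L ρ1 X → MemE L ρ1 Y → ∀ s : ℝ, 0 ≤ s → s ≤ 1 →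
        ρb (s • X + (1 - s) • Y) ≤ s * ρb X + (1 - s) * ρb Y) ∧
      (∀ X : Ω → ℝ, MemE L ρ1 X → ∀ a : ℝ, ρb (X + fun _ => a) = ρb X - a) ∧
      -- ρ1b is a sublinear risk measure on `L^1(c)`
      (∀ X Y : Ω → ℝ, MemE L ρ1 X → MemE L ρ1 Y → NonnegE L ρ1 (Y - X) → ρ1b Y ≤ ρ1b X) ∧
      (∀ X Y : Ω → ℝ, MemE L ρ1 X → MemE L ρ1 Y → ρ1b (X + Y) ≤ ρ1b X + ρ1b Y) ∧
      (∀ s : ℝ, 0 < s → ∀ X : Ω → ℝ, MemE L ρ1 X → ρ1b (s • X) = s * ρ1b X) ∧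
      (∀ X : Ω → ℝ, MemE L ρ1 X → ∀ a : ℝ, ρ1b (X + fun _ => a) = ρ1b X - a) ∧
      (∀ X : Ω → ℝ, MemE L ρ1 X → ρb X ≤ ρ1b X) ∧
      -- uniqueness of the continuous extensions
      (∀ ρ' : (Ω → ℝ) → ℝ, (∀ f ∈ L, ρ' f = ρ f) →
        (∀ (X : Ω → ℝ), MemE L ρ1 X → ∀ fn : ℕ → Ω → ℝ, (∀ n, MemE L ρ1 (fn n)) →
          Tendsto (fun n => capExt L ρ1 (X - fn n)) atTop (𝓝 0) →
          Tendsto (fun n => ρ' (fn n)) atTop (𝓝 (ρ' X))) →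
        ∀ X : Ω → ℝ, MemE L ρ1 X → ρ' X = ρb X) ∧
      (∀ ρ' : (Ω → ℝ) → ℝ, (∀ f ∈ L, ρ' f = ρ1 f) →
        (∀ (X : Ω → ℝ), MemE L ρ1 X → ∀ fn : ℕ → Ω → ℝ, (∀ n, MemE L ρ1 (fn n)) →
          Tendsto (fun n => capExt L ρ1 (X - fn n)) atTop (𝓝 0) →
          Tendsto (fun n => ρ' (fn n)) atTop (𝓝 (ρ' X))) →
        ∀ X : Ω → ℝ, MemE L ρ1 X → ρ' X = ρ1b X)) := by
  have hL : LatHyp Ω L := ⟨hLc, hLconst, hLadd, hLsmul, hLabs⟩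
  have h1 : RM1 Ω L ρ1 := ⟨hρ1mono, hρ1sub, hρ1hom⟩
  have tri := capExt_triangle hL h1 hgen hρ1reg
  have smulb := capExt_smul_le hL h1 hgen hρ1reg
  have lipρ : ∀ f ∈ L, ∀ g ∈ L, |ρ f - ρ g| ≤ capL ρ1 (f - g) := fun f hf g hg =>
    lip_abs hL h1 (fun u hu v hv => rho_sub_le hL h1 hρconv hmaj hu hv) hf hg
  have lipρ1 : ∀ f ∈ L, ∀ g ∈ L, |ρ1 f - ρ1 g| ≤ capL ρ1 (f - g) := fun f hf g hg =>
    lip_abs hL h1 (fun u hu v hv => rho1_sub_le hL h1 hu hv) hf hg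
  obtain ⟨ρb, hρb⟩ := extension hL h1 hgen hρ1reg lipρ
  obtain ⟨ρ1b, hρ1b⟩ := extension hL h1 hgen hρ1reg lipρ1
  have squeeze0 : ∀ F G : ℕ → ℝ≥0∞, (∀ n, F n ≤ G n) → Tendsto G atTop (𝓝 0) →
      Tendsto F atTop (𝓝 0) := fun F G hle hG =>
    tendsto_of_tendsto_of_tendsto_of_le_of_le tendsto_const_nhds hG (fun n => zero_le) hle
  -- agreement on L
  have hagree : ∀ f ∈ L, ρb f = ρ f ∧ ρ1b f = ρ1 f := by
    intro f hf
    have hMem := memE_of_mem hL h1 hf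
    have hconst : Tendsto (fun _ : ℕ => capExt L ρ1 (f - f)) atTop (𝓝 0) := by
      have : (fun _ : ℕ => capExt L ρ1 (f - f)) = fun _ => (0 : ℝ≥0∞) := by
        funext n
        rw [sub_self, capExt_zero hL h1]
      rw [this]
      exact tendsto_const_nhds
    exact ⟨tendsto_nhds_unique (hρb f hMem (fun _ => f) (fun _ => hf) hconst)
        tendsto_const_nhds,
      tendsto_nhds_unique (hρ1b f hMem (fun _ => f) (fun _ => hf) hconst) tendsto_const_nhds⟩
  -- Lipschitz estimate for the extensions
  have lipItem : ∀ τ τb : (Ω → ℝ) → ℝ,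
      (∀ f ∈ L, ∀ g ∈ L, |τ f - τ g| ≤ capL ρ1 (f - g)) →
      (∀ X, MemE L ρ1 X → ∀ u : ℕ → Ω → ℝ, (∀ n, u n ∈ L) →
        Tendsto (fun n => capExt L ρ1 (X - u n)) atTop (𝓝 0) →
        Tendsto (fun n => τ (u n)) atTop (𝓝 (τb X))) →
      ∀ X Y, MemE L ρ1 X → MemE L ρ1 Y →
        ENNReal.ofReal |τb X - τb Y| ≤ capExt L ρ1 (X - Y) := by
    intro τ τb hlip hext X Y hX hY
    obtain ⟨u, huL, hut⟩ := hX
    obtain ⟨v, hvL, hvt⟩ := hY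
    have hXlim := hext X ⟨u, huL, hut⟩ u huL hut
    have hYlim := hext Y ⟨v, hvL, hvt⟩ v hvL hvt
    by_cases htop : capExt L ρ1 (X - Y) = ⊤
    · rw [htop]
      exact le_top
    set c := (capExt L ρ1 (X - Y)).toReal with hc
    have hcof : ENNReal.ofReal c = capExt L ρ1 (X - Y) := ENNReal.ofReal_toReal htop
    have hc0 : (0:ℝ) ≤ c := ENNReal.toReal_nonneg
    have habs : Tendsto (fun n => |τ (u n) - τ (v n)|) atTop (𝓝 |τb X - τb Y|) :=
      (hXlim.sub hYlim).abs
    have key : ∀ ε : ℝ, 0 < ε → |τb X - τb Y| ≤ c + ε := by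
      intro ε hε
      have hev1 : ∀ᶠ n in atTop, capExt L ρ1 (X - u n) < ENNReal.ofReal (ε / 2) :=
        hut.eventually (gt_mem_nhds (by rw [ENNReal.ofReal_pos]; linarith))
      have hev2 : ∀ᶠ n in atTop, capExt L ρ1 (Y - v n) < ENNReal.ofReal (ε / 2) :=
        hvt.eventually (gt_mem_nhds (by rw [ENNReal.ofReal_pos]; linarith))
      refine le_of_tendsto habs ?_
      filter_upwards [hev1, hev2] with n h1' h2'
      have e0 : ENNReal.ofReal |τ (u n) - τ (v n)| ≤ capExt L ρ1 (u n - v n) := by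
        rw [capExt_eq_capL hL h1 (hL.sub (huL n) (hvL n))]
        exact ENNReal.ofReal_le_ofReal (hlip _ (huL n) _ (hvL n))
      have e1 : capExt L ρ1 (u n - X) = capExt L ρ1 (X - u n) := by
        rw [show u n - X = -(X - u n) from (neg_sub _ _).symm, capExt_neg]
      have hb : ENNReal.ofReal |τ (u n) - τ (v n)| ≤
          capExt L ρ1 (X - u n) + (capExt L ρ1 (X - Y) + capExt L ρ1 (Y - v n)) := by
        refine e0.trans ?_
        have hsplit : u n - v n = (u n - X) + ((X - Y) + (Y - v n)) := by abel
        rw [hsplit]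
        exact (tri _ _).trans (add_le_add e1.le (tri _ _))
      have hb2 : ENNReal.ofReal |τ (u n) - τ (v n)| ≤ ENNReal.ofReal (ε / 2 + (c + ε / 2)) := by
        refine hb.trans ?_
        rw [ENNReal.ofReal_add (by linarith) (by linarith), ENNReal.ofReal_add hc0 (by linarith),
          hcof]
        exact add_le_add h1'.le (add_le_add le_rfl h2'.le)
      have := (ENNReal.ofReal_le_ofReal_iff (by linarith)).1 hb2
      linarith
    have hfin : |τb X - τb Y| ≤ c := le_of_forall_pos_le_add fun ε hε => key ε hε
    exact (ENNReal.ofReal_le_ofReal hfin).trans_eq hcof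
  -- monotonicity for the extensions
  have monoItem : ∀ τ τb : (Ω → ℝ) → ℝ,
      (∀ f ∈ L, ∀ g ∈ L, (∀ x, f x ≤ g x) → τ g ≤ τ f) →
      (∀ X, MemE L ρ1 X → ∀ u : ℕ → Ω → ℝ, (∀ n, u n ∈ L) →
        Tendsto (fun n => capExt L ρ1 (X - u n)) atTop (𝓝 0) →
        Tendsto (fun n => τ (u n)) atTop (𝓝 (τb X))) →
      ∀ X Y, MemE L ρ1 X → MemE L ρ1 Y → NonnegE L ρ1 (Y - X) → τb Y ≤ τb X := by
    intro τ τb hmono hext X Y hX hY hN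
    obtain ⟨u, huL, hut⟩ := hX
    obtain ⟨w, hw, hwt⟩ := hN
    set g : ℕ → Ω → ℝ := fun n => u n + w n with hg
    have hgL : ∀ n, g n ∈ L := fun n => hL.add _ (huL n) _ (hw n).1
    have hgt : Tendsto (fun n => capExt L ρ1 (Y - g n)) atTop (𝓝 0) := by
      refine squeeze0 _ (fun n => capExt L ρ1 (Y - X - w n) + capExt L ρ1 (X - u n))
        (fun n => ?_) (by simpa using hwt.add hut)
      have hsplit : Y - g n = (Y - X - w n) + (X - u n) := by
        simp only [hg]
        abel
      rw [hsplit]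
      exact tri _ _
    have hXlim := hext X ⟨u, huL, hut⟩ u huL hut
    have hYlim := hext Y hY g hgL hgt
    refine le_of_tendsto_of_tendsto' hYlim hXlim fun n => ?_
    refine hmono _ (huL n) _ (hgL n) fun x => ?_
    simp only [hg, Pi.add_apply]
    linarith [((hw n).2 x)]
  -- cash invariance for the extensions
  have cashItem : ∀ τ τb : (Ω → ℝ) → ℝ,
      (∀ f ∈ L, ∀ a : ℝ, τ (f + fun _ => a) = τ f - a) →
      (∀ X, MemE L ρ1 X → ∀ u : ℕ → Ω → ℝ, (∀ n, u n ∈ L) →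
        Tendsto (fun n => capExt L ρ1 (X - u n)) atTop (𝓝 0) →
        Tendsto (fun n => τ (u n)) atTop (𝓝 (τb X))) →
      ∀ X, MemE L ρ1 X → ∀ a : ℝ, τb (X + fun _ => a) = τb X - a := by
    intro τ τb hcash hext X hX a
    obtain ⟨u, huL, hut⟩ := hX
    set g : ℕ → Ω → ℝ := fun n => u n + fun _ => a with hg
    have hgL : ∀ n, g n ∈ L := fun n => hL.add _ (huL n) _ (hLconst a)
    have heq : ∀ n, (X + fun _ => a) - g n = X - u n := by
      intro n
      simp only [hg]
      abel
    have hgt : Tendsto (fun n => capExt L ρ1 ((X + fun _ => a) - g n)) atTop (𝓝 0) := by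
      have : (fun n => capExt L ρ1 ((X + fun _ => a) - g n)) =
          fun n => capExt L ρ1 (X - u n) := funext fun n => by rw [heq n]
      rw [this]
      exact hut
    have lim1 := hext _ ⟨g, hgL, hgt⟩ g hgL hgt
    have lim2 : Tendsto (fun n => τ (g n)) atTop (𝓝 (τb X - a)) := by
      have hval : (fun n => τ (g n)) = fun n => τ (u n) - a :=
        funext fun n => hcash _ (huL n) a
      rw [hval]
      exact (hext X ⟨u, huL, hut⟩ u huL hut).sub_const a
    exact tendsto_nhds_unique lim1 lim2
  refine ⟨⟨fun f hf => capL_nonneg h1 hL hf,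
      fun f hf g hg => capL_subadd h1 hL hf hg,
      fun a f hf => capL_smul h1 hL a hf,
      fun f hf g hg hle => capL_mono h1 hL hf hg hle,
      fun f hfL hanti hlim => capL_tendsto h1 hρ1reg f hfL hanti hlim⟩,
    fun f hf g hg => ⟨lipρ f hf g hg, lipρ1 f hf g hg⟩,
    ρb, ρ1b, hagree,
    fun X Y hX hY => ⟨lipItem ρ ρb lipρ hρb X Y hX hY, lipItem ρ1 ρ1b lipρ1 hρ1b X Y hX hY⟩,
    ?_, monoItem ρ ρb hρmono hρb, ?_, cashItem ρ ρb hρcash hρb,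
    monoItem ρ1 ρ1b hρ1mono hρ1b, ?_, ?_, cashItem ρ1 ρ1b hρ1cash hρ1b, ?_, ?_, ?_⟩
  -- ρb 0 = 0
  · rw [(hagree 0 hL.zero).1]
    exact hρ0
  -- convexity of ρb
  · intro X Y hX hY s hs0 hs1
    obtain ⟨u, huL, hut⟩ := hX
    obtain ⟨v, hvL, hvt⟩ := hY
    set g : ℕ → Ω → ℝ := fun n => s • u n + (1 - s) • v n with hg
    have hgL : ∀ n, g n ∈ L := fun n =>
      hL.add _ (hL.smul s _ (huL n)) _ (hL.smul (1 - s) _ (hvL n))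
    have hsplit : ∀ n, (s • X + (1 - s) • Y) - g n = s • (X - u n) + (1 - s) • (Y - v n) := by
      intro n
      funext x
      simp only [hg, Pi.add_apply, Pi.sub_apply, Pi.smul_apply, smul_eq_mul]
      ring
    have hgt : Tendsto (fun n => capExt L ρ1 ((s • X + (1 - s) • Y) - g n)) atTop (𝓝 0) := by
      refine squeeze0 _
        (fun n => ((⌈|s|⌉₊ : ℕ) : ℝ≥0∞) * capExt L ρ1 (X - u n) +
          ((⌈|1 - s|⌉₊ : ℕ) : ℝ≥0∞) * capExt L ρ1 (Y - v n)) (fun n => ?_) ?_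
      · rw [hsplit n]
        exact (tri _ _).trans (add_le_add (smulb s _) (smulb (1 - s) _))
      · have c1 : Tendsto (fun n => ((⌈|s|⌉₊ : ℕ) : ℝ≥0∞) * capExt L ρ1 (X - u n)) atTop
            (𝓝 (((⌈|s|⌉₊ : ℕ) : ℝ≥0∞) * 0)) :=
          ENNReal.Tendsto.const_mul hut (Or.inr (ENNReal.natCast_ne_top _))
        have c2 : Tendsto (fun n => ((⌈|1 - s|⌉₊ : ℕ) : ℝ≥0∞) * capExt L ρ1 (Y - v n)) atTop
            (𝓝 (((⌈|1 - s|⌉₊ : ℕ) : ℝ≥0∞) * 0)) :=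
          ENNReal.Tendsto.const_mul hvt (Or.inr (ENNReal.natCast_ne_top _))
        simpa using c1.add c2
    have hZlim := hρb _ ⟨g, hgL, hgt⟩ g hgL hgt
    have hXlim := hρb X ⟨u, huL, hut⟩ u huL hut
    have hYlim := hρb Y ⟨v, hvL, hvt⟩ v hvL hvt
    have hrhs : Tendsto (fun n => s * ρ (u n) + (1 - s) * ρ (v n)) atTop
        (𝓝 (s * ρb X + (1 - s) * ρb Y)) := (hXlim.const_mul s).add (hYlim.const_mul (1 - s))
    exact le_of_tendsto_of_tendsto' hZlim hrhs fun n =>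
      hρconv _ (huL n) _ (hvL n) s hs0 hs1
  -- subadditivity of ρ1b
  · intro X Y hX hY
    obtain ⟨u, huL, hut⟩ := hX
    obtain ⟨v, hvL, hvt⟩ := hY
    set g : ℕ → Ω → ℝ := fun n => u n + v n with hg
    have hgL : ∀ n, g n ∈ L := fun n => hL.add _ (huL n) _ (hvL n)
    have hgt : Tendsto (fun n => capExt L ρ1 ((X + Y) - g n)) atTop (𝓝 0) := by
      refine squeeze0 _ (fun n => capExt L ρ1 (X - u n) + capExt L ρ1 (Y - v n))
        (fun n => ?_) (by simpa using hut.add hvt)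
      have hsplit : (X + Y) - g n = (X - u n) + (Y - v n) := by
        simp only [hg]
        abel
      rw [hsplit]
      exact tri _ _
    have hZlim := hρ1b _ ⟨g, hgL, hgt⟩ g hgL hgt
    have hXlim := hρ1b X ⟨u, huL, hut⟩ u huL hut
    have hYlim := hρ1b Y ⟨v, hvL, hvt⟩ v hvL hvt
    exact le_of_tendsto_of_tendsto' hZlim (hXlim.add hYlim) fun n =>
      hρ1sub _ (huL n) _ (hvL n)
  -- positive homogeneity of ρ1b
  · intro s hs X hX
    obtain ⟨u, huL, hut⟩ := hX
    set g : ℕ → Ω → ℝ := fun n => s • u n with hg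
    have hgL : ∀ n, g n ∈ L := fun n => hL.smul s _ (huL n)
    have hsplit : ∀ n, s • X - g n = s • (X - u n) := by
      intro n
      simp only [hg]
      rw [smul_sub]
    have hgt : Tendsto (fun n => capExt L ρ1 (s • X - g n)) atTop (𝓝 0) := by
      refine squeeze0 _ (fun n => ((⌈|s|⌉₊ : ℕ) : ℝ≥0∞) * capExt L ρ1 (X - u n))
        (fun n => ?_) ?_
      · rw [hsplit n]
        exact smulb s _
      · have c1 : Tendsto (fun n => ((⌈|s|⌉₊ : ℕ) : ℝ≥0∞) * capExt L ρ1 (X - u n)) atTop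
            (𝓝 (((⌈|s|⌉₊ : ℕ) : ℝ≥0∞) * 0)) :=
          ENNReal.Tendsto.const_mul hut (Or.inr (ENNReal.natCast_ne_top _))
        simpa using c1
    have lim1 := hρ1b _ ⟨g, hgL, hgt⟩ g hgL hgt
    have lim2 : Tendsto (fun n => ρ1 (g n)) atTop (𝓝 (s * ρ1b X)) := by
      have hval : (fun n => ρ1 (g n)) = fun n => s * ρ1 (u n) :=
        funext fun n => hρ1hom s hs _ (huL n)
      rw [hval]
      exact (hρ1b X ⟨u, huL, hut⟩ u huL hut).const_mul s
    exact tendsto_nhds_unique lim1 lim2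
  -- ρb ≤ ρ1b
  · intro X hX
    obtain ⟨u, huL, hut⟩ := hX
    exact le_of_tendsto_of_tendsto' (hρb X ⟨u, huL, hut⟩ u huL hut)
      (hρ1b X ⟨u, huL, hut⟩ u huL hut) fun n => hmaj _ (huL n)
  -- uniqueness for ρb
  · intro ρ' hag hcont X hX
    obtain ⟨u, huL, hut⟩ := id hX
    have h1' := hcont X hX u (fun n => memE_of_mem hL h1 (huL n)) hut
    have h2' : (fun n => ρ' (u n)) = fun n => ρ (u n) := funext fun n => hag _ (huL n)
    rw [h2'] at h1'
    exact tendsto_nhds_unique h1' (hρb X hX u huL hut)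
  -- uniqueness for ρ1b
  · intro ρ' hag hcont X hX
    obtain ⟨u, huL, hut⟩ := id hX
    have h1' := hcont X hX u (fun n => memE_of_mem hL h1 (huL n)) hut
    have h2' : (fun n => ρ' (u n)) = fun n => ρ1 (u n) := funext fun n => hag _ (huL n)
    rw [h2'] at h1'
    exact tendsto_nhds_unique h1' (hρ1b X hX u huL hut)
end
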